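/- arXiv:1202.1213 — 10 statements merged into one kernel-verified Lean document; each statement's English description precedes it below -/
import Mathlib

section
/- Let α be a finite type and let g be a positive definite complex matrix indexed by α × α. Let X and Y be finite subsets of α with X ∪ Y = α. For a subset S ⊆ α let g_S denote the principal submatrix of g with rows and columns indexed by S, with the convention det(g_∅) = 1. Then det(g_{X∪Y}) · det(g_{X∩Y}) ≤ det(g_X) · det(g_Y). -/
open Matrix
open scoped ComplexOrder

/-- The principal submatrix of `g` with rows and columns indexed by the finite set `S`. -/
def principalSubmatrix {α : Type*} (g : Matrix α α ℂ) (S : Finset α) :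
    Matrix {a // a ∈ S} {a // a ∈ S} ℂ :=
  Matrix.of fun i j => g i.1 j.1

namespace Kotel

variable {n m : Type*} [Fintype n] [Fintype m] [DecidableEq n] [DecidableEq m]

lemma posDef_of_det_ne_zero {M : Matrix n n ℂ} (hM : M.PosSemidef) (h : M.det ≠ 0) :
    M.PosDef := by
  rw [posDef_iff_dotProduct_mulVec]
  refine ⟨hM.1, fun x hx => ?_⟩
  rcases ((posSemidef_iff_dotProduct_mulVec.mp hM).2 x).lt_or_eq with h' | h'
  · exact h'
  · exfalso
    have hz : M *ᵥ x = 0 := (hM.dotProduct_mulVec_zero_iff x).mp h'.symm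
    have hU : IsUnit M.det := isUnit_iff_ne_zero.mpr h
    have : x = 0 := by
      have h1 : M⁻¹ *ᵥ (M *ᵥ x) = x := by
        rw [mulVec_mulVec, nonsing_inv_mul M hU, one_mulVec]
      rw [hz, mulVec_zero] at h1
      exact h1.symm
    exact hx this

lemma posDef_submatrix {M : Matrix n n ℂ} (hM : M.PosDef) {e : m → n}
    (he : Function.Injective e) : (M.submatrix e e).PosDef := by
  rw [posDef_iff_dotProduct_mulVec]
  refine ⟨hM.1.submatrix e, fun x hx => ?_⟩
  set y : n → ℂ := Function.extend e x 0 with hy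
  have hy0 : y ≠ 0 := by
    obtain ⟨i, hi⟩ := Function.ne_iff.mp hx
    intro h
    exact hi (by simpa [hy, he.extend_apply] using congrFun h (e i))
  have hsum : ∀ f : n → ℂ, ∀ φ : ℂ → ℂ, φ 0 = 0 →
      ∑ j, f j * φ (y j) = ∑ j, f (e j) * φ (x j) := by
    intro f φ hφ
    rw [← Finset.sum_subset (Finset.subset_univ (Finset.univ.image e))]
    · rw [Finset.sum_image (fun a _ b _ hab => he hab)]
      simp [hy, he.extend_apply]
    · intro j' _ hj'
      have hne : ¬∃ a, e a = j' := by
        rintro ⟨a, rfl⟩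
        exact hj' (Finset.mem_image_of_mem e (Finset.mem_univ a))
      have : y j' = 0 := by rw [hy, Function.extend_apply' _ _ _ hne]; rfl
      simp [this, hφ]
  have key : star x ⬝ᵥ (M.submatrix e e) *ᵥ x = star y ⬝ᵥ M *ᵥ y := by
    have inner : ∀ i', (M *ᵥ y) i' = ∑ j, M i' (e j) * x j := by
      intro i'
      show ∑ j, M i' j * y j = _
      simpa using hsum (fun j => M i' j) id rfl
    have outer : star y ⬝ᵥ M *ᵥ y = ∑ i, star (x i) * (M *ᵥ y) (e i) := by
      show ∑ i', star (y i') * (M *ᵥ y) i' = _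
      have := hsum (fun i' => (M *ᵥ y) i') (fun t => star t) (by simp)
      calc ∑ i', star (y i') * (M *ᵥ y) i'
          = ∑ i', (M *ᵥ y) i' * star (y i') := by simp [mul_comm]
        _ = ∑ i, (M *ᵥ y) (e i) * star (x i) := this
        _ = ∑ i, star (x i) * (M *ᵥ y) (e i) := by simp [mul_comm]
    rw [outer]
    show ∑ i, star (x i) * ((M.submatrix e e) *ᵥ x) i = _
    refine Finset.sum_congr rfl fun i _ => ?_
    rw [inner]
    rfl
  rw [key]
  exact (posDef_iff_dotProduct_mulVec.mp hM).2 hy0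

lemma one_le_det_one_add {C : Matrix n n ℂ} (hC : C.PosSemidef) :
    (1 : ℂ) ≤ (1 + C).det := by
  set U := (Matrix.IsHermitian.eigenvectorUnitary hC.1 : Matrix n n ℂ) with hUdef
  set d : n → ℂ := RCLike.ofReal ∘ hC.1.eigenvalues with hd
  have hU : U * star U = 1 :=
    Matrix.mem_unitaryGroup_iff.mp (Matrix.IsHermitian.eigenvectorUnitary hC.1).2
  have hspec : C = U * Matrix.diagonal d * star U := hC.1.spectral_theorem
  have key : 1 + C = U * (1 + Matrix.diagonal d) * star U := by
    rw [Matrix.mul_add, Matrix.add_mul, Matrix.mul_one, hU, ← hspec]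
  rw [key, det_mul, det_mul, mul_right_comm, ← det_mul, hU, det_one, one_mul]
  have : (1 : Matrix n n ℂ) + Matrix.diagonal d = Matrix.diagonal (fun i => 1 + d i) := by
    rw [← Matrix.diagonal_one, Matrix.diagonal_add]
  rw [this, det_diagonal]
  have hcast : ∏ i, (1 + d i) = ((∏ i, (1 + hC.1.eigenvalues i) : ℝ) : ℂ) := by
    rw [hd]; push_cast; rfl
  rw [hcast, show (1:ℂ) = ((1:ℝ):ℂ) from (Complex.ofReal_one).symm, Complex.real_le_real]
  have h1 : ∏ i : n, (1:ℝ) ≤ ∏ i, (1 + hC.1.eigenvalues i) := by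
    refine Finset.prod_le_prod (fun i _ => zero_le_one) fun i _ => ?_
    have := hC.eigenvalues_nonneg i
    linarith
  simpa using h1

open scoped MatrixOrder Matrix.Norms.L2Operator in
lemma det_le_det_add {A B : Matrix n n ℂ} (hA : A.PosDef) (hB : B.PosSemidef) :
    A.det ≤ (A + B).det := by
  set T := CFC.sqrt A with hT
  have hTT : T * T = A := CFC.sqrt_mul_sqrt_self A hA.posSemidef.nonneg
  have hdetA : A.det ≠ 0 := hA.det_pos.ne'
  have hdetT : T.det ≠ 0 := by
    intro h
    apply hdetA
    rw [← hTT, det_mul, h, mul_zero]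
  have hTpd : T.PosDef := posDef_of_det_ne_zero (CFC.sqrt_nonneg A).posSemidef hdetT
  have hTu : IsUnit T.det := isUnit_iff_ne_zero.mpr hdetT
  have hTh : T⁻¹ᴴ = T⁻¹ := by rw [conjTranspose_nonsing_inv, hTpd.1.eq]
  have hC : (T⁻¹ * B * T⁻¹).PosSemidef := by
    have := hB.mul_mul_conjTranspose_same T⁻¹
    rwa [hTh] at this
  have key : A + B = T * (1 + T⁻¹ * B * T⁻¹) * T := by
    have h2 : T * (T⁻¹ * B * T⁻¹) * T = B := by
      calc T * (T⁻¹ * B * T⁻¹) * T = (T * T⁻¹) * B * (T⁻¹ * T) := by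
            simp only [Matrix.mul_assoc]
        _ = B := by rw [mul_nonsing_inv _ hTu, nonsing_inv_mul _ hTu, Matrix.one_mul,
            Matrix.mul_one]
    rw [Matrix.mul_add, Matrix.add_mul, Matrix.mul_one, hTT, h2]
  have h1 : (1:ℂ) ≤ (1 + T⁻¹ * B * T⁻¹).det := one_le_det_one_add hC
  calc A.det = A.det * 1 := (mul_one _).symm
    _ ≤ A.det * (1 + T⁻¹ * B * T⁻¹).det :=
        mul_le_mul_of_nonneg_left h1 hA.det_pos.le
    _ = (A + B).det := by rw [key, det_mul, det_mul, ← hTT, det_mul]; ring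

lemma fischer {M : Matrix (m ⊕ n) (m ⊕ n) ℂ} (hM : M.PosDef) :
    M.det ≤ (M.toBlocks₁₁).det * (M.toBlocks₂₂).det := by
  set A := M.toBlocks₁₁ with hA'
  set B := M.toBlocks₁₂ with hB'
  set D := M.toBlocks₂₂ with hD'
  have hC : M.toBlocks₂₁ = Bᴴ := by
    ext i j
    have := congrFun (congrFun hM.1.eq (Sum.inr i)) (Sum.inl j)
    simpa [conjTranspose_apply, toBlocks₂₁, toBlocks₁₂, hB'] using this.symm
  have hMB : M = fromBlocks A B Bᴴ D := by
    rw [← hC, hA', hB', hD', fromBlocks_toBlocks]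
  have hApd : A.PosDef := posDef_submatrix hM Sum.inl_injective
  have hDpd : D.PosDef := posDef_submatrix hM Sum.inr_injective
  letI : Invertible A := invertibleOfIsUnitDet A hApd.det_pos.ne'.isUnit
  have hdet : M.det = A.det * (D - Bᴴ * A⁻¹ * B).det := by
    rw [hMB, det_fromBlocks₁₁, invOf_eq_nonsing_inv]
  have hS : (D - Bᴴ * A⁻¹ * B).PosSemidef :=
    (PosDef.fromBlocks₁₁ B D hApd).mp (hMB ▸ hM.posSemidef)
  have hle : (D - Bᴴ * A⁻¹ * B).det ≤ D.det := by
    have hK : (Bᴴ * A⁻¹ * B).PosSemidef := by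
      have := (hApd.inv.posSemidef).conjTranspose_mul_mul_same B
      simpa using this
    have hSd : (D - Bᴴ * A⁻¹ * B).det ≠ 0 := by
      intro h
      exact hM.det_pos.ne' (by rw [hdet, h, mul_zero])
    have hSpd : (D - Bᴴ * A⁻¹ * B).PosDef := posDef_of_det_ne_zero hS hSd
    have := det_le_det_add hSpd hK
    rwa [sub_add_cancel] at this
  rw [hdet]
  exact mul_le_mul_of_nonneg_left hle hApd.det_pos.le

section FinsetStuff

variable {α : Type*} [Fintype α] [DecidableEq α]

/-- Equiv splitting the subtype of a disjoint union of finsets. -/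
def finUnionEquiv (S T : Finset α) (h : Disjoint S T) :
    {a // a ∈ S ∪ T} ≃ ({a // a ∈ S} ⊕ {a // a ∈ T}) where
  toFun a :=
    if h' : a.1 ∈ S then Sum.inl ⟨a.1, h'⟩
    else Sum.inr ⟨a.1, by
      rcases Finset.mem_union.mp a.2 with h2 | h2
      · exact absurd h2 h'
      · exact h2⟩
  invFun := Sum.elim (fun i => ⟨i.1, Finset.mem_union_left _ i.2⟩)
    (fun j => ⟨j.1, Finset.mem_union_right _ j.2⟩)
  left_inv a := by by_cases h' : a.1 ∈ S <;> simp [h']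
  right_inv x := by
    rcases x with i | j
    · simp [i.2]
    · have : j.1 ∉ S := fun hs => Finset.disjoint_left.mp h hs j.2
      simp [this]

/-- Off-diagonal block of `g`. -/
def blk (g : Matrix α α ℂ) (U V : Finset α) : Matrix {a // a ∈ U} {a // a ∈ V} ℂ :=
  Matrix.of fun i j => g i.1 j.1

/-- Schur complement of the `Z`-block inside `g` restricted to `U`. -/
noncomputable def schur (g : Matrix α α ℂ) (U Z : Finset α) :
    Matrix {a // a ∈ U} {a // a ∈ U} ℂ :=
  blk g U U - blk g U Z * (blk g Z Z)⁻¹ * blk g Z U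

variable {g : Matrix α α ℂ}

lemma blk_posDef (hg : g.PosDef) (U : Finset α) : (blk g U U).PosDef :=
  posDef_submatrix hg Subtype.val_injective

lemma blk_herm (hg : g.PosDef) (U V : Finset α) : blk g V U = (blk g U V)ᴴ := by
  ext i j
  have := congrFun (congrFun hg.1.eq i.1) j.1
  simpa [conjTranspose_apply, blk] using this.symm

lemma submatrix_finUnionEquiv (hg : g.PosDef) {U Z : Finset α} (h : Disjoint U Z) :
    (principalSubmatrix g (U ∪ Z)).submatrix (finUnionEquiv U Z h).symm
      (finUnionEquiv U Z h).symm
      = fromBlocks (blk g U U) (blk g U Z) (blk g Z U) (blk g Z Z) := by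
  ext (i | i) (j | j) <;> rfl

lemma det_union_eq (hg : g.PosDef) {U Z : Finset α} (h : Disjoint U Z) :
    (principalSubmatrix g (U ∪ Z)).det
      = (principalSubmatrix g Z).det * (schur g U Z).det := by
  letI : Invertible (blk g Z Z) :=
    invertibleOfIsUnitDet _ (blk_posDef hg Z).det_pos.ne'.isUnit
  rw [← det_submatrix_equiv_self (finUnionEquiv U Z h).symm,
    submatrix_finUnionEquiv hg h, det_fromBlocks₂₂, invOf_eq_nonsing_inv]
  rfl

lemma schur_posDef (hg : g.PosDef) {U Z : Finset α} (h : Disjoint U Z) :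
    (schur g U Z).PosDef := by
  letI : Invertible (blk g Z Z) :=
    invertibleOfIsUnitDet _ (blk_posDef hg Z).det_pos.ne'.isUnit
  have hfull : (fromBlocks (blk g U U) (blk g U Z) (blk g U Z)ᴴ (blk g Z Z)).PosSemidef := by
    rw [← blk_herm hg U Z, ← submatrix_finUnionEquiv hg h]
    exact (posDef_submatrix (posDef_submatrix hg Subtype.val_injective)
      (Equiv.injective _)).posSemidef
  have hpsd : (blk g U U - blk g U Z * (blk g Z Z)⁻¹ * (blk g U Z)ᴴ).PosSemidef :=
    (PosDef.fromBlocks₂₂ _ _ (blk_posDef hg Z)).mp hfull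
  have hpsd' : (schur g U Z).PosSemidef := by
    rw [schur, blk_herm hg U Z]
    exact hpsd
  refine posDef_of_det_ne_zero hpsd' fun h0 => ?_
  have := det_union_eq hg h
  rw [h0, mul_zero] at this
  exact (posDef_submatrix hg Subtype.val_injective :
    (principalSubmatrix g (U ∪ Z)).PosDef).det_pos.ne' this

lemma fischer_finset (hg : g.PosDef) {P Q Z : Finset α} (hPQ : Disjoint P Q)
    (hPZ : Disjoint P Z) (hQZ : Disjoint Q Z) :
    (schur g (P ∪ Q) Z).det ≤ (schur g P Z).det * (schur g Q Z).det := by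
  set e := finUnionEquiv P Q hPQ with he
  have hpd : ((schur g (P ∪ Q) Z).submatrix e.symm e.symm).PosDef :=
    posDef_submatrix (schur_posDef hg (Finset.disjoint_union_left.mpr ⟨hPZ, hQZ⟩))
      (Equiv.injective _)
  have h11 : ((schur g (P ∪ Q) Z).submatrix e.symm e.symm).toBlocks₁₁ = schur g P Z := by
    ext i j; rfl
  have h22 : ((schur g (P ∪ Q) Z).submatrix e.symm e.symm).toBlocks₂₂ = schur g Q Z := by
    ext i j; rfl
  have := fischer hpd
  rwa [det_submatrix_equiv_self e.symm, h11, h22] at this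

end FinsetStuff

end Kotel


/-- **Gantmacher–Kreĭn / Koteljanskii inequality.**
For a positive definite complex matrix `g` indexed by a finite type and finite subsets
`X`, `Y` covering the index set, one has
`det g_{X ∪ Y} * det g_{X ∩ Y} ≤ det g_X * det g_Y`,
where `g_S` denotes the principal submatrix indexed by `S` (with `det` of the empty matrix
being `1`). -/
theorem det_principalSubmatrix_union_inter_le {α : Type*} [Fintype α] [DecidableEq α]
    (g : Matrix α α ℂ) (hg : g.PosDef) (X Y : Finset α) (hXY : X ∪ Y = Finset.univ) :
    (principalSubmatrix g (X ∪ Y)).det * (principalSubmatrix g (X ∩ Y)).det ≤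
      (principalSubmatrix g X).det * (principalSubmatrix g Y).det := by

  classical
  set Z := X ∩ Y with hZ
  set P := X \ Y with hP
  set Q := Y \ X with hQ
  have hX : P ∪ Z = X := Finset.sdiff_union_inter X Y
  have hY : Q ∪ Z = Y := by
    rw [hQ, hZ, Finset.inter_comm]
    exact Finset.sdiff_union_inter Y X
  have hXY' : (P ∪ Q) ∪ Z = X ∪ Y := by
    ext a
    simp only [Finset.mem_union, Finset.mem_sdiff, Finset.mem_inter, hP, hQ, hZ]
    tauto
  have hPQ : Disjoint P Q := by
    rw [Finset.disjoint_left]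
    intro a ha hb
    rw [hP, Finset.mem_sdiff] at ha
    rw [hQ, Finset.mem_sdiff] at hb
    exact ha.2 hb.1
  have hPZ : Disjoint P Z := by
    rw [Finset.disjoint_left]
    intro a ha hb
    rw [hP, Finset.mem_sdiff] at ha
    rw [hZ, Finset.mem_inter] at hb
    exact ha.2 hb.2
  have hQZ : Disjoint Q Z := by
    rw [Finset.disjoint_left]
    intro a ha hb
    rw [hQ, Finset.mem_sdiff] at ha
    rw [hZ, Finset.mem_inter] at hb
    exact ha.2 hb.1
  have hPQZ : Disjoint (P ∪ Q) Z := Finset.disjoint_union_left.mpr ⟨hPZ, hQZ⟩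
  rw [← hXY', ← hX, ← hY, Kotel.det_union_eq hg hPQZ, Kotel.det_union_eq hg hPZ,
    Kotel.det_union_eq hg hQZ]
  have hfis := Kotel.fischer_finset hg hPQ hPZ hQZ
  have hdZ : (0:ℂ) ≤ (principalSubmatrix g Z).det * (principalSubmatrix g Z).det := by
    have := (Kotel.posDef_submatrix hg Subtype.val_injective :
      (principalSubmatrix g Z).PosDef).det_pos.le
    exact mul_nonneg this this
  calc (principalSubmatrix g Z).det * (Kotel.schur g (P ∪ Q) Z).det *
        (principalSubmatrix g Z).det
      = ((principalSubmatrix g Z).det * (principalSubmatrix g Z).det) *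
        (Kotel.schur g (P ∪ Q) Z).det := by ring
    _ ≤ ((principalSubmatrix g Z).det * (principalSubmatrix g Z).det) *
        ((Kotel.schur g P Z).det * (Kotel.schur g Q Z).det) :=
        mul_le_mul_of_nonneg_left hfis hdZ
    _ = (principalSubmatrix g Z).det * (Kotel.schur g P Z).det *
        ((principalSubmatrix g Z).det * (Kotel.schur g Q Z).det) := by ring
end

section
/- Let Γ be a countable discrete group and let φ be a real-valued function defined on the finite subsets of Γ such that: (1) φ(∅) = 0; (2) φ(Fs) = φ(F) for every nonempty finite F ⊆ Γ and s ∈ Γ; (3) φ(F₁ ∪ F₂) + φ(F₁ ∩ F₂) ≤ φ(F₁) + φ(F₂) for all nonempty finite F₁, F₂ ⊆ Γ. Suppose F, F₁, …, F_m are nonempty finite subsets of Γ and λ₁, …, λ_m ∈ (0,1] are real numbers such that the indicator functions satisfy 1_F = Σ_{j=1}^m λ_j 1_{F_j} pointwise on Γ. Then φ(F) ≤ Σ_{j=1}^m λ_j φ(F_j). -/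
/-- **Convex-combination inequality for strongly subadditive right-invariant set functions.**
Let `Γ` be a countable discrete group and `φ` a real-valued function on finite subsets of `Γ`
with `φ(∅) = 0`, `φ(Fs) = φ(F)` for nonempty finite `F` and `s ∈ Γ`, and
`φ(F₁ ∪ F₂) + φ(F₁ ∩ F₂) ≤ φ(F₁) + φ(F₂)` for nonempty finite `F₁, F₂`.  If
`1_F = Σ_{j} λ_j 1_{F_j}` pointwise with nonempty finite sets `F, F_j` and `λ_j ∈ (0,1]`,
then `φ(F) ≤ Σ_j λ_j φ(F_j)`. -/
theorem phi_le_of_indicator_combination {Γ : Type*} [Group Γ] [Countable Γ] [DecidableEq Γ]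
    (φ : Finset Γ → ℝ)
    (h0 : φ ∅ = 0)
    (hinv : ∀ F : Finset Γ, F.Nonempty → ∀ s : Γ, φ (F.image (fun t => t * s)) = φ F)
    (hsub : ∀ F₁ F₂ : Finset Γ, F₁.Nonempty → F₂.Nonempty →
      φ (F₁ ∪ F₂) + φ (F₁ ∩ F₂) ≤ φ F₁ + φ F₂)
    (m : ℕ) (F : Finset Γ) (hF : F.Nonempty)
    (Fj : Fin m → Finset Γ) (hFj : ∀ j, (Fj j).Nonempty)
    (lam : Fin m → ℝ) (hlam : ∀ j, lam j ∈ Set.Ioc (0 : ℝ) 1)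
    (hind : ∀ s : Γ, (if s ∈ F then (1 : ℝ) else 0) =
      ∑ j : Fin m, lam j * (if s ∈ Fj j then (1 : ℝ) else 0)) :
    φ F ≤ ∑ j : Fin m, lam j * φ (Fj j) := by
  -- Each Fj is contained in F
  have hFjF : ∀ j, Fj j ⊆ F := by
    intro j s hs
    by_contra hsF
    have h := hind s
    rw [if_neg hsF] at h
    have hnn : ∀ i ∈ Finset.univ, (0:ℝ) ≤ lam i * (if s ∈ Fj i then (1:ℝ) else 0) := by
      intro i _
      apply mul_nonneg (hlam i).1.le
      split <;> norm_num
    have h' := (Finset.sum_eq_zero_iff_of_nonneg hnn).mp h.symm j (Finset.mem_univ j)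
    rw [if_pos hs, mul_one] at h'
    exact absurd h' (ne_of_gt (hlam j).1)
  -- diminishing returns
  have dim : ∀ (A B : Finset Γ), A ⊆ B → ∀ x, x ∉ B →
      φ (insert x B) - φ B ≤ φ (insert x A) - φ A := by
    intro A B hAB x hx
    rcases B.eq_empty_or_nonempty with hB | hB
    · subst hB
      rw [Finset.subset_empty.mp hAB]
    rcases A.eq_empty_or_nonempty with hA | hA
    · subst hA
      have h := hsub {x} B (Finset.singleton_nonempty x) hB
      have hint : ({x} : Finset Γ) ∩ B = (∅ : Finset Γ) :=
        Finset.singleton_inter_of_notMem hx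
      have hun : ({x} : Finset Γ) ∪ B = insert x B := (Finset.insert_eq x B).symm
      rw [hint, hun, h0] at h
      have : insert x (∅ : Finset Γ) = {x} := rfl
      rw [this, h0]
      linarith
    · have h := hsub (insert x A) B (Finset.insert_nonempty x A) hB
      have hu : insert x A ∪ B = insert x B := by
        ext t
        simp only [Finset.mem_union, Finset.mem_insert]
        constructor
        · rintro (⟨h1 | h1⟩ | h1)
          · exact Or.inl h1
          · exact Or.inr (hAB h1)
          · exact Or.inr h1
        · rintro (h1 | h1)
          · exact Or.inl (Or.inl h1)
          · exact Or.inr h1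
      have hi : insert x A ∩ B = A := by
        ext t
        simp only [Finset.mem_inter, Finset.mem_insert]
        constructor
        · rintro ⟨h1 | h1, h2⟩
          · exact absurd (h1 ▸ h2) hx
          · exact h1
        · intro h1
          exact ⟨Or.inr h1, hAB h1⟩
      rw [hu, hi] at h
      linarith
  -- main induction
  have key : ∀ E : Finset Γ, E ⊆ F → φ E ≤ ∑ j : Fin m, lam j * φ (Fj j ∩ E) := by
    intro E
    induction E using Finset.induction_on with
    | empty =>
      intro _
      simp [h0]
    | @insert x E hxE ih =>
      intro hEF
      have hEF' : E ⊆ F := (Finset.subset_insert x E).trans hEF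
      have hxF : x ∈ F := hEF (Finset.mem_insert_self x E)
      have h1 : (1:ℝ) = ∑ j : Fin m, lam j * (if x ∈ Fj j then (1:ℝ) else 0) := by
        have := hind x
        rwa [if_pos hxF] at this
      have htermwise : ∀ j ∈ Finset.univ,
          (lam j * (if x ∈ Fj j then (1:ℝ) else 0)) * (φ (insert x E) - φ E) ≤
          lam j * (φ (Fj j ∩ insert x E) - φ (Fj j ∩ E)) := by
        intro j _
        by_cases hxj : x ∈ Fj j
        · rw [if_pos hxj, mul_one]
          have hset : Fj j ∩ insert x E = insert x (Fj j ∩ E) := by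
            ext t
            simp only [Finset.mem_inter, Finset.mem_insert]
            constructor
            · rintro ⟨h1, h2 | h2⟩
              · exact Or.inl h2
              · exact Or.inr ⟨h1, h2⟩
            · rintro (h1 | ⟨h1, h2⟩)
              · exact ⟨h1 ▸ hxj, Or.inl h1⟩
              · exact ⟨h1, Or.inr h2⟩
          rw [hset]
          exact mul_le_mul_of_nonneg_left
            (dim (Fj j ∩ E) E Finset.inter_subset_right x hxE) (hlam j).1.le
        · rw [if_neg hxj, mul_zero, zero_mul]
          have hset : Fj j ∩ insert x E = Fj j ∩ E := by
            ext t
            simp only [Finset.mem_inter, Finset.mem_insert]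
            constructor
            · rintro ⟨h1, h2 | h2⟩
              · exact absurd (h2 ▸ h1) hxj
              · exact ⟨h1, h2⟩
            · rintro ⟨h1, h2⟩
              exact ⟨h1, Or.inr h2⟩
          rw [hset]
          simp
      have hsum_le : ∑ j : Fin m,
          (lam j * (if x ∈ Fj j then (1:ℝ) else 0)) * (φ (insert x E) - φ E) ≤
          ∑ j : Fin m, lam j * (φ (Fj j ∩ insert x E) - φ (Fj j ∩ E)) :=
        Finset.sum_le_sum htermwise
      have hrw : φ (insert x E) - φ E = ∑ j : Fin m,
          (lam j * (if x ∈ Fj j then (1:ℝ) else 0)) * (φ (insert x E) - φ E) := by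
        rw [← Finset.sum_mul, ← h1, one_mul]
      calc φ (insert x E) = φ E + (φ (insert x E) - φ E) := by ring
        _ ≤ (∑ j : Fin m, lam j * φ (Fj j ∩ E)) +
            ∑ j : Fin m, lam j * (φ (Fj j ∩ insert x E) - φ (Fj j ∩ E)) :=
          add_le_add (ih hEF') (hrw ▸ hsum_le)
        _ = ∑ j : Fin m, lam j * φ (Fj j ∩ insert x E) := by
          rw [← Finset.sum_add_distrib]
          exact Finset.sum_congr rfl (fun j _ => by ring)
  have := key F le_rfl
  have heq : ∀ j : Fin m, Fj j ∩ F = Fj j := fun j => Finset.inter_eq_left.mpr (hFjF j)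
  calc φ F ≤ ∑ j : Fin m, lam j * φ (Fj j ∩ F) := this
    _ = ∑ j : Fin m, lam j * φ (Fj j) :=
      Finset.sum_congr rfl (fun j _ => by rw [heq j])
end

section
/- Let Γ be a countable discrete amenable group and let φ be a real-valued function defined on the finite subsets of Γ such that: (1) φ(∅) = 0; (2) φ(Fs) = φ(F) for every nonempty finite F ⊆ Γ and s ∈ Γ; (3) φ(F₁ ∪ F₂) + φ(F₁ ∩ F₂) ≤ φ(F₁) + φ(F₂) for all nonempty finite F₁, F₂ ⊆ Γ. Then φ(F)/|F| converges to inf_{F} φ(F)/|F| (the infimum taken over all nonempty finite subsets F of Γ) as the nonempty finite subset F becomes more and more left invariant; concretely, for every real number c with c > φ(F₀)/|F₀| for some nonempty finite F₀ ⊆ Γ, there exist a nonempty finite K ⊆ Γ and δ > 0 such that φ(F)/|F| < c for every F ∈ B(K,δ). -/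
set_option maxHeartbeats 1000000


/-- `F` belongs to `B(K, δ)`: `F` is a nonempty finite subset of `Γ` such that
`|{t ∈ F : Kt ⊆ F}| ≥ (1 − δ)|F|`. -/
def memApproxInv {Γ : Type*} [Group Γ] [DecidableEq Γ] (K : Finset Γ) (δ : ℝ)
    (F : Finset Γ) : Prop :=
  F.Nonempty ∧ (1 - δ) * (F.card : ℝ) ≤ ((F.filter fun t => ∀ k ∈ K, k * t ∈ F).card : ℝ)

section Aux

variable {Γ : Type*} [DecidableEq Γ]

/-- Submodularity extended to possibly empty sets. -/
lemma submod_all (φ : Finset Γ → ℝ) (h0 : φ ∅ = 0)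
    (hsub : ∀ F₁ F₂ : Finset Γ, F₁.Nonempty → F₂.Nonempty →
      φ (F₁ ∪ F₂) + φ (F₁ ∩ F₂) ≤ φ F₁ + φ F₂) :
    ∀ F₁ F₂ : Finset Γ, φ (F₁ ∪ F₂) + φ (F₁ ∩ F₂) ≤ φ F₁ + φ F₂ := by
  intro F₁ F₂
  rcases F₁.eq_empty_or_nonempty with rfl | h1
  · simp [h0]
  rcases F₂.eq_empty_or_nonempty with rfl | h2
  · simp [h0]
  · exact hsub _ _ h1 h2

/-- Diminishing returns form of submodularity. -/
lemma dimret (φ : Finset Γ → ℝ)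
    (hsub : ∀ F₁ F₂ : Finset Γ, φ (F₁ ∪ F₂) + φ (F₁ ∩ F₂) ≤ φ F₁ + φ F₂)
    {S T : Finset Γ} (hST : S ⊆ T) {x : Γ} (hx : x ∉ T) :
    φ (insert x T) + φ S ≤ φ (insert x S) + φ T := by
  have h := hsub (insert x S) T
  have h1 : insert x S ∪ T = insert x T := by
    rw [Finset.insert_union, Finset.union_eq_right.mpr hST]
  have h2 : insert x S ∩ T = S := by
    ext y
    simp only [Finset.mem_inter, Finset.mem_insert]
    constructor
    · rintro ⟨hy | hy, hyT⟩
      · exact absurd (hy ▸ hyT) hx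
      · exact hy
    · intro hy; exact ⟨Or.inr hy, hST hy⟩
  rw [h1, h2] at h
  linarith

/-- Shearer-type inequality for exact weighted covers of a finite set by subsets,
for submodular `φ` with `φ ∅ = 0`. -/
lemma shearer {ι : Type*} (φ : Finset Γ → ℝ) (h0 : φ ∅ = 0)
    (hsub : ∀ F₁ F₂ : Finset Γ, φ (F₁ ∪ F₂) + φ (F₁ ∩ F₂) ≤ φ F₁ + φ F₂)
    (J : Finset ι) (n : ι → ℕ) (k : ℕ) :
    ∀ F : Finset Γ, ∀ A : ι → Finset Γ, (∀ j ∈ J, A j ⊆ F) →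
      (∀ x ∈ F, ∑ j ∈ J, (if x ∈ A j then n j else 0) = k) →
      (k : ℝ) * φ F ≤ ∑ j ∈ J, (n j : ℝ) * φ (A j) := by
  intro F
  induction F using Finset.strongInduction with
  | _ F ih =>
    intro A hA hcov
    rcases F.eq_empty_or_nonempty with rfl | ⟨x, hx⟩
    · rw [h0, mul_zero]
      have : ∑ j ∈ J, (n j : ℝ) * φ (A j) = 0 :=
        Finset.sum_eq_zero fun j hj => by
          rw [Finset.subset_empty.mp (hA j hj), h0, mul_zero]
      rw [this]
    · have hss : F.erase x ⊂ F := Finset.erase_ssubset hx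
      have hA'sub : ∀ j ∈ J, (A j).erase x ⊆ F.erase x :=
        fun j hj => Finset.erase_subset_erase x (hA j hj)
      have hcov' : ∀ y ∈ F.erase x,
          ∑ j ∈ J, (if y ∈ (A j).erase x then n j else 0) = k := by
        intro y hy
        have hyx : y ≠ x := Finset.ne_of_mem_erase hy
        rw [← hcov y (Finset.mem_of_mem_erase hy)]
        refine Finset.sum_congr rfl fun j hj => ?_
        simp [Finset.mem_erase, hyx]
      have h1 := ih (F.erase x) hss (fun j => (A j).erase x) hA'sub hcov'
      have hPk : ∑ j ∈ J.filter (fun j => x ∈ A j), n j = k := by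
        rw [Finset.sum_filter]; exact hcov x hx
      have hPk' : ∑ j ∈ J.filter (fun j => x ∈ A j), (n j : ℝ) = (k : ℝ) := by
        rw [← Nat.cast_sum, hPk]
      have h2 : (k : ℝ) * (φ F - φ (F.erase x)) ≤
          ∑ j ∈ J.filter (fun j => x ∈ A j),
            (n j : ℝ) * (φ (A j) - φ ((A j).erase x)) := by
        have hterm : ∀ j ∈ J.filter (fun j => x ∈ A j),
            (n j : ℝ) * (φ F - φ (F.erase x)) ≤
              (n j : ℝ) * (φ (A j) - φ ((A j).erase x)) := by
          intro j hj
          have hjJ : j ∈ J := (Finset.mem_filter.mp hj).1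
          have hxj : x ∈ A j := (Finset.mem_filter.mp hj).2
          have hd := dimret φ hsub (hA'sub j hjJ) (Finset.notMem_erase x F)
          rw [Finset.insert_erase hxj, Finset.insert_erase hx] at hd
          have : φ F - φ (F.erase x) ≤ φ (A j) - φ ((A j).erase x) := by linarith
          exact mul_le_mul_of_nonneg_left this (Nat.cast_nonneg _)
        calc (k : ℝ) * (φ F - φ (F.erase x))
            = ∑ j ∈ J.filter (fun j => x ∈ A j),
                (n j : ℝ) * (φ F - φ (F.erase x)) := by
              rw [← Finset.sum_mul, hPk']
          _ ≤ _ := Finset.sum_le_sum hterm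
      have h3 : ∑ j ∈ J.filter (fun j => x ∈ A j),
          (n j : ℝ) * (φ (A j) - φ ((A j).erase x)) =
          ∑ j ∈ J, (n j : ℝ) * φ (A j) -
            ∑ j ∈ J, (n j : ℝ) * φ ((A j).erase x) := by
        rw [Finset.sum_filter_of_ne]
        · rw [← Finset.sum_sub_distrib]
          exact Finset.sum_congr rfl fun j _ => by ring
        · intro j _ hne
          by_contra hxj
          exact hne (by rw [Finset.erase_eq_of_notMem hxj]; ring)
      linarith

end Aux

/-- **Ornstein–Weiss type convergence for strongly subadditive invariant set functions.**
Let `Γ` be a countable discrete amenable group and `φ` a real-valued function on finite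
subsets of `Γ` satisfying `φ(∅) = 0`, right invariance, and strong subadditivity.  Then
`φ(F)/|F|` converges to `inf_F φ(F)/|F|` as `F` becomes more and more left invariant:
for every real `c` exceeding `φ(F₀)/|F₀|` for some nonempty finite `F₀`, there are a
nonempty finite `K ⊆ Γ` and `δ > 0` such that `φ(F)/|F| < c` for every `F ∈ B(K,δ)`. -/
theorem phi_div_card_tendsto_inf {Γ : Type*} [Group Γ] [Countable Γ] [DecidableEq Γ]
    (hamen : ∀ K : Finset Γ, K.Nonempty → ∀ δ : ℝ, 0 < δ → ∃ F : Finset Γ, memApproxInv K δ F)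
    (φ : Finset Γ → ℝ)
    (h0 : φ ∅ = 0)
    (hinv : ∀ F : Finset Γ, F.Nonempty → ∀ s : Γ, φ (F.image (fun t => t * s)) = φ F)
    (hsub : ∀ F₁ F₂ : Finset Γ, F₁.Nonempty → F₂.Nonempty →
      φ (F₁ ∪ F₂) + φ (F₁ ∩ F₂) ≤ φ F₁ + φ F₂) :
    ∀ c : ℝ, (∃ F₀ : Finset Γ, F₀.Nonempty ∧ φ F₀ / (F₀.card : ℝ) < c) →
      ∃ (K : Finset Γ) (δ : ℝ), K.Nonempty ∧ 0 < δ ∧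
        ∀ F : Finset Γ, memApproxInv K δ F → φ F / (F.card : ℝ) < c := by
  rintro c ⟨F₀, hF₀, hc⟩
  classical
  have hsub' := submod_all φ h0 hsub
  set b := φ {(1 : Γ)} with hb
  set k := F₀.card with hk
  have hkpos : 0 < k := Finset.card_pos.mpr hF₀
  have hkR : (0 : ℝ) < (k : ℝ) := by exact_mod_cast hkpos
  set a := φ F₀ / (k : ℝ) with ha
  have hca : a < c := hc
  have hden : (0 : ℝ) < |b - a| + 1 := by positivity
  set δ := (c - a) / (|b - a| + 1) with hδ
  have hδpos : 0 < δ := div_pos (by linarith) hden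
  have hδeq : δ * (|b - a| + 1) = c - a := by
    rw [hδ]; field_simp
  refine ⟨F₀, δ, hF₀, hδpos, ?_⟩
  rintro F ⟨hFne, hFcard⟩
  set A := F.filter (fun t => ∀ g ∈ F₀, g * t ∈ F) with hAdef
  have hAsubF : A ⊆ F := Finset.filter_subset _ _
  -- translates of F₀ centered at points of A lie in F
  have hTsub : ∀ t ∈ A, (F₀.image (fun g => g * t)) ⊆ F := by
    intro t ht y hy
    obtain ⟨g, hg, rfl⟩ := Finset.mem_image.mp hy
    exact (Finset.mem_filter.mp ht).2 g hg
  -- multiplicity function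
  set m : Γ → ℕ := fun x => (A.filter (fun t => x ∈ F₀.image (fun g => g * t))).card with hm
  have hmk : ∀ x : Γ, m x ≤ k := by
    intro x
    rw [hm, hk]
    apply Finset.card_le_card_of_injOn (fun t => x * t⁻¹)
    · intro t ht
      obtain ⟨g, hg, hgt⟩ := Finset.mem_image.mp ((Finset.mem_filter.mp ht).2)
      have : x * t⁻¹ = g := by rw [← hgt]; group
      show x * t⁻¹ ∈ (F₀ : Set Γ); rw [this]; exact hg
    · intro t₁ _ t₂ _ h
      simpa using inv_injective (mul_left_cancel h)
  -- the cover: translates (weight 1) and singletons (weight k - m x)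
  have hcovers : ∀ j ∈ A.disjSum F,
      (Sum.elim (fun t => F₀.image (fun g => g * t)) (fun y => ({y} : Finset Γ)) j) ⊆ F := by
    intro j hj
    rcases j with t | y
    · exact hTsub t (Finset.inl_mem_disjSum.mp hj)
    · simpa using Finset.inr_mem_disjSum.mp hj
  have hcov : ∀ x ∈ F, ∑ j ∈ A.disjSum F,
      (if x ∈ Sum.elim (fun t => F₀.image (fun g => g * t)) (fun y => ({y} : Finset Γ)) j
        then Sum.elim (fun _ => 1) (fun y => k - m y) j else 0) = k := by
    intro x hxF
    rw [Finset.sum_disjSum]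
    have e1 : ∑ t ∈ A,
        (if x ∈ Sum.elim (fun t => F₀.image (fun g => g * t)) (fun y => ({y} : Finset Γ))
            (Sum.inl t : Γ ⊕ Γ) then Sum.elim (fun _ => 1) (fun y => k - m y) (Sum.inl t : Γ ⊕ Γ) else 0)
        = m x := by
      simp only [Sum.elim_inl]
      simp only [hm]
      exact (Finset.card_filter _ _).symm
    have e2 : ∑ y ∈ F,
        (if x ∈ Sum.elim (fun t => F₀.image (fun g => g * t)) (fun y => ({y} : Finset Γ))
            (Sum.inr y : Γ ⊕ Γ) then Sum.elim (fun _ => 1) (fun y => k - m y) (Sum.inr y : Γ ⊕ Γ) else 0)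
        = k - m x := by
      simp only [Sum.elim_inr, Finset.mem_singleton]
      rw [Finset.sum_ite_eq]
      simp [hxF]
    rw [e1, e2]
    exact Nat.add_sub_cancel' (hmk x)
  have main := shearer φ h0 hsub' (A.disjSum F)
      (Sum.elim (fun _ => 1) (fun y => k - m y)) k F
      (Sum.elim (fun t => F₀.image (fun g => g * t)) (fun y => ({y} : Finset Γ)))
      hcovers hcov
  -- evaluate the right-hand side
  have hTcard : ∀ t : Γ, (F₀.image (fun g => g * t)).card = k := by
    intro t
    rw [hk]
    exact Finset.card_image_of_injective _ (mul_left_injective t)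
  have hTval : ∀ t : Γ, φ (F₀.image (fun g => g * t)) = φ F₀ := fun t => hinv F₀ hF₀ t
  have hsing : ∀ x : Γ, φ ({x} : Finset Γ) = b := by
    intro x
    have h := hinv {(1 : Γ)} ⟨1, Finset.mem_singleton_self 1⟩ x
    rw [hb]
    simpa using h
  have hsumm : ∑ x ∈ F, m x = A.card * k := by
    have step : ∀ x : Γ, m x = ∑ t ∈ A, (if x ∈ F₀.image (fun g => g * t) then 1 else 0) := by
      intro x; simp only [hm]; exact Finset.card_filter _ _
    calc ∑ x ∈ F, m x
        = ∑ x ∈ F, ∑ t ∈ A, (if x ∈ F₀.image (fun g => g * t) then 1 else 0) :=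
          Finset.sum_congr rfl fun x _ => step x
      _ = ∑ t ∈ A, ∑ x ∈ F, (if x ∈ F₀.image (fun g => g * t) then 1 else 0) :=
          Finset.sum_comm
      _ = ∑ t ∈ A, (F.filter (fun x => x ∈ F₀.image (fun g => g * t))).card := by
          exact Finset.sum_congr rfl fun t _ => (Finset.card_filter _ _).symm
      _ = ∑ t ∈ A, k := by
          refine Finset.sum_congr rfl fun t ht => ?_
          rw [Finset.filter_mem_eq_inter, Finset.inter_eq_right.mpr (hTsub t ht), hTcard t]
      _ = A.card * k := by rw [Finset.sum_const, smul_eq_mul]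
  have hrhs : ∑ j ∈ A.disjSum F, ((Sum.elim (fun _ => 1) (fun y => k - m y) j : ℕ) : ℝ) *
      φ (Sum.elim (fun t => F₀.image (fun g => g * t)) (fun y => ({y} : Finset Γ)) j)
      = (A.card : ℝ) * φ F₀ + ((k : ℝ) * F.card - (k : ℝ) * A.card) * b := by
    rw [Finset.sum_disjSum]
    have e1 : ∑ t ∈ A, ((Sum.elim (fun _ => (1:ℕ)) (fun y => k - m y) (Sum.inl t : Γ ⊕ Γ) : ℕ) : ℝ) *
        φ (Sum.elim (fun t => F₀.image (fun g => g * t)) (fun y => ({y} : Finset Γ)) (Sum.inl t : Γ ⊕ Γ))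
        = (A.card : ℝ) * φ F₀ := by
      simp only [Sum.elim_inl, Nat.cast_one, one_mul]
      rw [Finset.sum_congr rfl fun t _ => hTval t, Finset.sum_const, nsmul_eq_mul]
    have e2 : ∑ y ∈ F, ((Sum.elim (fun _ => (1:ℕ)) (fun y => k - m y) (Sum.inr y : Γ ⊕ Γ) : ℕ) : ℝ) *
        φ (Sum.elim (fun t => F₀.image (fun g => g * t)) (fun y => ({y} : Finset Γ)) (Sum.inr y : Γ ⊕ Γ))
        = ((k : ℝ) * F.card - (k : ℝ) * A.card) * b := by
      simp only [Sum.elim_inr]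
      have : ∀ y ∈ F, ((k - m y : ℕ) : ℝ) * φ ({y} : Finset Γ)
          = ((k : ℝ) - (m y : ℝ)) * b := by
        intro y _
        rw [hsing y, Nat.cast_sub (hmk y)]
      rw [Finset.sum_congr rfl this]
      have : ∑ y ∈ F, ((k : ℝ) - (m y : ℝ)) = (k : ℝ) * F.card - (k : ℝ) * A.card := by
        rw [Finset.sum_sub_distrib, Finset.sum_const, nsmul_eq_mul, ← Nat.cast_sum, hsumm]
        push_cast
        ring
      rw [← Finset.sum_mul, this]
    rw [e1, e2]
  rw [hrhs] at main
  -- final arithmetic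
  have hFpos : (0 : ℝ) < (F.card : ℝ) := by
    exact_mod_cast Finset.card_pos.mpr hFne
  have hAF : (A.card : ℝ) ≤ (F.card : ℝ) := by
    exact_mod_cast Finset.card_le_card hAsubF
  have hAlow : (1 - δ) * (F.card : ℝ) ≤ (A.card : ℝ) := hFcard
  have hφF₀ : φ F₀ = a * (k : ℝ) := by
    rw [ha]; field_simp
  rw [hφF₀] at main
  -- divide by k
  have hdiv : φ F ≤ (A.card : ℝ) * a + ((F.card : ℝ) - (A.card : ℝ)) * b := by
    have heq : (A.card : ℝ) * (a * (k : ℝ)) + ((k : ℝ) * F.card - (k : ℝ) * A.card) * b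
        = (k : ℝ) * ((A.card : ℝ) * a + ((F.card : ℝ) - (A.card : ℝ)) * b) := by ring
    have h' : (k : ℝ) * φ F ≤ (k : ℝ) * ((A.card : ℝ) * a + ((F.card : ℝ) - (A.card : ℝ)) * b) :=
      main.trans (le_of_eq heq)
    exact le_of_mul_le_mul_left h' hkR
  rw [div_lt_iff₀ hFpos]
  have hid : (A.card : ℝ) * a + ((F.card : ℝ) - (A.card : ℝ)) * b
      = (F.card : ℝ) * a + ((F.card : ℝ) - (A.card : ℝ)) * (b - a) := by ring
  have hs0 : (0 : ℝ) ≤ (F.card : ℝ) - (A.card : ℝ) := by linarith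
  have hsδ : (F.card : ℝ) - (A.card : ℝ) ≤ δ * (F.card : ℝ) := by linarith [hAlow]
  have habs1 : ((F.card : ℝ) - (A.card : ℝ)) * (b - a)
      ≤ ((F.card : ℝ) - (A.card : ℝ)) * |b - a| :=
    mul_le_mul_of_nonneg_left (le_abs_self _) hs0
  have habs2 : ((F.card : ℝ) - (A.card : ℝ)) * |b - a| ≤ δ * (F.card : ℝ) * |b - a| :=
    mul_le_mul_of_nonneg_right hsδ (abs_nonneg _)
  have habs3 : δ * (F.card : ℝ) * |b - a| = (c - a) * (F.card : ℝ) - δ * (F.card : ℝ) := by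
    have h' : δ * |b - a| = (c - a) - δ := by linarith [hδeq]
    linear_combination (F.card : ℝ) * h'
  have hδF : 0 < δ * (F.card : ℝ) := mul_pos hδpos hFpos
  linarith [hdiv, hid, habs1, habs2, habs3, hδF]
end

section
/- Let Γ be a countable discrete amenable group, let d ≥ 1, and let k : Γ → M_d(ℂ) be a function such that for every nonempty finite subset F ⊆ Γ the complex matrix h_F, indexed by F × {1,…,d} and defined by h_F((s,i),(t,j)) = (k(st⁻¹))_{i,j}, is positive definite. Then det(h_F)^{1/|F|} converges to inf_F det(h_F)^{1/|F|} (the infimum over all nonempty finite F ⊆ Γ) as F becomes more and more left invariant; concretely, this infimum is a nonnegative real number c, det(h_F)^{1/|F|} ≥ c for all nonempty finite F, and for every ε > 0 there exist a nonempty finite K ⊆ Γ and δ > 0 such that det(h_F)^{1/|F|} < c + ε for every F ∈ B(K,δ). -/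
set_option maxHeartbeats 1000000


open scoped ComplexOrder
/-- The compression `h_F` of the matrix-valued kernel `k : Γ → M_d(ℂ)`:
the complex matrix indexed by `F × {1,…,d}` with entries
`h_F((s,i),(t,j)) = (k (s t⁻¹))_{i,j}`. -/
def kernelCompression {Γ : Type*} [Group Γ] {d : ℕ} (k : Γ → Matrix (Fin d) (Fin d) ℂ)
    (F : Finset Γ) :
    Matrix ({a // a ∈ F} × Fin d) ({a // a ∈ F} × Fin d) ℂ :=
  Matrix.of fun p q => k (p.1.1 * q.1.1⁻¹) p.2 q.2



namespace SzegoAux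

open Matrix Finset

variable {ι : Type*} [Fintype ι] [DecidableEq ι]

lemma posDef_submatrix {κ : Type*} [Fintype κ] {M : Matrix ι ι ℂ} (hM : M.PosDef)
    (e : κ → ι) (he : Function.Injective e) : (M.submatrix e e).PosDef := by
  classical
  refine Matrix.PosDef.of_dotProduct_mulVec_pos (hM.1.submatrix e) fun x hx => ?_
  set y : ι → ℂ := fun i => ∑ j, if e j = i then x j else 0 with hy
  have hyj : ∀ j, y (e j) = x j := by
    intro j
    simp only [hy]
    rw [Finset.sum_eq_single j]
    · simp
    · intro b _ hb
      simp [he.ne hb]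
    · simp
  have hMy : ∀ i, (M *ᵥ y) i = ∑ j, M i (e j) * x j := by
    intro i
    simp only [Matrix.mulVec, dotProduct, hy, Finset.mul_sum]
    rw [Finset.sum_comm]
    refine Finset.sum_congr rfl fun j _ => ?_
    rw [Finset.sum_eq_single (e j)]
    · simp
    · intro b _ hb; simp [Ne.symm hb]
    · simp
  have key : dotProduct (star x) ((M.submatrix e e) *ᵥ x) = dotProduct (star y) (M *ᵥ y) := by
    simp only [dotProduct, Pi.star_apply]
    have step : ∀ i, star (y i) * (M *ᵥ y) i
        = ∑ j, (if e j = i then star (x j) * (M *ᵥ y) i else 0) := by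
      intro i
      rw [hy]
      simp only [star_sum, Finset.sum_mul]
      refine Finset.sum_congr rfl fun j _ => ?_
      split <;> simp
    rw [Finset.sum_congr rfl fun i _ => step i, Finset.sum_comm]
    refine Finset.sum_congr rfl fun j _ => ?_
    rw [Finset.sum_eq_single (e j)]
    · rw [if_pos rfl, hMy (e j)]
      simp [Matrix.mulVec, dotProduct]
    · intro b _ hb; simp [Ne.symm hb]
    · simp
  rw [key]
  refine hM.dotProduct_mulVec_pos (x := y) fun hy0 => hx ?_
  funext j
  have := congrFun hy0 (e j)
  simpa [hyj j] using this

lemma det_real_pos {M : Matrix ι ι ℂ} (hM : M.PosDef) :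
    0 < M.det.re ∧ M.det = (M.det.re : ℂ) := by
  have h := hM.det_pos
  rw [Complex.lt_def] at h
  obtain ⟨h1, h2⟩ := h
  refine ⟨by simpa using h1, ?_⟩
  apply Complex.ext <;> simp [← h2]

end SzegoAux

namespace Part2
open Matrix Finset SzegoAux

variable {ι : Type*} [Fintype ι] [DecidableEq ι]

/-- principal submatrix on a finset -/
noncomputable def pmin (M : Matrix ι ι ℂ) (s : Finset ι) :
    Matrix {i // i ∈ s} {i // i ∈ s} ℂ :=
  M.submatrix Subtype.val Subtype.val

noncomputable def pdet (M : Matrix ι ι ℂ) (s : Finset ι) : ℝ := (pmin M s).det.re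

lemma pmin_posDef {M : Matrix ι ι ℂ} (hM : M.PosDef) (s : Finset ι) : (pmin M s).PosDef :=
  posDef_submatrix hM _ Subtype.val_injective

lemma pdet_pos {M : Matrix ι ι ℂ} (hM : M.PosDef) (s : Finset ι) : 0 < pdet M s :=
  (det_real_pos (pmin_posDef hM s)).1

lemma pmin_det_eq {M : Matrix ι ι ℂ} (hM : M.PosDef) (s : Finset ι) :
    (pmin M s).det = ((pdet M s : ℝ) : ℂ) :=
  (det_real_pos (pmin_posDef hM s)).2

variable (M : Matrix ι ι ℂ) (s : Finset ι) {r : ℕ} (v : Fin r → ι)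

/-- the Schur complement of the block of `s` inside `s ∪ v(Fin r)` -/
noncomputable def schurR : Matrix (Fin r) (Fin r) ℂ :=
  (Matrix.of fun t t' => M (v t) (v t')) -
    (Matrix.of fun t (i : {i // i ∈ s}) => M (v t) i.1) * (pmin M s)⁻¹ *
      (Matrix.of fun (i : {i // i ∈ s}) t => M i.1 (v t))

lemma det_pmin_union (hM : M.PosDef) (hv : Function.Injective v)
    (hd : ∀ t, v t ∉ s) :
    (pmin M (s ∪ Finset.image v Finset.univ)).det =
      (pmin M s).det * (schurR M s v).det := by
  classical
  set T := s ∪ Finset.image v Finset.univ with hT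
  set g : ({i // i ∈ s} ⊕ Fin r) → {i // i ∈ T} :=
    (fun p => Sum.rec (fun i => ⟨i.1, by simp [hT, i.2]⟩) (fun t => ⟨v t, by simp [hT]⟩) p) with hg
  have hbij : Function.Bijective g := by
    constructor
    · rintro (i | t) (j | t') h
      · simp only [hg, Subtype.mk.injEq] at h
        exact congrArg Sum.inl (Subtype.ext h)
      · simp only [hg, Subtype.mk.injEq] at h
        exact absurd (h ▸ i.2) (hd t')
      · simp only [hg, Subtype.mk.injEq] at h
        exact absurd (h ▸ j.2) (hd t)
      · simp only [hg, Subtype.mk.injEq] at h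
        exact congrArg Sum.inr (hv h)
    · rintro ⟨i, hi⟩
      rw [hT, Finset.mem_union] at hi
      rcases hi with hi | hi
      · exact ⟨Sum.inl ⟨i, hi⟩, rfl⟩
      · obtain ⟨t, _, ht⟩ := Finset.mem_image.mp hi
        exact ⟨Sum.inr t, Subtype.ext ht⟩
  set e := Equiv.ofBijective g hbij with he
  have hA : Invertible (pmin M s) := by
    apply Matrix.invertibleOfIsUnitDet
    rw [pmin_det_eq hM]
    exact isUnit_iff_ne_zero.mpr (by exact_mod_cast (pdet_pos hM s).ne')
  have hsub : (pmin M T).submatrix e e =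
      Matrix.fromBlocks (pmin M s)
        (Matrix.of fun (i : {i // i ∈ s}) t => M i.1 (v t))
        (Matrix.of fun t (i : {i // i ∈ s}) => M (v t) i.1)
        (Matrix.of fun t t' => M (v t) (v t')) := by
    ext p q
    rcases p with i | t <;> rcases q with j | t' <;> rfl
  calc (pmin M T).det = ((pmin M T).submatrix e e).det :=
        (Matrix.det_submatrix_equiv_self e _).symm
    _ = _ := by
        rw [hsub, Matrix.det_fromBlocks₁₁, Matrix.invOf_eq_nonsing_inv]
        rfl

end Part2

namespace Part3
open Matrix Finset SzegoAux Part2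

variable {ι : Type*} [Fintype ι] [DecidableEq ι]

lemma insert_eq_union_one (s : Finset ι) (x : ι) :
    insert x s = s ∪ Finset.image ![x] Finset.univ := by
  ext i
  simp [Fin.exists_fin_one, eq_comm, or_comm]

lemma insert_eq_union_two (s : Finset ι) (x y : ι) :
    insert x (insert y s) = s ∪ Finset.image ![x, y] Finset.univ := by
  ext i
  simp [Fin.exists_fin_two, eq_comm, or_comm]
  tauto

lemma core {M : Matrix ι ι ℂ} (hM : M.PosDef) {s : Finset ι} {x y : ι}
    (hx : x ∉ s) (hy : y ∉ s) (hxy : x ≠ y) :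
    pdet M (insert x (insert y s)) * pdet M s ≤
      pdet M (insert x s) * pdet M (insert y s) := by
  classical
  set A := pmin M s with hA
  have hAinv : ((pmin M s)⁻¹).IsHermitian := (hM.1.submatrix _).inv
  set E := schurR M s ![x, y] with hE
  -- determinant identities
  have h2 : ((pdet M (insert x (insert y s)) : ℝ) : ℂ) =
      ((pdet M s : ℝ) : ℂ) * E.det := by
    rw [← pmin_det_eq hM, ← pmin_det_eq hM, insert_eq_union_two]
    apply det_pmin_union M s _ hM
    · intro a b hab
      fin_cases a <;> fin_cases b <;> simp_all
    · intro t; fin_cases t <;> simpa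
  have h1x : ((pdet M (insert x s) : ℝ) : ℂ) =
      ((pdet M s : ℝ) : ℂ) * E 0 0 := by
    rw [← pmin_det_eq hM, ← pmin_det_eq hM, insert_eq_union_one,
      det_pmin_union M s ![x] hM (fun a b hab => Subsingleton.elim a b)
        (fun t => by simpa), Matrix.det_fin_one]
    congr 1
  have h1y : ((pdet M (insert y s) : ℝ) : ℂ) =
      ((pdet M s : ℝ) : ℂ) * E 1 1 := by
    rw [← pmin_det_eq hM, ← pmin_det_eq hM, insert_eq_union_one,
      det_pmin_union M s ![y] hM (fun a b hab => Subsingleton.elim a b)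
        (fun t => by simpa), Matrix.det_fin_one]
    congr 1
  -- hermitian off-diagonal
  have hherm : E 1 0 = starRingEnd ℂ (E 0 1) := by
    show E 1 0 = star (E 0 1)
    simp only [hE, schurR, Matrix.sub_apply, Matrix.of_apply, Matrix.mul_apply,
      Matrix.cons_val_zero, Matrix.cons_val_one, Matrix.head_cons, star_sub, star_sum,
      star_mul', Finset.sum_mul]
    congr 1
    · exact (hM.1.apply y x).symm
    · rw [Finset.sum_comm]
      refine Finset.sum_congr rfl fun i _ => Finset.sum_congr rfl fun j _ => ?_
      rw [hM.1.apply (j:ι) x, hAinv.apply i j, hM.1.apply y (i:ι)]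
      ring
  have hdet2 : E.det = E 0 0 * E 1 1 - E 0 1 * E 1 0 := Matrix.det_fin_two E
  -- put it together
  set a := pdet M s with ha
  have ha0 : (0:ℝ) < a := pdet_pos hM s
  have key : ((pdet M (insert x (insert y s)) * a : ℝ) : ℂ) =
      ((pdet M (insert x s) * pdet M (insert y s) : ℝ) : ℂ) -
        ((a^2 * Complex.normSq (E 0 1) : ℝ) : ℂ) := by
    push_cast
    rw [h2, h1x, h1y, hdet2, hherm]
    rw [mul_comm (E 0 1) _, ← Complex.normSq_eq_conj_mul_self]
    push_cast
    ring
  have keyR : pdet M (insert x (insert y s)) * a =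
      pdet M (insert x s) * pdet M (insert y s) - a^2 * Complex.normSq (E 0 1) := by
    have := key
    rw [← Complex.ofReal_sub] at this
    exact_mod_cast this
  rw [keyR]
  have : (0:ℝ) ≤ a^2 * Complex.normSq (E 0 1) :=
    mul_nonneg (sq_nonneg a) (Complex.normSq_nonneg _)
  linarith

end Part3

namespace Part4
open Matrix Finset SzegoAux Part2 Part3

variable {ι : Type*} [Fintype ι] [DecidableEq ι]

lemma mono_step {M : Matrix ι ι ℂ} (hM : M.PosDef) :
    ∀ (n : ℕ) {A B : Finset ι} {x : ι}, (B \ A).card = n → A ⊆ B → x ∉ B →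
    pdet M (insert x B) * pdet M A ≤ pdet M (insert x A) * pdet M B := by
  intro n
  induction n with
  | zero =>
    intro A B x hn hAB hx
    have : B = A := Finset.Subset.antisymm
      (fun b hb => by
        by_contra hbA
        exact absurd (Finset.card_eq_zero.mp hn ▸ Finset.mem_sdiff.mpr ⟨hb, hbA⟩)
          (Finset.notMem_empty b)) hAB
    subst this
    exact le_rfl
  | succ n ih =>
    intro A B x hn hAB hx
    have hBA : (B \ A).Nonempty := Finset.card_pos.mp (hn ▸ n.succ_pos)
    obtain ⟨y, hy⟩ := hBA
    rw [Finset.mem_sdiff] at hy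
    set B' := B.erase y with hB'
    have hyB : y ∈ B := hy.1
    have hAB' : A ⊆ B' := fun a ha => Finset.mem_erase.mpr ⟨fun h => hy.2 (h ▸ ha), hAB ha⟩
    have hxB' : x ∉ B' := fun h => hx (Finset.erase_subset _ _ h)
    have hyB' : y ∉ B' := Finset.notMem_erase _ _
    have hxy : x ≠ y := fun h => hx (h ▸ hyB)
    have hcard : (B' \ A).card = n := by
      have : B' \ A = (B \ A).erase y := by
        rw [hB', Finset.erase_sdiff_comm]
      rw [this, Finset.card_erase_of_mem (Finset.mem_sdiff.mpr hy), hn]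
      rfl
    have hins : insert y B' = B := Finset.insert_erase hyB
    have hcore := core hM hxB' hyB' hxy
    rw [hins] at hcore
    have hih := ih hcard hAB' hxB'
    have h1 := pdet_pos hM (insert x B)
    have h2 := pdet_pos hM A
    have h3 := pdet_pos hM B
    have h4 := pdet_pos hM B'
    have h5 := pdet_pos hM (insert x A)
    have h6 := pdet_pos hM (insert x B')
    nlinarith [mul_le_mul_of_nonneg_right hcore h2.le,
      mul_le_mul_of_nonneg_right hih h3.le]

end Part4

namespace Part5
open Matrix Finset SzegoAux Part2 Part3 Part4

variable {Γ : Type*} [Group Γ] [DecidableEq Γ] {d : ℕ} (k : Γ → Matrix (Fin d) (Fin d) ℂ)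

noncomputable def D (A : Finset Γ) : ℝ := (kernelCompression k A).det.re

lemma D_empty : D k (∅ : Finset Γ) = 1 := by
  haveI : IsEmpty {a // a ∈ (∅ : Finset Γ)} := ⟨fun a => absurd a.2 (Finset.notMem_empty _)⟩
  rw [D, Matrix.det_isEmpty]
  simp

variable {k}

lemma D_pos (hpos : ∀ F : Finset Γ, F.Nonempty → (kernelCompression k F).PosDef)
    (A : Finset Γ) : 0 < D k A := by
  rcases A.eq_empty_or_nonempty with rfl | hA
  · rw [D_empty]; norm_num
  · exact (det_real_pos (hpos A hA)).1

lemma D_det_eq (hpos : ∀ F : Finset Γ, F.Nonempty → (kernelCompression k F).PosDef)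
    (A : Finset Γ) : (kernelCompression k A).det = ((D k A : ℝ) : ℂ) := by
  rcases A.eq_empty_or_nonempty with rfl | hA
  · haveI : IsEmpty {a // a ∈ (∅ : Finset Γ)} := ⟨fun a => absurd a.2 (Finset.notMem_empty _)⟩
    rw [D_empty, Matrix.det_isEmpty]
    simp
  · exact (det_real_pos (hpos A hA)).2

/-- right-translation invariance -/
lemma D_translate (A : Finset Γ) (g : Γ) : D k (A.image (· * g)) = D k A := by
  let e : {a // a ∈ A} ≃ {a // a ∈ A.image (· * g)} :=
    { toFun := fun a => ⟨a.1 * g, Finset.mem_image_of_mem _ a.2⟩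
      invFun := fun b => ⟨b.1 * g⁻¹, by
        obtain ⟨a, ha, hag⟩ := Finset.mem_image.mp b.2
        simpa [← hag] using ha⟩
      left_inv := fun a => by simp
      right_inv := fun b => by simp }
  have heq : kernelCompression k A =
      (kernelCompression k (A.image (· * g))).submatrix
        (Equiv.prodCongr e (Equiv.refl (Fin d))) (Equiv.prodCongr e (Equiv.refl (Fin d))) := by
    ext p q
    show k (↑p.1 * (↑q.1)⁻¹) p.2 q.2 = k ((↑p.1 * g) * ((↑q.1 * g))⁻¹) p.2 q.2
    congr 1
    group
  rw [D, D, heq, Matrix.det_submatrix_equiv_self]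

section Ambient

/-- the subset of ambient indices corresponding to a subset `A ⊆ F` -/
def SF (d : ℕ) (F : Finset Γ) (A : Finset Γ) : Finset ({a // a ∈ F} × Fin d) :=
  Finset.univ.filter (fun p => p.1.1 ∈ A)

lemma pdet_SF (hpos : ∀ F : Finset Γ, F.Nonempty → (kernelCompression k F).PosDef)
    {F A : Finset Γ} (hAF : A ⊆ F) :
    pdet (kernelCompression k F) (SF d F A) = D k A := by
  classical
  let e : {p : {a // a ∈ F} × Fin d // p ∈ SF d F A} ≃ ({a // a ∈ A} × Fin d) :=
    { toFun := fun q => (⟨q.1.1.1, (Finset.mem_filter.mp q.2).2⟩, q.1.2)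
      invFun := fun p => ⟨(⟨p.1.1, hAF p.1.2⟩, p.2), by
        simp [SF, p.1.2]⟩
      left_inv := fun q => by
        ext <;> rfl
      right_inv := fun p => by
        ext <;> rfl }
  have heq : kernelCompression k A =
      (pmin (kernelCompression k F) (SF d F A)).submatrix e.symm e.symm := by
    ext p q
    rfl
  rw [pdet, D, heq, Matrix.det_submatrix_equiv_self]

end Ambient

/-- block monotonicity of conditional determinants -/
lemma D_mono (hpos : ∀ F : Finset Γ, F.Nonempty → (kernelCompression k F).PosDef)
    {A B : Finset Γ} (hAB : A ⊆ B) {γ : Γ} (hγ : γ ∉ B) :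
    D k (insert γ B) * D k A ≤ D k (insert γ A) * D k B := by
  classical
  set F := insert γ B with hF
  have hMF : (kernelCompression k F).PosDef := hpos F (Finset.insert_nonempty _ _)
  set M := kernelCompression k F with hM
  have hγF : γ ∈ F := Finset.mem_insert_self _ _
  have hBF : B ⊆ F := Finset.subset_insert _ _
  have hAF : A ⊆ F := hAB.trans hBF
  -- the growing index sets
  set G : ℕ → Finset ({a // a ∈ F} × Fin d) :=
    fun j => Finset.univ.filter (fun p => p.1.1 = γ ∧ (p.2 : ℕ) < j) with hG
  have claim : ∀ j, j ≤ d →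
      pdet M (SF d F B ∪ G j) * pdet M (SF d F A) ≤
        pdet M (SF d F A ∪ G j) * pdet M (SF d F B) := by
    intro j
    induction j with
    | zero =>
      intro _
      have : G 0 = ∅ := by
        apply Finset.filter_false_of_mem
        intro p _
        simp
      rw [this, Finset.union_empty, Finset.union_empty]
      exact le_of_eq (mul_comm _ _)
    | succ j ih =>
      intro hj
      have hjd : j < d := hj
      have hihj := ih hjd.le
      set x : {a // a ∈ F} × Fin d := (⟨γ, hγF⟩, ⟨j, hjd⟩) with hx
      have hGsucc : ∀ (C : Finset Γ), γ ∉ C →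
          SF d F C ∪ G (j + 1) = insert x (SF d F C ∪ G j) := by
        intro C hC
        ext p
        simp only [SF, hG, Finset.mem_union, Finset.mem_filter, Finset.mem_univ, true_and,
          Finset.mem_insert, hx]
        constructor
        · rintro (hp | ⟨hp1, hp2⟩)
          · exact Or.inr (Or.inl hp)
          · rcases Nat.lt_succ_iff_lt_or_eq.mp hp2 with h | h
            · exact Or.inr (Or.inr ⟨hp1, h⟩)
            · left
              have : p.1 = (⟨γ, hγF⟩ : {a // a ∈ F}) := Subtype.ext hp1
              rw [Prod.ext_iff]
              exact ⟨this, Fin.ext h⟩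
        · rintro (hp | hp | ⟨hp1, hp2⟩)
          · rw [hp]
            exact Or.inr ⟨rfl, Nat.lt_succ_self j⟩
          · exact Or.inl hp
          · exact Or.inr ⟨hp1, hp2.trans (Nat.lt_succ_self j)⟩
      have hxnot : ∀ (C : Finset Γ), γ ∉ C → x ∉ SF d F C ∪ G j := by
        intro C hC hmem
        rcases Finset.mem_union.mp hmem with h | h
        · exact hC ((Finset.mem_filter.mp h).2)
        · have := (Finset.mem_filter.mp h).2.2
          simp [hx] at this
      have hsub : SF d F A ∪ G j ⊆ SF d F B ∪ G j := by
        apply Finset.union_subset_union_left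
        intro p hp
        rw [SF, Finset.mem_filter] at hp ⊢
        exact ⟨hp.1, hAB hp.2⟩
      have hstep := mono_step hMF _ rfl hsub (hxnot B hγ)
      rw [← hGsucc B hγ, ← hGsucc A (fun h => hγ (hAB h))] at hstep
      have p1 := pdet_pos hMF (SF d F A ∪ G j)
      have p2 := pdet_pos hMF (SF d F B ∪ G j)
      have p3 := pdet_pos hMF (SF d F A)
      have p4 := pdet_pos hMF (SF d F B)
      have p5 := pdet_pos hMF (SF d F B ∪ G (j+1))
      have p6 := pdet_pos hMF (SF d F A ∪ G (j+1))
      nlinarith [mul_le_mul_of_nonneg_right hstep p3.le,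
        mul_le_mul_of_nonneg_right hihj p5.le,
        mul_le_mul_of_nonneg_right hihj p2.le,
        mul_le_mul_of_nonneg_right hstep p4.le]
    
  have hGd : ∀ (C : Finset Γ), C ⊆ F → SF d F C ∪ G d = SF d F (insert γ C) := by
    intro C hC
    ext p
    simp only [SF, hG, Finset.mem_union, Finset.mem_filter, Finset.mem_univ, true_and,
      Finset.mem_insert]
    constructor
    · rintro (hp | ⟨hp, _⟩)
      · exact Or.inr hp
      · exact Or.inl hp
    · rintro (hp | hp)
      · exact Or.inr ⟨hp, p.2.isLt⟩
      · exact Or.inl hp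
  have hfin := claim d le_rfl
  rw [hGd B hBF, hGd A hAF] at hfin
  rw [pdet_SF hpos hAF, pdet_SF hpos hBF, pdet_SF hpos (Finset.insert_subset_iff.mpr ⟨hγF, hAF⟩),
    pdet_SF hpos (Finset.insert_subset_iff.mpr ⟨hγF, hBF⟩)] at hfin
  exact hfin

end Part5

namespace Part6
open Matrix Finset SzegoAux Part2 Part3 Part4 Part5

variable {Γ : Type*} [Group Γ] [DecidableEq Γ] {d : ℕ} {k : Γ → Matrix (Fin d) (Fin d) ℂ}
variable (hpos : ∀ F : Finset Γ, F.Nonempty → (kernelCompression k F).PosDef)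
variable {inj : Γ → ℕ} (hinj : Function.Injective inj)

noncomputable def f (k : Γ → Matrix (Fin d) (Fin d) ℂ) (A : Finset Γ) : ℝ :=
  Real.log (D k A)

variable (k inj) in
noncomputable def lows (A : Finset Γ) (x : Γ) : Finset Γ :=
  A.filter (fun y => inj y < inj x)

variable (k inj) in
noncomputable def lowe (A : Finset Γ) (x : Γ) : Finset Γ :=
  A.filter (fun y => inj y ≤ inj x)

lemma f_empty : f k (∅ : Finset Γ) = 0 := by rw [f, D_empty, Real.log_one]

lemma f_translate (A : Finset Γ) (g : Γ) : f k (A.image (· * g)) = f k A := by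
  rw [f, f, D_translate]

include hpos hinj in
/-- chain rule -/
lemma chain : ∀ (n : ℕ) (A : Finset Γ), A.card = n →
    f k A = ∑ x ∈ A, (f k (lowe inj A x) - f k (lows inj A x)) := by
  intro n
  induction n with
  | zero =>
    intro A hA
    rw [Finset.card_eq_zero.mp hA]
    simp [f_empty]
  | succ n ih =>
    intro A hA
    have hAne : A.Nonempty := Finset.card_pos.mp (hA ▸ n.succ_pos)
    obtain ⟨x, hxA, hmax⟩ := A.exists_max_image (fun y => inj y) hAne
    have h1 : lowe inj A x = A := Finset.filter_true_of_mem (fun y hy => hmax y hy)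
    have h2 : lows inj A x = A.erase x := by
      ext y
      simp only [lows, Finset.mem_filter, Finset.mem_erase]
      constructor
      · rintro ⟨hy, hlt⟩
        exact ⟨fun h => absurd (h ▸ hlt) (lt_irrefl _), hy⟩
      · rintro ⟨hne, hy⟩
        exact ⟨hy, lt_of_le_of_ne (hmax y hy) (fun h => hne (hinj h))⟩
    rw [← Finset.add_sum_erase _ _ hxA]
    have hrest : ∀ y ∈ A.erase x,
        (f k (lowe inj A y) - f k (lows inj A y)) =
          (f k (lowe inj (A.erase x) y) - f k (lows inj (A.erase x) y)) := by
      intro y hy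
      rw [Finset.mem_erase] at hy
      have hle : lowe inj A y = lowe inj (A.erase x) y := by
        ext z
        simp only [lowe, Finset.mem_filter, Finset.mem_erase]
        constructor
        · rintro ⟨hz, hlz⟩
          refine ⟨⟨fun h => ?_, hz⟩, hlz⟩
          subst h
          exact hy.1 (hinj (le_antisymm (hmax y hy.2) hlz))
        · rintro ⟨⟨_, hz⟩, hlz⟩
          exact ⟨hz, hlz⟩
      have hls : lows inj A y = lows inj (A.erase x) y := by
        ext z
        simp only [lows, Finset.mem_filter, Finset.mem_erase]
        constructor
        · rintro ⟨hz, hlz⟩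
          refine ⟨⟨fun h => ?_, hz⟩, hlz⟩
          subst h
          exact absurd (hlz.trans_le (hmax y hy.2)) (lt_irrefl _)
        · rintro ⟨⟨_, hz⟩, hlz⟩
          exact ⟨hz, hlz⟩
      rw [hle, hls]
    rw [Finset.sum_congr rfl hrest, ← ih (A.erase x) (by rw [Finset.card_erase_of_mem hxA, hA]; rfl)]
    rw [h1, h2]
    ring

include hpos hinj in
/-- diminishing increments -/
lemma inc_mono {A F : Finset Γ} (hAF : A ⊆ F) {x : Γ} (hxA : x ∈ A) :
    f k (lowe inj F x) - f k (lows inj F x) ≤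
      f k (lowe inj A x) - f k (lows inj A x) := by
  have hsub : lows inj A x ⊆ lows inj F x :=
    Finset.filter_subset_filter _ hAF
  have hxnot : x ∉ lows inj F x := by
    simp [lows]
  have hlA : lowe inj A x = insert x (lows inj A x) := by
    ext y
    simp only [lowe, lows, Finset.mem_filter, Finset.mem_insert]
    constructor
    · rintro ⟨hy, hle⟩
      rcases lt_or_eq_of_le hle with h | h
      · exact Or.inr ⟨hy, h⟩
      · exact Or.inl (hinj h)
    · rintro (rfl | ⟨hy, hlt⟩)
      · exact ⟨hxA, le_rfl⟩
      · exact ⟨hy, hlt.le⟩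
  have hlF : lowe inj F x = insert x (lows inj F x) := by
    ext y
    simp only [lowe, lows, Finset.mem_filter, Finset.mem_insert]
    constructor
    · rintro ⟨hy, hle⟩
      rcases lt_or_eq_of_le hle with h | h
      · exact Or.inr ⟨hy, h⟩
      · exact Or.inl (hinj h)
    · rintro (rfl | ⟨hy, hlt⟩)
      · exact ⟨hAF hxA, le_rfl⟩
      · exact ⟨hy, hlt.le⟩
  have hmono := D_mono hpos hsub hxnot
  rw [← hlA, ← hlF] at hmono
  have p1 := D_pos hpos (lowe inj F x)
  have p2 := D_pos hpos (lows inj A x)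
  have p3 := D_pos hpos (lowe inj A x)
  have p4 := D_pos hpos (lows inj F x)
  have := Real.log_le_log (by positivity) hmono
  rw [Real.log_mul p1.ne' p2.ne', Real.log_mul p3.ne' p4.ne'] at this
  simp only [f]
  linarith

include hpos hinj in
/-- subadditivity along increments: `∑_{x ∈ A} inc_F(x) ≤ f(A)` for `A ⊆ F`. -/
lemma claim1 {A F : Finset Γ} (hAF : A ⊆ F) :
    ∑ x ∈ A, (f k (lowe inj F x) - f k (lows inj F x)) ≤ f k A := by
  rw [chain hpos hinj A.card A rfl]
  exact Finset.sum_le_sum (fun x hx => inc_mono hpos hinj hAF hx)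

end Part6

namespace Part7
open Matrix Finset SzegoAux Part2 Part3 Part4 Part5 Part6

variable {Γ : Type*} [Group Γ] [DecidableEq Γ] {d : ℕ} {k : Γ → Matrix (Fin d) (Fin d) ℂ}
variable (hpos : ∀ F : Finset Γ, F.Nonempty → (kernelCompression k F).PosDef)
variable {inj : Γ → ℕ} (hinj : Function.Injective inj)

include hpos hinj in
lemma shearer (W' F : Finset Γ) :
    (W'.card : ℝ) * f k F ≤ (∑ t ∈ F, f k ((W'.image (· * t)) ∩ F))
      + ∑ x ∈ F, ((W'.card : ℝ) - ((F.filter (fun t => x ∈ W'.image (· * t))).card : ℝ))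
          * f k {x} := by
  classical
  set inc : Γ → ℝ := fun x => f k (lowe inj F x) - f k (lows inj F x) with hinc
  set cov : Γ → ℕ := fun x => (F.filter (fun t => x ∈ W'.image (· * t))).card with hcov
  have h0 : f k F = ∑ x ∈ F, inc x := chain hpos hinj F.card F rfl
  have hcov_le : ∀ x, (cov x) ≤ W'.card := by
    intro x
    apply Finset.card_le_card_of_injOn (fun t => x * t⁻¹)
    · intro t ht
      rw [Finset.mem_coe, Finset.mem_filter] at ht
      obtain ⟨w, hw, hwt⟩ := Finset.mem_image.mp ht.2
      have : x * t⁻¹ = w := by rw [← hwt]; group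
      show x * t⁻¹ ∈ (W' : Set Γ); rwa [this]
    · intro t _ t' _ h
      simpa using mul_left_cancel h
  -- first bound
  have h2 : ∑ x ∈ F, (cov x : ℝ) * inc x ≤ ∑ t ∈ F, f k ((W'.image (· * t)) ∩ F) := by
    have hterm : ∀ t ∈ F, ∑ x ∈ F, (if x ∈ W'.image (· * t) then inc x else 0)
        ≤ f k ((W'.image (· * t)) ∩ F) := by
      intro t _
      have hrepr : (W'.image (· * t)) ∩ F = F.filter (fun x => x ∈ W'.image (· * t)) := by
        ext z
        simp only [Finset.mem_inter, Finset.mem_filter]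
        tauto
      rw [hrepr, ← Finset.sum_filter]
      exact claim1 hpos hinj (Finset.filter_subset _ _)
    calc ∑ x ∈ F, (cov x : ℝ) * inc x
        = ∑ x ∈ F, ∑ t ∈ F, (if x ∈ W'.image (· * t) then inc x else 0) := by
          refine Finset.sum_congr rfl fun x _ => ?_
          rw [← Finset.sum_filter, Finset.sum_const, hcov, nsmul_eq_mul]
      _ = ∑ t ∈ F, ∑ x ∈ F, (if x ∈ W'.image (· * t) then inc x else 0) := Finset.sum_comm
      _ ≤ _ := Finset.sum_le_sum hterm
  -- second bound
  have h3 : ∑ x ∈ F, ((W'.card : ℝ) - (cov x : ℝ)) * inc x ≤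
      ∑ x ∈ F, ((W'.card : ℝ) - (cov x : ℝ)) * f k {x} := by
    refine Finset.sum_le_sum fun x hx => ?_
    have hsing : inc x ≤ f k {x} := by
      have := claim1 hpos hinj (Finset.singleton_subset_iff.mpr hx)
      rwa [Finset.sum_singleton] at this
    refine mul_le_mul_of_nonneg_left hsing ?_
    have := hcov_le x
    simp only [sub_nonneg]
    exact_mod_cast this
  calc (W'.card : ℝ) * f k F = ∑ x ∈ F, ((cov x : ℝ) * inc x
        + ((W'.card : ℝ) - (cov x : ℝ)) * inc x) := by
        rw [h0, Finset.mul_sum]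
        exact Finset.sum_congr rfl fun x _ => by ring
    _ = ∑ x ∈ F, (cov x : ℝ) * inc x + ∑ x ∈ F, ((W'.card : ℝ) - (cov x : ℝ)) * inc x :=
        Finset.sum_add_distrib
    _ ≤ _ := add_le_add h2 h3

end Part7

namespace Part8
open Matrix Finset SzegoAux Part2 Part3 Part4 Part5 Part6 Part7

variable {Γ : Type*} [Group Γ] [DecidableEq Γ] {d : ℕ} {k : Γ → Matrix (Fin d) (Fin d) ℂ}
variable (hpos : ∀ F : Finset Γ, F.Nonempty → (kernelCompression k F).PosDef)
variable {inj : Γ → ℕ} (hinj : Function.Injective inj)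

include hpos hinj in
lemma main_bound (W' : Finset Γ) {δ : ℝ} (hδ : 0 < δ) {F : Finset Γ}
    (hF : memApproxInv (W' ∪ W'.image (·⁻¹)) δ F) :
    (W'.card : ℝ) * f k F ≤ (F.card : ℝ) * f k W' +
      δ * (F.card : ℝ) * (|f k W'| + (∑ A ∈ W'.powerset, |f k A|)
        + (W'.card : ℝ) * |f k {(1 : Γ)}|) := by
  classical
  set K := W' ∪ W'.image (·⁻¹) with hK
  set G := F.filter (fun t => ∀ g ∈ K, g * t ∈ F) with hG
  have hGF : G ⊆ F := Finset.filter_subset _ _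
  have hGcard : (1 - δ) * (F.card : ℝ) ≤ (G.card : ℝ) := hF.2
  have hbad : (F.card : ℝ) - (G.card : ℝ) ≤ δ * (F.card : ℝ) := by nlinarith
  set M0 := ∑ A ∈ W'.powerset, |f k A| with hM0
  have hM0nn : 0 ≤ M0 := Finset.sum_nonneg fun _ _ => abs_nonneg _
  set M1 := f k {(1 : Γ)} with hM1
  set m := W'.card with hm
  have hsh := shearer hpos hinj W' F
  -- f k {x} = M1
  have hfx : ∀ x : Γ, f k {x} = M1 := by
    intro x
    have : ({x} : Finset Γ) = ({(1:Γ)} : Finset Γ).image (· * x) := by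
      rw [Finset.image_singleton, one_mul]
    rw [this, f_translate]
  -- term 1 bound
  have hterm1 : ∑ t ∈ F, f k ((W'.image (· * t)) ∩ F) ≤
      (F.card : ℝ) * f k W' + ((F.card : ℝ) - (G.card : ℝ)) * (|f k W'| + M0) := by
    have hsplit : ∑ t ∈ F, f k ((W'.image (· * t)) ∩ F) =
        ∑ t ∈ G, f k ((W'.image (· * t)) ∩ F) +
          ∑ t ∈ F.filter (fun t => ¬ ∀ g ∈ K, g * t ∈ F), f k ((W'.image (· * t)) ∩ F) := by
      rw [hG, Finset.sum_filter_add_sum_filter_not]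
    have hgood : ∀ t ∈ G, f k ((W'.image (· * t)) ∩ F) = f k W' := by
      intro t ht
      rw [hG, Finset.mem_filter] at ht
      have hsub : W'.image (· * t) ⊆ F := by
        intro z hz
        obtain ⟨w, hw, hwz⟩ := Finset.mem_image.mp hz
        have hwK : w ∈ K := Finset.mem_union_left _ hw
        rw [← hwz]
        exact ht.2 w hwK
      rw [Finset.inter_eq_left.mpr hsub, f_translate]
    have hbadt : ∀ t ∈ F.filter (fun t => ¬ ∀ g ∈ K, g * t ∈ F),
        f k ((W'.image (· * t)) ∩ F) ≤ M0 := by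
      intro t _
      have hrepr : (W'.image (· * t)) ∩ F = (W'.filter (fun w => w * t ∈ F)).image (· * t) := by
        ext z
        simp only [Finset.mem_inter, Finset.mem_image, Finset.mem_filter]
        constructor
        · rintro ⟨⟨w, hw, hwz⟩, hzF⟩
          exact ⟨w, ⟨hw, hwz ▸ hzF⟩, hwz⟩
        · rintro ⟨w, ⟨hw, hwF⟩, hwz⟩
          exact ⟨⟨w, hw, hwz⟩, hwz ▸ hwF⟩
      rw [hrepr, f_translate]
      refine le_trans (le_abs_self _) ?_
      refine Finset.single_le_sum (f := fun A => |f k A|) (fun _ _ => abs_nonneg _) ?_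
      exact Finset.mem_powerset.mpr (Finset.filter_subset _ _)
    have hcard2 : (G.card : ℝ) + ((F.filter (fun t => ¬ ∀ g ∈ K, g * t ∈ F)).card : ℝ)
        = (F.card : ℝ) := by
      rw [hG]
      exact_mod_cast congrArg (Nat.cast (R := ℝ))
        (Finset.card_filter_add_card_filter_not (s := F)
          (p := fun t => ∀ g ∈ K, g * t ∈ F))
    calc ∑ t ∈ F, f k ((W'.image (· * t)) ∩ F)
        ≤ (G.card : ℝ) * f k W' +
          ((F.filter (fun t => ¬ ∀ g ∈ K, g * t ∈ F)).card : ℝ) * M0 := by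
          rw [hsplit]
          refine add_le_add ?_ ?_
          · rw [Finset.sum_congr rfl hgood, Finset.sum_const, nsmul_eq_mul]
          · calc ∑ t ∈ F.filter (fun t => ¬ ∀ g ∈ K, g * t ∈ F), f k ((W'.image (· * t)) ∩ F)
                ≤ ∑ _t ∈ F.filter (fun t => ¬ ∀ g ∈ K, g * t ∈ F), M0 :=
                  Finset.sum_le_sum hbadt
              _ = _ := by rw [Finset.sum_const, nsmul_eq_mul]
      _ ≤ _ := by
          have h1 : (G.card : ℝ) * f k W' ≤ (F.card : ℝ) * f k W' +
              ((F.card : ℝ) - (G.card : ℝ)) * |f k W'| := by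
            have hGle : (G.card : ℝ) ≤ (F.card : ℝ) := by
              exact_mod_cast Finset.card_le_card hGF
            nlinarith [neg_abs_le (f k W'), le_abs_self (f k W')]
          have h2' : ((F.filter (fun t => ¬ ∀ g ∈ K, g * t ∈ F)).card : ℝ)
              = (F.card : ℝ) - (G.card : ℝ) := by linarith
          rw [h2']
          nlinarith [hM0nn, Finset.card_le_card hGF]
  -- term 2 bound
  have hterm2 : ∑ x ∈ F, ((m : ℝ) - ((F.filter (fun t => x ∈ W'.image (· * t))).card : ℝ))
      * f k {x} ≤ ((F.card : ℝ) - (G.card : ℝ)) * ((m : ℝ) * |M1|) := by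
    set cov : Γ → ℕ := fun x => (F.filter (fun t => x ∈ W'.image (· * t))).card with hcov
    have hcov_le : ∀ x, cov x ≤ m := by
      intro x
      apply Finset.card_le_card_of_injOn (fun t => x * t⁻¹)
      · intro t ht
        rw [Finset.mem_coe, Finset.mem_filter] at ht
        obtain ⟨w, hw, hwt⟩ := Finset.mem_image.mp ht.2
        have : x * t⁻¹ = w := by rw [← hwt]; group
        show x * t⁻¹ ∈ (W' : Set Γ); rwa [this]
      · intro t _ t' _ h
        simpa using mul_left_cancel h
    have hcovG : ∀ x ∈ G, m ≤ cov x := by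
      intro x hx
      rw [hG, Finset.mem_filter] at hx
      apply Finset.card_le_card_of_injOn (fun w => w⁻¹ * x)
      · intro w hw
        rw [Finset.mem_coe, Finset.mem_filter]
        have hwK : w⁻¹ ∈ K := Finset.mem_union_right _ (Finset.mem_image_of_mem _ hw)
        refine ⟨hx.2 w⁻¹ hwK, ?_⟩
        refine Finset.mem_image.mpr ⟨w, hw, ?_⟩
        group
      · intro w _ w' _ h
        have := mul_right_cancel h
        simpa using this
    have hsplit : ∀ x ∈ F, ((m : ℝ) - (cov x : ℝ)) * f k {x}
        ≤ (if x ∈ G then 0 else (m : ℝ) * |M1|) := by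
      intro x hx
      rw [hfx x]
      by_cases hxG : x ∈ G
      · rw [if_pos hxG]
        have : (m : ℝ) = (cov x : ℝ) := by
          have h1 := hcov_le x
          have h2 := hcovG x hxG
          have : cov x = m := le_antisymm h1 h2
          exact_mod_cast this.symm
        rw [← this]
        simp
      · rw [if_neg hxG]
        have h0 : (0:ℝ) ≤ (m : ℝ) - (cov x : ℝ) := by
          have := hcov_le x
          simp only [sub_nonneg]
          exact_mod_cast this
        have h1 : (m : ℝ) - (cov x : ℝ) ≤ (m : ℝ) := by
          have : (0:ℝ) ≤ (cov x : ℝ) := Nat.cast_nonneg _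
          linarith
        calc ((m : ℝ) - (cov x : ℝ)) * M1 ≤ ((m : ℝ) - (cov x : ℝ)) * |M1| :=
              mul_le_mul_of_nonneg_left (le_abs_self _) h0
          _ ≤ (m : ℝ) * |M1| := mul_le_mul_of_nonneg_right h1 (abs_nonneg _)
    calc ∑ x ∈ F, ((m : ℝ) - (cov x : ℝ)) * f k {x}
        ≤ ∑ x ∈ F, (if x ∈ G then 0 else (m : ℝ) * |M1|) := Finset.sum_le_sum hsplit
      _ = ((F.filter (fun x => ¬ x ∈ G)).card : ℝ) * ((m:ℝ) * |M1|) := by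
          rw [Finset.sum_ite, Finset.sum_const, Finset.sum_const, Finset.filter_not]
          simp [nsmul_eq_mul]
      _ ≤ _ := by
          have hfilt : F.filter (fun x => x ∈ G) = G := by
            rw [Finset.filter_mem_eq_inter, Finset.inter_eq_right.mpr hGF]
          have hcardeq : ((F.filter (fun x => ¬ x ∈ G)).card : ℝ)
              = (F.card : ℝ) - (G.card : ℝ) := by
            rw [Finset.filter_not, hfilt, Finset.card_sdiff_of_subset hGF]
            rw [Nat.cast_sub (Finset.card_le_card hGF)]
          rw [hcardeq]
  -- combine
  have hsum := le_trans hsh (add_le_add hterm1 hterm2)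
  have hbadnn : (0:ℝ) ≤ (F.card : ℝ) - (G.card : ℝ) := by
    have : (G.card : ℝ) ≤ (F.card : ℝ) := by exact_mod_cast Finset.card_le_card hGF
    linarith
  have hX1 : ((F.card : ℝ) - (G.card : ℝ)) * (|f k W'| + M0) ≤
      δ * (F.card : ℝ) * (|f k W'| + M0) :=
    mul_le_mul_of_nonneg_right hbad (add_nonneg (abs_nonneg _) hM0nn)
  have hX2 : ((F.card : ℝ) - (G.card : ℝ)) * ((m : ℝ) * |M1|) ≤
      δ * (F.card : ℝ) * ((m : ℝ) * |M1|) :=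
    mul_le_mul_of_nonneg_right hbad (mul_nonneg (Nat.cast_nonneg _) (abs_nonneg _))
  have hmnn : (0:ℝ) ≤ (m:ℝ) := Nat.cast_nonneg _
  calc (W'.card : ℝ) * f k F
      ≤ (F.card : ℝ) * f k W' + ((F.card : ℝ) - (G.card : ℝ)) * (|f k W'| + M0)
        + ((F.card : ℝ) - (G.card : ℝ)) * ((m : ℝ) * |M1|) := hsum
    _ ≤ (F.card : ℝ) * f k W' + δ * (F.card : ℝ) * (|f k W'| + M0)
        + δ * (F.card : ℝ) * ((m : ℝ) * |M1|) := by linarith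
    _ = (F.card : ℝ) * f k W' +
        δ * (F.card : ℝ) * (|f k W'| + M0 + (m : ℝ) * |M1|) := by ring

end Part8

/-- **Szegő-type approximation of the Fuglede–Kadison determinant (Theorem 3.1).**
Let `Γ` be a countable discrete amenable group, `d ≥ 1`, and `k : Γ → M_d(ℂ)` such that all
compressions `h_F` are positive definite.  Then `det(h_F)^{1/|F|}` converges to
`inf_F det(h_F)^{1/|F|}` as `F` becomes more and more left invariant: the infimum `c` is a
nonnegative real, `det(h_F)^{1/|F|} ≥ c` for every nonempty finite `F`, and for every
`ε > 0` there are a nonempty finite `K ⊆ Γ` and `δ > 0` with `det(h_F)^{1/|F|} < c + ε`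
for all `F ∈ B(K,δ)`. -/
theorem det_compression_pow_inv_card_tendsto_inf {Γ : Type*} [Group Γ] [Countable Γ]
    [DecidableEq Γ]
    (hamen : ∀ K : Finset Γ, K.Nonempty → ∀ δ : ℝ, 0 < δ → ∃ F : Finset Γ, memApproxInv K δ F)
    (d : ℕ) (hd : 1 ≤ d) (k : Γ → Matrix (Fin d) (Fin d) ℂ)
    (hpos : ∀ F : Finset Γ, F.Nonempty → (kernelCompression k F).PosDef) :
    0 ≤ sInf {r : ℝ | ∃ F : Finset Γ, F.Nonempty ∧
        r = ((kernelCompression k F).det.re) ^ ((F.card : ℝ)⁻¹)} ∧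
    (∀ F : Finset Γ, F.Nonempty →
      sInf {r : ℝ | ∃ F : Finset Γ, F.Nonempty ∧
          r = ((kernelCompression k F).det.re) ^ ((F.card : ℝ)⁻¹)} ≤
        ((kernelCompression k F).det.re) ^ ((F.card : ℝ)⁻¹)) ∧
    (∀ ε : ℝ, 0 < ε → ∃ (K : Finset Γ) (δ : ℝ), K.Nonempty ∧ 0 < δ ∧
      ∀ F : Finset Γ, memApproxInv K δ F →
        ((kernelCompression k F).det.re) ^ ((F.card : ℝ)⁻¹) <
          sInf {r : ℝ | ∃ F : Finset Γ, F.Nonempty ∧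
              r = ((kernelCompression k F).det.re) ^ ((F.card : ℝ)⁻¹)} + ε) := by
  classical
  obtain ⟨inj, hinj⟩ := Countable.exists_injective_nat Γ
  set S := {r : ℝ | ∃ F : Finset Γ, F.Nonempty ∧
      r = ((kernelCompression k F).det.re) ^ ((F.card : ℝ)⁻¹)} with hS
  have hDpos : ∀ A : Finset Γ, 0 < Part5.D k A := Part5.D_pos hpos
  have hSne : S.Nonempty := ⟨((kernelCompression k ({1} : Finset Γ)).det.re) ^
      ((({1} : Finset Γ).card : ℝ)⁻¹), ⟨{1}, Finset.singleton_nonempty _, rfl⟩⟩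
  have hSnn : ∀ r ∈ S, (0:ℝ) ≤ r := by
    rintro r ⟨F, hFne, rfl⟩
    exact (Real.rpow_pos_of_pos (hDpos F) _).le
  have hbdd : BddBelow S := ⟨0, fun r hr => hSnn r hr⟩
  refine ⟨le_csInf hSne hSnn, fun F hF => csInf_le hbdd ⟨F, hF, rfl⟩, ?_⟩
  intro ε hε
  set c := sInf S with hc
  have hc0 : 0 ≤ c := le_csInf hSne hSnn
  obtain ⟨r, hrS, hrlt⟩ := exists_lt_of_csInf_lt hSne
    (show c < c + ε / 2 by linarith)
  obtain ⟨W₀, hW₀ne, hreq⟩ := hrS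
  have hr0 : 0 < r := by rw [hreq]; exact Real.rpow_pos_of_pos (hDpos W₀) _
  set m := W₀.card with hm
  have hm0 : 0 < m := Finset.card_pos.mpr hW₀ne
  have hmR : (0:ℝ) < (m:ℝ) := by exact_mod_cast hm0
  set C := |Part6.f k W₀| + (∑ A ∈ W₀.powerset, |Part6.f k A|)
      + (m : ℝ) * |Part6.f k {(1 : Γ)}| with hC
  have hCnn : 0 ≤ C := by
    have h1 : (0:ℝ) ≤ ∑ A ∈ W₀.powerset, |Part6.f k A| :=
      Finset.sum_nonneg fun _ _ => abs_nonneg _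
    have h2 : (0:ℝ) ≤ (m : ℝ) * |Part6.f k {(1 : Γ)}| :=
      mul_nonneg (Nat.cast_nonneg _) (abs_nonneg _)
    have := abs_nonneg (Part6.f k W₀)
    linarith
  set T := (c + ε) / r with hT
  have hT1 : 1 < T := by
    rw [hT, lt_div_iff₀ hr0, one_mul]
    linarith
  set L := Real.log T with hL
  have hL0 : 0 < L := Real.log_pos hT1
  set δ := L * (m : ℝ) / (2 * (C + 1)) with hδ
  have hδ0 : 0 < δ := by positivity
  refine ⟨W₀ ∪ W₀.image (·⁻¹), δ, ?_, hδ0, ?_⟩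
  · exact Finset.Nonempty.inl hW₀ne
  intro F hF
  have hFne : F.Nonempty := hF.1
  have hFc : (0:ℝ) < (F.card : ℝ) := by exact_mod_cast Finset.card_pos.mpr hFne
  have hmb := Part8.main_bound hpos hinj W₀ hδ0 hF
  -- divide by m * F.card
  have hkey : Part6.f k F * ((F.card : ℝ))⁻¹ ≤
      Part6.f k W₀ * ((m : ℝ))⁻¹ + δ * C * ((m : ℝ))⁻¹ := by
    rw [← div_eq_mul_inv, ← div_eq_mul_inv, ← div_eq_mul_inv, ← add_div,
      div_le_div_iff₀ hFc hmR]
    rw [← hm, ← hC] at hmb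
    nlinarith [hmb]
  have hstep : δ * C * ((m : ℝ))⁻¹ ≤ L / 2 := by
    have heq : δ * C * ((m : ℝ))⁻¹ = L * C / (2 * (C + 1)) * ((m:ℝ) * ((m:ℝ))⁻¹) := by
      rw [hδ]
      ring
    rw [heq, mul_inv_cancel₀ hmR.ne', mul_one]
    rw [div_le_div_iff₀ (by positivity) (by norm_num)]
    nlinarith
  -- convert to rpow
  have hrF : ((kernelCompression k F).det.re) ^ ((F.card : ℝ)⁻¹) =
      Real.exp (Part6.f k F * ((F.card : ℝ))⁻¹) := by
    show Part5.D k F ^ ((F.card : ℝ)⁻¹) = _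
    rw [Real.rpow_def_of_pos (hDpos F)]
    rfl
  have hrW : r = Real.exp (Part6.f k W₀ * ((m : ℝ))⁻¹) := by
    rw [hreq]
    show Part5.D k W₀ ^ (((m:ℕ) : ℝ)⁻¹) = _
    rw [Real.rpow_def_of_pos (hDpos W₀)]
    rfl
  rw [hrF]
  calc Real.exp (Part6.f k F * ((F.card : ℝ))⁻¹)
      ≤ Real.exp (Part6.f k W₀ * ((m : ℝ))⁻¹ + L / 2) := by
        apply Real.exp_le_exp.mpr
        linarith
    _ = r * Real.exp (L / 2) := by rw [Real.exp_add, ← hrW]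
    _ < r * T := by
        have hTexp : Real.exp L = T := Real.exp_log (by positivity)
        have : Real.exp (L / 2) < Real.exp L := Real.exp_lt_exp.mpr (by linarith)
        rw [← hTexp]
        exact (mul_lt_mul_iff_right₀ hr0).mpr this
    _ = c + ε := by
        rw [hT]
        field_simp
end

section
/- Let Γ be a countable discrete group, d ≥ 1, and g ∈ M_d(ℂΓ), written g = Σ_{s∈Γ} g_s s with g_s ∈ M_d(ℂ) finitely supported. Suppose there is a nonzero finitely supported x : Γ → ℂ^d such that Σ_{s∈Γ} g_s x(s⁻¹t) = 0 for all t ∈ Γ, and let K ⊆ Γ be the (finite, nonempty) support of x. Then for every nonempty finite subset F ⊆ Γ with |{t ∈ F : Kt ⊆ F}| ≥ |F|/2, the compression g_F is not injective; in particular det(g_F) = 0. -/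
/-- The compression `g_F` of `g = Σ_s g_s s ∈ M_d(ℂΓ)`: the complex matrix indexed by
`F × {1,…,d}` with entries `g_F((s,i),(t,j)) = (g_{s t⁻¹})_{i,j}`. -/
def grpCompression {Γ : Type*} [Group Γ] {d : ℕ} (g : Γ → Matrix (Fin d) (Fin d) ℂ)
    (F : Finset Γ) :
    Matrix ({a // a ∈ F} × Fin d) ({a // a ∈ F} × Fin d) ℂ :=
  Matrix.of fun p q => g (p.1.1 * q.1.1⁻¹) p.2 q.2

/-- **Compressions of a left zero divisor are singular.**
Let `g ∈ M_d(ℂΓ)` and suppose there is a nonzero finitely supported `x : Γ → ℂ^d` with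
`Σ_s g_s x(s⁻¹ t) = 0` for all `t`, with support `K`.  Then for every nonempty finite
`F ⊆ Γ` with `|{t ∈ F : Kt ⊆ F}| ≥ |F|/2`, the compression `g_F` is not injective;
in particular `det (g_F) = 0`. -/
theorem compression_not_injective_of_kernel {Γ : Type*} [Group Γ] [Countable Γ]
    [DecidableEq Γ] (d : ℕ) (hd : 1 ≤ d)
    (g : Γ → Matrix (Fin d) (Fin d) ℂ) (hgfin : (Function.support g).Finite)
    (x : Γ → Fin d → ℂ) (hx : x ≠ 0)
    (K : Finset Γ) (hK : ∀ s : Γ, s ∈ K ↔ x s ≠ 0)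
    (hconv : ∀ t : Γ, ∑ᶠ s : Γ, (g s).mulVec (x (s⁻¹ * t)) = 0)
    (F : Finset Γ) (hF : F.Nonempty)
    (hhalf : (F.card : ℝ) / 2 ≤ ((F.filter fun t => ∀ k ∈ K, k * t ∈ F).card : ℝ)) :
    (¬ Function.Injective (grpCompression g F).mulVec) ∧ (grpCompression g F).det = 0 := by
  -- the filtered set is nonempty
  have hcard : 0 < (F.filter fun t => ∀ k ∈ K, k * t ∈ F).card := by
    have h1 : (0 : ℝ) < (F.card : ℝ) := by exact_mod_cast hF.card_pos
    have h2 : (0 : ℝ) < ((F.filter fun t => ∀ k ∈ K, k * t ∈ F).card : ℝ) :=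
      lt_of_lt_of_le (by linarith) hhalf
    exact_mod_cast h2
  obtain ⟨r, hr⟩ := Finset.card_pos.mp hcard
  rw [Finset.mem_filter] at hr
  obtain ⟨hrF, hrK⟩ := hr
  -- the kernel vector
  set v : ({a // a ∈ F} × Fin d) → ℂ := fun p => x (p.1.1 * r⁻¹) p.2 with hv
  -- v ≠ 0
  have hvne : v ≠ 0 := by
    have : ∃ k, x k ≠ 0 := by
      by_contra h
      push_neg at h
      exact hx (funext fun k => h k)
    obtain ⟨k, hk⟩ := this
    have hkK : k ∈ K := (hK k).mpr hk
    have hkr : k * r ∈ F := hrK k hkK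
    obtain ⟨i, hi⟩ : ∃ i, x k i ≠ 0 := by
      by_contra h
      push_neg at h
      exact hk (funext h)
    intro h0
    apply hi
    have := congrFun h0 (⟨k * r, hkr⟩, i)
    simpa [hv, mul_inv_cancel_right] using this
  -- key computation: the vector-valued sum over F vanishes
  have key : ∀ t : Γ, ∑ s ∈ F, (g (t * s⁻¹)).mulVec (x (s * r⁻¹)) = 0 := by
    intro t
    have hsupp : (Function.support fun s : Γ => (g (t * s⁻¹)).mulVec (x (s * r⁻¹))) ⊆ ↑F := by
      intro s hs
      have hxne : x (s * r⁻¹) ≠ 0 := by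
        intro h
        apply hs
        simp [h, Matrix.mulVec_zero]
      have : s * r⁻¹ ∈ K := (hK _).mpr hxne
      have := hrK _ this
      simpa [inv_mul_cancel_right] using this
    rw [← finsum_eq_finset_sum_of_support_subset _ hsupp]
    have hbij : Function.Bijective (fun s : Γ => t * s⁻¹) :=
      ((Equiv.inv Γ).trans (Equiv.mulLeft t)).bijective
    have heq := finsum_eq_of_bijective (fun s : Γ => t * s⁻¹)
      (f := fun s : Γ => (g (t * s⁻¹)).mulVec (x (s * r⁻¹)))
      (g := fun u : Γ => (g u).mulVec (x (u⁻¹ * (t * r⁻¹)))) hbij ?_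
    · rw [heq, hconv (t * r⁻¹)]
    · intro s
      congr 1
      group
  -- the kernel vector is mapped to zero
  have hmv : (grpCompression g F).mulVec v = 0 := by
    funext p
    obtain ⟨⟨t, ht⟩, i⟩ := p
    have h := congrFun (key t) i
    simp only [Finset.sum_apply, Pi.zero_apply] at h
    show ∑ q, grpCompression g F (⟨t, ht⟩, i) q * v q = 0
    simp only [grpCompression, Matrix.of_apply, hv]
    rw [Fintype.sum_prod_type,
      Finset.sum_coe_sort F (fun c => ∑ j, g (t * c⁻¹) i j * x (c * r⁻¹) j)]
    simpa [Matrix.mulVec, dotProduct] using h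
  constructor
  · intro hinj
    exact hvne (hinj (hmv.trans (Matrix.mulVec_zero _).symm))
  · exact Matrix.exists_mulVec_eq_zero_iff.mp ⟨v, hvne, hmv⟩
end

section
/- Let L ⊆ ℂ be a finite Galois extension of ℚ with Galois group G, let Γ be a countable discrete group, and let d ≥ 1. Let g ∈ M_d(𝒪_L Γ), written g = Σ_{s∈K} g_s s where K ⊆ Γ is the finite nonempty support of g and each g_s ∈ M_d(𝒪_L) is a matrix with entries algebraic integers in L. Assume g = g* and that for every nonempty finite subset F' ⊆ Γ the compression g_{F'} is positive definite. Let C > 0 be such that ‖σ(g_s)‖ ≤ C for all s ∈ K and all σ ∈ G, where σ(g_s) denotes entrywise application of σ and ‖·‖ is the operator norm on M_d(ℂ). Then for every nonempty finite subset F ⊆ Γ one has det(g_F) ≥ (C·|K|)^{−d·|F|·(|G|−1)}. -/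
open Matrix
open scoped ComplexOrder

lemma abs_det_le_of_mulVec_bound {ι : Type*} [Fintype ι] [DecidableEq ι]
    (M : Matrix ι ι ℂ) (B : ℝ) (hB : 0 ≤ B)
    (h : ∀ v : ι → ℂ, Real.sqrt (∑ i, ‖(M *ᵥ v) i‖ ^ 2) ≤ B * Real.sqrt (∑ i, ‖v i‖ ^ 2)) :
    ‖M.det‖ ≤ B ^ Fintype.card ι := by
  set N : Matrix ι ι ℂ := Mᴴ * M with hNdef
  have hPS : N.PosSemidef := posSemidef_conjTranspose_mul_self M
  have hH : N.IsHermitian := hPS.1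
  -- each eigenvalue is ≤ B ^ 2
  have hev : ∀ i, hH.eigenvalues i ≤ B ^ 2 := by
    intro i
    have hu1 : ‖hH.eigenvectorBasis i‖ = 1 := hH.eigenvectorBasis.orthonormal.1 i
    set u : ι → ℂ := ⇑(hH.eigenvectorBasis i) with hudef
    have hsum1 : ∑ j, ‖u j‖ ^ 2 = 1 := by
      have h1' : Real.sqrt (∑ j, ‖u j‖ ^ 2) = 1 :=
        (EuclideanSpace.norm_eq (hH.eigenvectorBasis i)).symm.trans hu1
      have h0 : (0:ℝ) ≤ ∑ j, ‖u j‖ ^ 2 :=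
        Finset.sum_nonneg fun _ _ => sq_nonneg _
      nlinarith [Real.sq_sqrt h0, h1']
    have hdot : star u ⬝ᵥ (N *ᵥ u) = ((∑ j, ‖(M *ᵥ u) j‖ ^ 2 : ℝ) : ℂ) := by
      have h1 : N *ᵥ u = Mᴴ *ᵥ (M *ᵥ u) := by rw [hNdef, ← mulVec_mulVec]
      rw [h1, dotProduct_mulVec, ← star_mulVec]
      simp only [dotProduct, Pi.star_apply, Complex.ofReal_sum]
      refine Finset.sum_congr rfl fun j _ => ?_
      rw [RCLike.star_def, mul_comm, Complex.mul_conj]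
      norm_cast
      rw [Complex.normSq_eq_norm_sq]
    have heq : hH.eigenvalues i = ∑ j, ‖(M *ᵥ u) j‖ ^ 2 := by
      rw [hH.eigenvalues_eq i, ← hudef, hdot]
      simp [← Complex.ofReal_pow]
    rw [heq]
    have hb := h u
    rw [hsum1, Real.sqrt_one, mul_one] at hb
    have h0 : (0:ℝ) ≤ ∑ j, ‖(M *ᵥ u) j‖ ^ 2 := Finset.sum_nonneg fun _ _ => sq_nonneg _
    nlinarith [Real.sq_sqrt h0, mul_self_le_mul_self (Real.sqrt_nonneg _) hb, Real.sqrt_nonneg (∑ j, ‖(M *ᵥ u) j‖ ^ 2)]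
  -- det N = |det M| ^ 2
  have hdetN : ((‖M.det‖ ^ 2 : ℝ) : ℂ) = N.det := by
    rw [hNdef, det_mul, det_conjTranspose]
    rw [mul_comm, RCLike.star_def, Complex.mul_conj]
    norm_cast
    rw [Complex.normSq_eq_norm_sq]
  have hprod : N.det = ((∏ i, hH.eigenvalues i : ℝ) : ℂ) := by
    rw [hH.det_eq_prod_eigenvalues]; push_cast; rfl
  have hple : ∏ i, hH.eigenvalues i ≤ (B ^ Fintype.card ι) ^ 2 := by
    have : ∏ i, hH.eigenvalues i ≤ ∏ _i : ι, B ^ 2 :=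
      Finset.prod_le_prod (fun i _ => hPS.eigenvalues_nonneg i) (fun i _ => hev i)
    simpa [Finset.prod_const, ← pow_mul, mul_comm] using this
  have habs2 : ‖M.det‖ ^ 2 ≤ (B ^ Fintype.card ι) ^ 2 := by
    have : ((‖M.det‖ ^ 2 : ℝ) : ℂ) = ((∏ i, hH.eigenvalues i : ℝ) : ℂ) :=
      hdetN.trans hprod
    rw [Complex.ofReal_inj.mp this]
    exact hple
  have h1 : (0:ℝ) ≤ ‖M.det‖ := norm_nonneg _
  nlinarith [pow_nonneg hB (Fintype.card ι)]

lemma compression_mulVec_bound {Γ : Type*} [Group Γ] [DecidableEq Γ] {d : ℕ}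
    (h : Γ → Matrix (Fin d) (Fin d) ℂ) (K : Finset Γ)
    (hsupp : ∀ s, s ∉ K → h s = 0) (C : ℝ) (hC : 0 ≤ C)
    (hb : ∀ s ∈ K, ∀ v : Fin d → ℂ,
      Real.sqrt (∑ i, ‖((h s) *ᵥ v) i‖ ^ 2) ≤ C * Real.sqrt (∑ i, ‖v i‖ ^ 2))
    (F : Finset Γ) (v : {a // a ∈ F} × Fin d → ℂ) :
    Real.sqrt (∑ p, ‖(grpCompression h F *ᵥ v) p‖ ^ 2) ≤
      (C * K.card) * Real.sqrt (∑ p, ‖v p‖ ^ 2) := by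
  classical
  -- the pieces
  set W : Γ → ({a // a ∈ F} × Fin d) → ℂ := fun u p =>
    if hm : u⁻¹ * ↑p.1 ∈ F then (h u *ᵥ fun j => v (⟨u⁻¹ * ↑p.1, hm⟩, j)) p.2 else 0 with hWdef
  have key : ∀ (u : Γ) (p : {a // a ∈ F} × Fin d), W u p =
      ∑ q : {a // a ∈ F} × Fin d, if ((↑p.1 * (↑q.1)⁻¹ : Γ) = u) then h u p.2 q.2 * v q else 0 := by
    intro u p
    by_cases hm : u⁻¹ * ↑p.1 ∈ F
    · set t₀ : {a // a ∈ F} := ⟨u⁻¹ * ↑p.1, hm⟩ with ht₀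
      have hcond : ∀ t : {a // a ∈ F}, ((↑p.1 * (↑t)⁻¹ : Γ) = u) ↔ t = t₀ := by
        intro t
        constructor
        · intro ht
          apply Subtype.ext
          rw [ht₀]
          simp only [← ht]
          group
        · rintro rfl
          rw [ht₀]
          simp only
          group
      rw [Fintype.sum_prod_type]
      have hterm : ∀ t : {a // a ∈ F},
          (∑ j, if ((↑p.1 * (↑t)⁻¹ : Γ) = u) then h u p.2 j * v (t, j) else 0)
            = if t = t₀ then (h u *ᵥ fun j => v (t₀, j)) p.2 else 0 := by
        intro t
        by_cases hc : ((↑p.1 * (↑t)⁻¹ : Γ) = u)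
        · have ht : t = t₀ := (hcond t).mp hc
          subst ht
          simp [hc, Matrix.mulVec, dotProduct]
        · have ht : ¬ (t = t₀) := fun hh => hc ((hcond t).mpr hh)
          simp [hc, ht]
      rw [Finset.sum_congr rfl fun t _ => hterm t]
      rw [Fintype.sum_ite_eq' t₀ fun _ => (h u *ᵥ fun j => v (t₀, j)) p.2]
      simp only [hWdef, dif_pos hm]
      rfl
    · have : ∀ q : {a // a ∈ F} × Fin d, ¬ ((↑p.1 * (↑q.1)⁻¹ : Γ) = u) := by
        intro q hq
        apply hm
        have : (u⁻¹ * ↑p.1 : Γ) = ↑q.1 := by rw [← hq]; group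
        rw [this]; exact q.1.2
      simp only [hWdef, dif_neg hm]
      rw [Finset.sum_congr rfl fun q _ => if_neg (this q)]
      simp
  -- the decomposition
  have hsum : grpCompression h F *ᵥ v = ∑ u ∈ K, W u := by
    funext p
    rw [Finset.sum_apply]
    rw [Finset.sum_congr rfl fun u _ => key u p, Finset.sum_comm]
    have : ∀ q : {a // a ∈ F} × Fin d, (∑ u ∈ K, if ((↑p.1 * (↑q.1)⁻¹ : Γ) = u) then h u p.2 q.2 * v q else 0)
        = h (↑p.1 * (↑q.1)⁻¹) p.2 q.2 * v q := by
      intro q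
      rw [Finset.sum_ite_eq K (↑p.1 * (↑q.1)⁻¹ : Γ) fun u => h u p.2 q.2 * v q]
      by_cases hq : (↑p.1 * (↑q.1)⁻¹ : Γ) ∈ K
      · rw [if_pos hq]
      · rw [if_neg hq, hsupp _ hq]
        simp
    rw [Finset.sum_congr rfl fun q _ => this q]
    rfl
  -- norm bound for each piece
  have hWle : ∀ u ∈ K, ∑ p, ‖W u p‖ ^ 2 ≤ C ^ 2 * ∑ p, ‖v p‖ ^ 2 := by
    intro u hu
    set cG : Γ → ℝ := fun t => if ht : t ∈ F then ∑ j, ‖v (⟨t, ht⟩, j)‖ ^ 2 else 0 with hcG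
    have hcG0 : ∀ t, 0 ≤ cG t := by
      intro t
      rw [hcG]
      dsimp only
      split
      · exact Finset.sum_nonneg fun _ _ => sq_nonneg _
      · exact le_rfl
    have hs : ∀ s : {a // a ∈ F}, ∑ i, ‖W u (s, i)‖ ^ 2 ≤ C ^ 2 * cG (u⁻¹ * ↑s) := by
      intro s
      by_cases hm : u⁻¹ * ↑s ∈ F
      · have hb' := hb u hu (fun j => v (⟨u⁻¹ * ↑s, hm⟩, j))
        have h0 : (0:ℝ) ≤ ∑ i, ‖(h u *ᵥ fun j => v (⟨u⁻¹ * ↑s, hm⟩, j)) i‖ ^ 2 :=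
          Finset.sum_nonneg fun _ _ => sq_nonneg _
        have h1 : (0:ℝ) ≤ ∑ j, ‖v (⟨u⁻¹ * ↑s, hm⟩, j)‖ ^ 2 :=
          Finset.sum_nonneg fun _ _ => sq_nonneg _
        have hWe : ∑ i, ‖W u (s, i)‖ ^ 2
            = ∑ i, ‖(h u *ᵥ fun j => v (⟨u⁻¹ * ↑s, hm⟩, j)) i‖ ^ 2 := by
          refine Finset.sum_congr rfl fun i _ => ?_
          simp only [hWdef]
          rw [dif_pos hm]
        rw [hWe, hcG]
        dsimp only
        rw [dif_pos hm]
        nlinarith [mul_self_le_mul_self (Real.sqrt_nonneg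
            (∑ i, ‖(h u *ᵥ fun j => v (⟨u⁻¹ * ↑s, hm⟩, j)) i‖ ^ 2)) hb',
          Real.sq_sqrt h0, Real.sq_sqrt h1, Real.sqrt_nonneg (∑ j, ‖v (⟨u⁻¹ * ↑s, hm⟩, j)‖ ^ 2)]
      · have hz : ∀ i : Fin d, W u (s, i) = 0 := by
          intro i
          simp only [hWdef]
          rw [dif_neg hm]
        have : ∑ i, ‖W u (s, i)‖ ^ 2 = 0 := by
          refine Finset.sum_eq_zero fun i _ => ?_
          rw [hz i]
          simp
        rw [this]
        exact mul_nonneg (sq_nonneg C) (hcG0 _)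
    calc ∑ p : {a // a ∈ F} × Fin d, ‖W u p‖ ^ 2 = ∑ s : {a // a ∈ F}, ∑ i, ‖W u (s, i)‖ ^ 2 :=
          Fintype.sum_prod_type _
      _ ≤ ∑ s : {a // a ∈ F}, C ^ 2 * cG (u⁻¹ * ↑s) := Finset.sum_le_sum fun s _ => hs s
      _ = C ^ 2 * ∑ s : {a // a ∈ F}, cG (u⁻¹ * ↑s) := by rw [Finset.mul_sum]
      _ ≤ C ^ 2 * ∑ p : {a // a ∈ F} × Fin d, ‖v p‖ ^ 2 := by
          refine mul_le_mul_of_nonneg_left ?_ (sq_nonneg C)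
          have e1 : ∑ s : {a // a ∈ F}, cG (u⁻¹ * ↑s) = ∑ s ∈ F, cG (u⁻¹ * s) :=
            Finset.sum_coe_sort F (fun x => cG (u⁻¹ * x))
          have e2 : ∑ s ∈ F, cG (u⁻¹ * s) = ∑ t ∈ F.image (fun s => u⁻¹ * s), cG t :=
            (Finset.sum_image (fun a _ b _ hab => mul_left_cancel hab)).symm
          have e3 : ∑ t ∈ F.image (fun s => u⁻¹ * s), cG t
              ≤ ∑ t ∈ F.image (fun s => u⁻¹ * s) ∪ F, cG t :=
            Finset.sum_le_sum_of_subset_of_nonneg Finset.subset_union_left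
              (fun t _ _ => hcG0 t)
          have e4 : ∑ t ∈ F.image (fun s => u⁻¹ * s) ∪ F, cG t = ∑ t ∈ F, cG t :=
            (Finset.sum_subset Finset.subset_union_right (fun t _ htF => dif_neg htF)).symm
          have e5 : ∑ t ∈ F, cG t = ∑ p : {a // a ∈ F} × Fin d, ‖v p‖ ^ 2 := by
            rw [← Finset.sum_coe_sort F cG, Fintype.sum_prod_type]
            refine Finset.sum_congr rfl fun t _ => ?_
            rw [hcG]
            dsimp only
            rw [dif_pos t.2]
          rw [e1, e2]
          rw [e4, e5] at e3
          exact e3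
  have hW : ∀ u ∈ K, Real.sqrt (∑ p, ‖W u p‖ ^ 2) ≤ C * Real.sqrt (∑ p, ‖v p‖ ^ 2) := by
    intro u hu
    have := Real.sqrt_le_sqrt (hWle u hu)
    rwa [Real.sqrt_mul (sq_nonneg C), Real.sqrt_sq hC] at this
  -- triangle inequality in ℓ²
  set E := (WithLp.linearEquiv 2 ℂ (({a // a ∈ F} × Fin d) → ℂ)).symm with hEdef
  have hnorm : ∀ w : ({a // a ∈ F} × Fin d) → ℂ, ‖E w‖ = Real.sqrt (∑ p, ‖w p‖ ^ 2) := fun w =>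
    EuclideanSpace.norm_eq (E w)
  rw [hsum]
  calc Real.sqrt (∑ p, ‖(∑ u ∈ K, W u) p‖ ^ 2) = ‖E (∑ u ∈ K, W u)‖ := (hnorm _).symm
    _ = ‖∑ u ∈ K, E (W u)‖ := by rw [map_sum E W K]
    _ ≤ ∑ u ∈ K, ‖E (W u)‖ := norm_sum_le _ _
    _ ≤ ∑ _u ∈ K, C * Real.sqrt (∑ p, ‖v p‖ ^ 2) := by
        refine Finset.sum_le_sum fun u hu => ?_
        rw [hnorm]
        exact hW u hu
    _ = (C * K.card) * Real.sqrt (∑ p, ‖v p‖ ^ 2) := by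
        rw [Finset.sum_const, nsmul_eq_mul]
        ring

set_option synthInstance.maxHeartbeats 1000000 in
/-- **Lower bound for determinants of compressions of algebraic-integer group ring elements
(Lemma 3.12).**  Let `L ⊆ ℂ` be a finite Galois extension of `ℚ` with Galois group `G`, let
`Γ` be a countable discrete group and `d ≥ 1`.  Let `g = Σ_{s ∈ K} g_s s ∈ M_d(𝒪_L Γ)` be
self-adjoint with all compressions positive definite, where `K` is the finite nonempty
support of `g`.  If `‖σ(g_s)‖ ≤ C` (operator norm) for all `s ∈ K` and `σ ∈ G`, then for
every nonempty finite `F ⊆ Γ` one has `det (g_F) ≥ (C |K|)^{-d |F| (|G| - 1)}`. -/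
theorem det_compression_ge_of_algebraic_integers
    (L : IntermediateField ℚ ℂ) [FiniteDimensional ℚ L] [IsGalois ℚ L]
    {Γ : Type*} [Group Γ] [Countable Γ] [DecidableEq Γ]
    (d : ℕ) (hd : 1 ≤ d)
    (g : Γ → Matrix (Fin d) (Fin d) L)
    (hint : ∀ (s : Γ) (i j : Fin d), IsIntegral ℤ (g s i j))
    (K : Finset Γ) (hK : ∀ s : Γ, s ∈ K ↔ g s ≠ 0) (hKne : K.Nonempty)
    (hsa : ∀ s : Γ, ((g s⁻¹).map (fun a : L => (a : ℂ)))ᴴ = (g s).map (fun a : L => (a : ℂ)))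
    (hpos : ∀ F' : Finset Γ, F'.Nonempty →
      (grpCompression (fun s => (g s).map (fun a : L => (a : ℂ))) F').PosDef)
    (C : ℝ) (hC : 0 < C)
    (hCbound : ∀ s ∈ K, ∀ σ : L ≃ₐ[ℚ] L, ∀ v : Fin d → ℂ,
      Real.sqrt (∑ i : Fin d,
          ‖((g s).map (fun a : L => ((σ a : L) : ℂ))).mulVec v i‖ ^ 2) ≤
        C * Real.sqrt (∑ i : Fin d, ‖v i‖ ^ 2))
    (F : Finset Γ) (hF : F.Nonempty) :
    (((C * (K.card : ℝ)) ^
        (-((d * F.card * (Nat.card (L ≃ₐ[ℚ] L) - 1) : ℕ) : ℤ)) : ℝ) : ℂ) ≤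
      (grpCompression (fun s => (g s).map (fun a : L => (a : ℂ))) F).det := by
  classical
  set f0 : ↥L →+* ℂ := L.val.toRingHom with hf0def
  set AL : Matrix ({a // a ∈ F} × Fin d) ({a // a ∈ F} × Fin d) ↥L :=
    Matrix.of fun p q => g (↑p.1 * (↑q.1)⁻¹) p.2 q.2 with hALdef
  have hM0eq : grpCompression (fun s => (g s).map (fun a : L => (a : ℂ))) F = AL.map f0 := rfl
  have hdet0 : (grpCompression (fun s => (g s).map (fun a : L => (a : ℂ))) F).det
      = f0 AL.det := by rw [hM0eq, ← RingHom.mapMatrix_apply, ← RingHom.map_det]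
  have hz : (0:ℂ) < f0 AL.det := by rw [← hdet0]; exact (hpos F hF).det_pos
  have hx0 : AL.det ≠ 0 := by
    intro hcon
    rw [hcon, map_zero] at hz
    exact lt_irrefl _ hz
  -- integrality of the determinant
  have hxint : IsIntegral ℤ AL.det := by
    have : AL.det ∈ integralClosure ℤ ↥L := by
      rw [Matrix.det_apply]
      apply Subalgebra.sum_mem
      intro σ _
      rw [Units.smul_def]
      apply Subalgebra.zsmul_mem
      apply Subalgebra.prod_mem
      intro i _
      exact hint _ _ _
    exact this
  -- the product over the Galois group is a nonzero rational integer
  have hQ : algebraMap ℚ ↥L (Algebra.norm ℚ AL.det) = ∏ σ : L ≃ₐ[ℚ] L, σ AL.det :=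
    Algebra.norm_eq_prod_automorphisms ℚ AL.det
  have hqint : IsIntegral ℤ (Algebra.norm ℚ AL.det) :=
    Algebra.isIntegral_norm (K := ℚ) hxint
  obtain ⟨m, hm⟩ := IsIntegrallyClosed.isIntegral_iff.mp hqint
  have hq0 : Algebra.norm ℚ AL.det ≠ 0 := by
    rw [Algebra.norm_ne_zero_iff]
    exact hx0
  have hm0 : m ≠ 0 := by
    rintro rfl
    rw [map_zero] at hm
    exact hq0 hm.symm
  have hprodC : ∏ σ : L ≃ₐ[ℚ] L, f0 (σ AL.det) = ((Algebra.norm ℚ AL.det : ℚ) : ℂ) := by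
    rw [← map_prod f0, ← hQ, eq_ratCast (algebraMap ℚ ↥L), map_ratCast f0]
  have habs1 : (1:ℝ) ≤ ‖(((Algebra.norm ℚ AL.det : ℚ)) : ℂ)‖ := by
    rw [← hm, eq_intCast (algebraMap ℤ ℚ)]
    rw [show ((((m : ℚ)) : ℂ)) = ((m : ℤ) : ℂ) by push_cast; ring]
    rw [Complex.norm_intCast]
    have := Int.one_le_abs hm0
    exact_mod_cast this
  set B := C * (K.card : ℝ) with hBdef
  have hB0 : 0 ≤ B := mul_nonneg hC.le (Nat.cast_nonneg _)
  have hcard : Fintype.card ({a // a ∈ F} × Fin d) = F.card * d := by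
    simp
  have hsig : ∀ σ : ↥L ≃ₐ[ℚ] ↥L, ‖f0 (σ AL.det)‖ ≤ B ^ (F.card * d) := by
    intro σ
    have hmap : grpCompression (fun s => (g s).map (fun a : L => ((σ a : L) : ℂ))) F
        = AL.map (fun a => f0 (σ a)) := rfl
    have hdets : (AL.map (fun a => f0 (σ a))).det = f0 (σ AL.det) := by
      rw [show (fun a : ↥L => f0 (σ a)) = ⇑(f0.comp σ.toAlgHom.toRingHom) from rfl,
        ← RingHom.mapMatrix_apply, ← RingHom.map_det]
      rfl
    have hsupp : ∀ s, s ∉ K → ((g s).map (fun a : L => ((σ a : L) : ℂ))) = 0 := by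
      intro s hs
      have hg : g s = 0 := by
        by_contra hne
        exact hs ((hK s).mpr hne)
      rw [hg]
      ext i j
      simp [Matrix.map_apply]
    have hmv := compression_mulVec_bound (fun s => (g s).map (fun a : L => ((σ a : L) : ℂ)))
      K hsupp C hC.le (fun s hs v => hCbound s hs σ v) F
    have hfin := abs_det_le_of_mulVec_bound
      (grpCompression (fun s => (g s).map (fun a : L => ((σ a : L) : ℂ))) F) B hB0
      (fun v => hmv v)
    rw [hmap, hdets, hcard] at hfin
    exact hfin
  have h1 : (1:ℝ) ≤ ∏ σ : ↥L ≃ₐ[ℚ] ↥L, ‖f0 (σ AL.det)‖ := by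
    have hmp := norm_prod Finset.univ (fun σ : ↥L ≃ₐ[ℚ] ↥L => f0 (σ AL.det))
    rw [← hmp, hprodC]
    exact habs1
  have hsplit : ‖f0 AL.det‖ *
      ∏ σ ∈ Finset.univ.erase (1 : ↥L ≃ₐ[ℚ] ↥L), ‖f0 (σ AL.det)‖
      = ∏ σ : ↥L ≃ₐ[ℚ] ↥L, ‖f0 (σ AL.det)‖ := by
    have := Finset.mul_prod_erase Finset.univ
      (fun σ : ↥L ≃ₐ[ℚ] ↥L => ‖f0 (σ AL.det)‖) (Finset.mem_univ 1)
    simpa using this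
  have hrest : ∏ σ ∈ Finset.univ.erase (1 : ↥L ≃ₐ[ℚ] ↥L), ‖f0 (σ AL.det)‖
      ≤ B ^ ((F.card * d) * (Fintype.card (↥L ≃ₐ[ℚ] ↥L) - 1)) := by
    calc ∏ σ ∈ Finset.univ.erase (1 : ↥L ≃ₐ[ℚ] ↥L), ‖f0 (σ AL.det)‖
        ≤ ∏ _σ ∈ Finset.univ.erase (1 : ↥L ≃ₐ[ℚ] ↥L), B ^ (F.card * d) :=
          Finset.prod_le_prod (fun σ _ => norm_nonneg _) (fun σ _ => hsig σ)
      _ = B ^ ((F.card * d) * (Fintype.card (↥L ≃ₐ[ℚ] ↥L) - 1)) := by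
          rw [Finset.prod_const, Finset.card_erase_of_mem (Finset.mem_univ _),
            Finset.card_univ, ← pow_mul]
  have hre : 0 < (f0 AL.det).re := by simpa using (Complex.lt_def.mp hz).1
  have him : (f0 AL.det).im = 0 := by simpa using (Complex.lt_def.mp hz).2.symm
  set r := (f0 AL.det).re with hrdef
  have hxeq : f0 AL.det = (r : ℂ) := Complex.ext rfl (by simp [him])
  have habsx : ‖f0 AL.det‖ = r := by
    rw [hxeq, Complex.norm_real, Real.norm_eq_abs]
    exact abs_of_pos hre
  have hK0 : (0:ℝ) < (K.card : ℝ) := by exact_mod_cast hKne.card_pos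
  have hBpos : 0 < B := mul_pos hC hK0
  have hP0 : 0 < B ^ ((F.card * d) * (Fintype.card (↥L ≃ₐ[ℚ] ↥L) - 1)) := pow_pos hBpos _
  have hmain : 1 ≤ r * B ^ ((F.card * d) * (Fintype.card (↥L ≃ₐ[ℚ] ↥L) - 1)) := by
    calc (1:ℝ) ≤ ∏ σ : ↥L ≃ₐ[ℚ] ↥L, ‖f0 (σ AL.det)‖ := h1
      _ = ‖f0 AL.det‖ *
          ∏ σ ∈ Finset.univ.erase (1 : ↥L ≃ₐ[ℚ] ↥L), ‖f0 (σ AL.det)‖ :=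
            hsplit.symm
      _ ≤ r * B ^ ((F.card * d) * (Fintype.card (↥L ≃ₐ[ℚ] ↥L) - 1)) := by
          rw [habsx]
          exact mul_le_mul_of_nonneg_left hrest hre.le
  have hfin : (B ^ ((F.card * d) * (Fintype.card (↥L ≃ₐ[ℚ] ↥L) - 1)))⁻¹ ≤ r := by
    rw [inv_eq_one_div, div_le_iff₀ hP0]
    exact hmain
  rw [hdet0, hxeq]
  have hexp : (B ^ (-((d * F.card * (Nat.card (↥L ≃ₐ[ℚ] ↥L) - 1) : ℕ) : ℤ)) : ℝ)
      = (B ^ ((F.card * d) * (Fintype.card (↥L ≃ₐ[ℚ] ↥L) - 1)))⁻¹ := by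
    rw [_root_.zpow_neg, zpow_natCast]
    congr 1
    rw [Nat.card_eq_fintype_card]
    ring
  rw [hexp]
  exact Complex.real_le_real.mpr hfin
end

section
/- Let ι be a nonempty finite type with n = |ι| elements, and let T : ℝ^ι → ℝ^ι be an injective, positive semidefinite self-adjoint linear map (with respect to the standard inner product). Let 0 < κ ≤ 1/2 and let D_κ denote the product of the eigenvalues of T lying in the interval (0, κ], counted with multiplicity (D_κ := 1 if there are none). Then every subset W ⊆ {x ∈ ℝ^ι : ‖Tx‖₂ ≤ (κ/4)·n^{1/2}} satisfying ‖x − y‖₂ > n^{1/2} for all distinct x, y ∈ W is finite and has cardinality at most 1/D_κ. -/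
open Matrix MeasureTheory Metric ENNReal

lemma packing_aux {m : Type*} [Fintype m] [DecidableEq m]
    (lam : m → ℝ) (κ r : ℝ) (hpos : ∀ j, 0 < lam j) (hκ0 : 0 < κ) (hκ : κ ≤ 1/2)
    (hle : ∀ j, lam j ≤ κ) (hr : 0 < r)
    (F : Finset (EuclideanSpace ℝ m))
    (hball : ∀ q ∈ F, Real.sqrt (∑ j, (lam j * q j)^2) ≤ κ * r)
    (hsep : ∀ q ∈ F, ∀ q' ∈ F, q ≠ q' → 2*r < dist q q') :
    (F.card : ℝ) * ∏ j, lam j ≤ 1 := by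
  cases isEmpty_or_nonempty m with
  | inl h =>
    have hcard : F.card ≤ 1 :=
      Finset.card_le_one.2 fun a _ b _ => Subsingleton.elim a b
    have h1 : ∏ j, lam j = 1 := by simp
    rw [h1, mul_one]
    exact_mod_cast hcard
  | inr h =>
    haveI : Nontrivial (EuclideanSpace ℝ m) := by infer_instance
    set d := Module.finrank ℝ (EuclideanSpace ℝ m) with hd
    set L : EuclideanSpace ℝ m →ₗ[ℝ] EuclideanSpace ℝ m :=
      Matrix.toEuclideanLin (Matrix.diagonal lam) with hLdef
    set P := ∏ j, lam j with hP
    have hPpos : 0 < P := Finset.prod_pos fun j _ => hpos j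
    have hLapp : ∀ (v : EuclideanSpace ℝ m) (j : m), L v j = lam j * v j := by
      intro v j
      show (Matrix.toLin' (Matrix.diagonal lam)) (WithLp.ofLp v) j = _
      rw [Matrix.toLin'_apply, Matrix.mulVec_diagonal]
    have hdet : LinearMap.det L = P := by
      have h1 : LinearMap.det (Matrix.toEuclideanLin (Matrix.diagonal lam)) = (Matrix.diagonal lam).det := by
        rw [Matrix.toEuclideanLin_eq_toLin_orthonormal]; exact LinearMap.det_toLin _ _
      rw [Matrix.det_diagonal] at h1
      exact h1
    have hinjL : Function.Injective L := by
      intro a b hab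
      ext j
      have h1 : lam j * a j = lam j * b j := by
        rw [← hLapp a j, ← hLapp b j, hab]
      exact mul_left_cancel₀ (hpos j).ne' h1
    have hnormL : ∀ v : EuclideanSpace ℝ m, ‖L v‖ ≤ κ * ‖v‖ := by
      intro v
      rw [EuclideanSpace.norm_eq, EuclideanSpace.norm_eq]
      have h1 : ∑ j, ‖L v j‖^2 ≤ κ^2 * ∑ j, ‖v j‖^2 := by
        rw [Finset.mul_sum]
        refine Finset.sum_le_sum fun j _ => ?_
        rw [hLapp v j]
        simp only [Real.norm_eq_abs, mul_pow, sq_abs]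
        have : (lam j)^2 ≤ κ^2 := by
          have := hpos j; have := hle j; nlinarith
        nlinarith [sq_nonneg (v j)]
      calc Real.sqrt (∑ j, ‖L v j‖^2) ≤ Real.sqrt (κ^2 * ∑ j, ‖v j‖^2) :=
            Real.sqrt_le_sqrt h1
        _ = κ * Real.sqrt (∑ j, ‖v j‖^2) := by
            rw [Real.sqrt_mul (sq_nonneg κ), Real.sqrt_sq hκ0.le]
    have hnormLq : ∀ q ∈ F, ‖L q‖ ≤ κ * r := by
      intro q hq
      have h1 := hball q hq
      have h2 : ‖L q‖ = Real.sqrt (∑ j, (lam j * q j)^2) := by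
        rw [EuclideanSpace.norm_eq]
        congr 1
        refine Finset.sum_congr rfl fun j _ => ?_
        rw [hLapp q j]
        simp [Real.norm_eq_abs, mul_pow, sq_abs]
      rw [h2]; exact h1
    have hdisj : (F : Set (EuclideanSpace ℝ m)).PairwiseDisjoint (fun q => ⇑L '' ball q r) := by
      intro q hq q' hq' hne
      refine Set.disjoint_image_of_injective hinjL ?_
      refine ball_disjoint_ball ?_
      have := hsep q hq q' hq' hne
      linarith
    have hmeas : ∀ q : EuclideanSpace ℝ m, MeasurableSet (⇑L '' ball q r) := by
      intro q
      set Linv : EuclideanSpace ℝ m →ₗ[ℝ] EuclideanSpace ℝ m :=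
        Matrix.toEuclideanLin (Matrix.diagonal fun j => (lam j)⁻¹) with hLinv
      have hLinvapp : ∀ (v : EuclideanSpace ℝ m) (j : m), Linv v j = (lam j)⁻¹ * v j := by
        intro v j
        show (Matrix.toLin' (Matrix.diagonal fun j => (lam j)⁻¹)) (WithLp.ofLp v) j = _
        rw [Matrix.toLin'_apply, Matrix.mulVec_diagonal]
      have himg : ⇑L '' ball q r = ⇑Linv ⁻¹' ball q r := by
        ext z
        constructor
        · rintro ⟨v, hv, rfl⟩
          have hvv : Linv (L v) = v := by
            ext j
            rw [hLinvapp, hLapp]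
            field_simp [(hpos j).ne']
          simpa [Set.mem_preimage, hvv] using hv
        · intro hz
          refine ⟨Linv z, hz, ?_⟩
          ext j
          rw [hLapp, hLinvapp]
          field_simp [(hpos j).ne']
      rw [himg]
      exact (LinearMap.continuous_of_finiteDimensional Linv).measurable measurableSet_ball
    have hsub : ∀ q ∈ F, ⇑L '' ball q r ⊆ ball (0 : EuclideanSpace ℝ m) (2*κ*r) := by
      intro q hq z hz
      obtain ⟨v, hv, rfl⟩ := hz
      rw [mem_ball, dist_zero_right]
      have h1 : ‖L v - L q‖ ≤ κ * ‖v - q‖ := by rw [← map_sub]; exact hnormL _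
      have h2 : ‖v - q‖ < r := by rw [← dist_eq_norm]; exact hv
      have h3 : ‖L v‖ ≤ ‖L v - L q‖ + ‖L q‖ := by
        have := norm_add_le (L v - L q) (L q)
        rwa [sub_add_cancel] at this
      have h4 := hnormLq q hq
      nlinarith
    have hvol : ∀ q : EuclideanSpace ℝ m, volume (⇑L '' ball q r)
        = ENNReal.ofReal (P * r ^ d) * volume (ball (0 : EuclideanSpace ℝ m) 1) := by
      intro q
      rw [Measure.addHaar_image_linearMap, hdet, Measure.addHaar_ball volume q hr.le,
        abs_of_pos hPpos, ← mul_assoc, ← ENNReal.ofReal_mul hPpos.le]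
    have hunion : ∑ q ∈ F, volume (⇑L '' ball q r) = volume (⋃ q ∈ F, ⇑L '' ball q r) :=
      (measure_biUnion_finset hdisj fun q _ => hmeas q).symm
    have hle2 : ∑ q ∈ F, volume (⇑L '' ball q r)
        ≤ volume (ball (0 : EuclideanSpace ℝ m) (2*κ*r)) := by
      rw [hunion]
      exact measure_mono (Set.iUnion₂_subset hsub)
    rw [Finset.sum_congr rfl fun q _ => hvol q, Finset.sum_const,
      Measure.addHaar_ball volume (0 : EuclideanSpace ℝ m) (by positivity : (0:ℝ) ≤ 2*κ*r),
      nsmul_eq_mul, ← mul_assoc] at hle2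
    set B1 := volume (ball (0 : EuclideanSpace ℝ m) 1) with hB1
    have hB1ne : B1 ≠ 0 := (measure_ball_pos volume 0 one_pos).ne'
    have hB1top : B1 ≠ ⊤ := measure_ball_lt_top.ne
    have hle3 : (F.card : ℝ≥0∞) * ENNReal.ofReal (P * r ^ d) ≤ ENNReal.ofReal ((2*κ*r) ^ d) :=
      (ENNReal.mul_le_mul_iff_left hB1ne hB1top).1 hle2
    have hle4 : (F.card : ℝ) * (P * r ^ d) ≤ (2*κ*r) ^ d := by
      rw [← ENNReal.ofReal_natCast, ← ENNReal.ofReal_mul (by positivity)] at hle3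
      exact (ENNReal.ofReal_le_ofReal_iff (by positivity)).1 hle3
    have h2κ : (2*κ*r)^d = (2*κ)^d * r^d := by rw [← mul_pow]
    have h2κ1 : (2*κ)^d ≤ 1 := pow_le_one₀ (by linarith) (by linarith)
    have hrd : (0:ℝ) < r ^ d := pow_pos hr d
    nlinarith [hrd, hle4, h2κ1]



/-- **Volume counting bound (Lemma 4.7).**
Let `ι` be a nonempty finite type with `n = |ι|` elements and `T` an injective positive
semidefinite self-adjoint operator on `ℝ^ι` (given as a matrix acting by `mulVec`).  For
`0 < κ ≤ 1/2`, let `D_κ` be the product of the eigenvalues of `T` in `(0, κ]` counted with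
multiplicity.  Then any subset `W` of `{x : ‖Tx‖₂ ≤ (κ/4)·n^{1/2}}` whose points are
pairwise at Euclidean distance `> n^{1/2}` is finite of cardinality at most `1/D_κ`. -/
theorem card_separated_le_inv_prod_small_eigenvalues
    {ι : Type*} [Fintype ι] [DecidableEq ι] [Nonempty ι]
    (T : Matrix ι ι ℝ) (hT : T.PosSemidef) (hinj : Function.Injective T.mulVec)
    (κ : ℝ) (hκ0 : 0 < κ) (hκ : κ ≤ 1 / 2)
    (W : Set (ι → ℝ))
    (hW : W ⊆ {x : ι → ℝ |
      Real.sqrt (∑ i : ι, (T.mulVec x i) ^ 2) ≤ κ / 4 * Real.sqrt (Fintype.card ι)})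
    (hsep : ∀ x ∈ W, ∀ y ∈ W, x ≠ y →
      Real.sqrt (Fintype.card ι) < Real.sqrt (∑ i : ι, (x i - y i) ^ 2)) :
    W.Finite ∧ (W.ncard : ℝ) ≤
      1 / ∏ i ∈ Finset.univ.filter (fun i => hT.1.eigenvalues i ∈ Set.Ioc 0 κ),
            hT.1.eigenvalues i := by
  set lam := hT.1.eigenvalues with hlam
  set u := hT.1.eigenvectorBasis with hu
  set n := (Fintype.card ι : ℝ) with hn
  have hn1 : 1 ≤ n := by
    rw [hn]; exact_mod_cast Fintype.card_pos (α := ι)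
  have hsn : 0 < Real.sqrt n := Real.sqrt_pos.2 (by linarith)
  set X : (ι → ℝ) ≃ₗ[ℝ] EuclideanSpace ℝ ι := (WithLp.linearEquiv 2 ℝ (ι → ℝ)).symm with hX
  have hXapp : ∀ (y : ι → ℝ) (i : ι), X y i = y i := fun y i => rfl
  set c : (ι → ℝ) → EuclideanSpace ℝ ι := fun x => u.repr (X x) with hc
  -- eigenvector equation
  have heig : ∀ i, T *ᵥ (WithLp.equiv 2 (ι → ℝ)) (u i)
      = lam i • (WithLp.equiv 2 (ι → ℝ)) (u i) := hT.1.mulVec_eigenvectorBasis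
  -- eigenvalues positive
  have hpos : ∀ i, 0 < lam i := by
    intro i
    rcases lt_or_eq_of_le (hT.eigenvalues_nonneg i) with h | h
    · exact h
    · exfalso
      have h' : lam i = 0 := h.symm
      have h0 : T *ᵥ (WithLp.equiv 2 (ι → ℝ)) (u i) = T *ᵥ (0 : ι → ℝ) := by
        rw [heig i, h', zero_smul, Matrix.mulVec_zero]
      have h1 := hinj h0
      have h2 : u i = 0 := (WithLp.equiv 2 (ι → ℝ)).injective (h1.trans rfl)
      have h3 : ‖u i‖ = 1 := u.orthonormal.1 i
      rw [h2, norm_zero] at h3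
      norm_num at h3
  -- sums of squares as norms
  have hnX : ∀ z : ι → ℝ, Real.sqrt (∑ i, (z i)^2) = ‖X z‖ := by
    intro z
    rw [EuclideanSpace.norm_eq]
    congr 1
    refine Finset.sum_congr rfl fun i _ => ?_
    rw [hXapp, Real.norm_eq_abs, sq_abs]
  have normsq : ∀ z : EuclideanSpace ℝ ι, ∑ i, (z i)^2 = ‖z‖^2 := by
    intro z
    rw [EuclideanSpace.norm_eq, Real.sq_sqrt (by positivity)]
    exact Finset.sum_congr rfl fun i _ => by rw [Real.norm_eq_abs, sq_abs]
  -- Parseval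
  have factA : ∀ y : ι → ℝ, ∑ i, (c y i)^2 = ∑ i, (y i)^2 := by
    intro y
    have h1 : ‖c y‖ = ‖X y‖ := u.repr.norm_map (X y)
    rw [normsq (c y), h1, ← normsq (X y)]
    exact Finset.sum_congr rfl fun i _ => by rw [hXapp]
  -- symmetry of T
  have hsymT : Tᵀ = T := by
    ext a b
    have h := congrFun (congrFun hT.1 a) b
    simpa [Matrix.conjTranspose_apply] using h
  -- coordinates of T x
  have factB : ∀ (x : ι → ℝ) (i : ι), c (T *ᵥ x) i = lam i * c x i := by
    intro x i
    simp only [hc, OrthonormalBasis.repr_apply_apply, PiLp.inner_apply, RCLike.inner_apply,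
      conj_trivial]
    show (T *ᵥ x) ⬝ᵥ (WithLp.equiv 2 (ι → ℝ)) (u i)
      = lam i * (x ⬝ᵥ (WithLp.equiv 2 (ι → ℝ)) (u i))
    rw [dotProduct_comm (T *ᵥ x), Matrix.dotProduct_mulVec, ← Matrix.mulVec_transpose, hsymT, heig i,
      smul_dotProduct, smul_eq_mul, dotProduct_comm x]
  -- sum formula for ‖Tx‖²
  have factC : ∀ x : ι → ℝ, ∑ i, (T *ᵥ x) i ^ 2 = ∑ i, (lam i * c x i)^2 := by
    intro x
    rw [← factA (T *ᵥ x)]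
    exact Finset.sum_congr rfl fun i _ => by rw [factB]
  -- the small-eigenvalue index set
  set s := Finset.univ.filter (fun i => lam i ∈ Set.Ioc 0 κ) with hs
  have hmem : ∀ i, i ∈ s ↔ lam i ≤ κ := by
    intro i
    simp only [hs, Finset.mem_filter, Finset.mem_univ, true_and, Set.mem_Ioc]
    exact ⟨fun h => h.2, fun h => ⟨hpos i, h⟩⟩
  set D := ∏ i ∈ s, lam i with hD
  have hDpos : 0 < D := Finset.prod_pos fun i _ => hpos i
  -- the projection map
  set Φ : (ι → ℝ) → EuclideanSpace ℝ ↥s :=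
    fun x => (WithLp.equiv 2 (↥s → ℝ)).symm (fun j => c x (j : ι)) with hΦ
  have hΦapp : ∀ (x : ι → ℝ) (j : ↥s), Φ x j = c x (j : ι) := fun x j => rfl
  -- bound on ‖Tx‖ for x ∈ W, in coordinate form
  have hWsq : ∀ x ∈ W, ∑ i, (lam i * c x i)^2 ≤ (κ/4 * Real.sqrt n)^2 := by
    intro x hx
    have h1 := hW hx
    rw [Set.mem_setOf_eq] at h1
    have h2 : ∑ i, (T *ᵥ x) i ^ 2 ≤ (κ/4 * Real.sqrt n)^2 := by
      have h3 : (0:ℝ) ≤ ∑ i, (T *ᵥ x) i ^ 2 := by positivity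
      have h4 := Real.sq_sqrt h3
      nlinarith [Real.sqrt_nonneg (∑ i, (T *ᵥ x) i ^ 2)]
    rw [← factC]; exact h2
  -- packing hypothesis : ball condition
  have hball : ∀ x ∈ W, Real.sqrt (∑ j : ↥s, (lam j * Φ x j)^2) ≤ κ * (Real.sqrt n / 4) := by
    intro x hx
    have h1 : ∑ j : ↥s, (lam (j:ι) * Φ x j)^2 = ∑ i ∈ s, (lam i * c x i)^2 := by
      rw [← Finset.sum_coe_sort s (fun i => (lam i * c x i)^2)]
      exact Finset.sum_congr rfl fun j _ => by rw [hΦapp]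
    have h2 : ∑ i ∈ s, (lam i * c x i)^2 ≤ ∑ i, (lam i * c x i)^2 :=
      Finset.sum_le_sum_of_subset_of_nonneg (Finset.subset_univ s)
        (fun i _ _ => sq_nonneg _)
    have h3 := hWsq x hx
    have h4 : Real.sqrt (∑ j : ↥s, (lam (j:ι) * Φ x j)^2) ≤ κ/4 * Real.sqrt n := by
      rw [h1]
      calc Real.sqrt (∑ i ∈ s, (lam i * c x i)^2)
          ≤ Real.sqrt ((κ/4 * Real.sqrt n)^2) := Real.sqrt_le_sqrt (by linarith)
        _ = κ/4 * Real.sqrt n := Real.sqrt_sq (by positivity)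
    calc Real.sqrt (∑ j : ↥s, (lam (j:ι) * Φ x j)^2) ≤ κ/4 * Real.sqrt n := h4
      _ = κ * (Real.sqrt n / 4) := by ring
  -- separation of projections
  have hsepΦ : ∀ x ∈ W, ∀ y ∈ W, x ≠ y →
      2 * (Real.sqrt n / 4) < dist (Φ x) (Φ y) := by
    intro x hx y hy hxy
    set w := x - y with hw
    -- total coordinate mass is > n
    have htot : n < ∑ i, (c w i)^2 := by
      rw [factA w]
      have h1 := hsep x hx y hy hxy
      have h2 : ∑ i, (x i - y i)^2 = ∑ i, (w i)^2 :=
        Finset.sum_congr rfl fun i _ => by rw [hw]; simp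
      rw [h2] at h1
      have h3 : (0:ℝ) ≤ ∑ i, (w i)^2 := by positivity
      nlinarith [Real.sq_sqrt h3, Real.sq_sqrt (le_trans zero_le_one hn1), Real.sqrt_nonneg n,
        Real.sqrt_nonneg (∑ i, (w i)^2)]
    -- ‖T w‖² ≤ κ²n/4
    have hTw : ∑ i, (lam i * c w i)^2 ≤ κ^2 * n / 4 := by
      have h1 : Real.sqrt (∑ i, (T *ᵥ w) i ^ 2) ≤ κ/4 * Real.sqrt n + κ/4 * Real.sqrt n := by
        have hx' := hW hx; have hy' := hW hy
        rw [Set.mem_setOf_eq] at hx' hy'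
        have h2 : X (T *ᵥ w) = X (T *ᵥ x) - X (T *ᵥ y) := by
          rw [hw, Matrix.mulVec_sub, map_sub]
        calc Real.sqrt (∑ i, (T *ᵥ w) i ^ 2) = ‖X (T *ᵥ w)‖ := hnX _
          _ ≤ ‖X (T *ᵥ x)‖ + ‖X (T *ᵥ y)‖ := by rw [h2]; exact norm_sub_le _ _
          _ ≤ κ/4 * Real.sqrt n + κ/4 * Real.sqrt n := by
              rw [← hnX, ← hnX]; exact add_le_add hx' hy'
      have h3 : (0:ℝ) ≤ ∑ i, (T *ᵥ w) i ^ 2 := by positivity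
      have h4 := mul_self_le_mul_self (Real.sqrt_nonneg (∑ i, (T *ᵥ w) i ^ 2)) h1
      rw [← factC w]
      nlinarith [Real.sq_sqrt h3, Real.sq_sqrt (show (0:ℝ) ≤ n by linarith), hsn.le]
    -- mass outside s is ≤ n/4
    have hout : ∑ i ∈ Finset.univ.filter (fun i => ¬ (lam i ∈ Set.Ioc 0 κ)), (c w i)^2
        ≤ n/4 := by
      have h1 : κ^2 * ∑ i ∈ Finset.univ.filter (fun i => ¬ (lam i ∈ Set.Ioc 0 κ)), (c w i)^2
          ≤ ∑ i ∈ Finset.univ.filter (fun i => ¬ (lam i ∈ Set.Ioc 0 κ)), (lam i * c w i)^2 := by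
        rw [Finset.mul_sum]
        refine Finset.sum_le_sum fun i hi => ?_
        have hi' : ¬ lam i ∈ Set.Ioc 0 κ := (Finset.mem_filter.1 hi).2
        have hκlt : κ < lam i := by
          by_contra hcon
          exact hi' ⟨hpos i, le_of_not_gt hcon⟩
        rw [mul_pow]
        have hsq' : κ^2 ≤ lam i ^2 := by nlinarith
        exact mul_le_mul_of_nonneg_right hsq' (sq_nonneg _)
      have h2 : ∑ i ∈ Finset.univ.filter (fun i => ¬ (lam i ∈ Set.Ioc 0 κ)), (lam i * c w i)^2
          ≤ ∑ i, (lam i * c w i)^2 :=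
        Finset.sum_le_sum_of_subset_of_nonneg (Finset.filter_subset _ _)
          fun i _ _ => sq_nonneg _
      have hκ2 : (0:ℝ) < κ^2 := by positivity
      have h3 : κ^2 * n / 4 = κ^2 * (n/4) := by ring
      have h4 : κ^2 * (∑ i ∈ Finset.univ.filter (fun i => ¬ (lam i ∈ Set.Ioc 0 κ)), (c w i)^2)
          ≤ κ^2 * (n/4) := by linarith
      exact (mul_le_mul_iff_right₀ hκ2).1 h4
    -- mass inside s is > n/4
    have hins : n / 4 < ∑ i ∈ s, (c w i)^2 := by
      have h1 := Finset.sum_filter_add_sum_filter_not Finset.univ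
        (fun i => lam i ∈ Set.Ioc 0 κ) (fun i => (c w i)^2)
      rw [hs]
      linarith
    -- distance formula
    have hcw : ∀ j : ι, c x j - c y j = c w j := by
      intro j
      have h1 : c w = c x - c y := by rw [hw, hc]; simp only [map_sub]
      rw [h1]
      rfl
    have hdist : dist (Φ x) (Φ y) = Real.sqrt (∑ j : ↥s, (c w (j:ι))^2) := by
      rw [EuclideanSpace.dist_eq]
      congr 1
      refine Finset.sum_congr rfl fun j _ => ?_
      rw [hΦapp, hΦapp, Real.dist_eq, sq_abs, hcw]
    rw [hdist, Finset.sum_coe_sort s (fun i => (c w i)^2)]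
    have h2r : 2 * (Real.sqrt n / 4) = Real.sqrt n / 2 := by ring
    rw [h2r]
    refine (Real.lt_sqrt (by positivity)).2 ?_
    have hsq : (Real.sqrt n / 2)^2 = n / 4 := by
      rw [div_pow, Real.sq_sqrt (by linarith)]; norm_num
    rw [hsq]
    exact hins
  -- the finset bound
  haveI : DecidableEq (EuclideanSpace ℝ ↥s) := Classical.decEq _
  have key : ∀ F : Finset (ι → ℝ), ↑F ⊆ W → (F.card : ℝ) * D ≤ 1 := by
    intro F hF
    have hinjΦ : Set.InjOn Φ F := by
      intro a ha b hb hab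
      by_contra hne
      have h1 := hsepΦ a (hF ha) b (hF hb) hne
      rw [hab, dist_self] at h1
      nlinarith
    have hcard : (F.image Φ).card = F.card := Finset.card_image_of_injOn hinjΦ
    have hprod : ∏ j : ↥s, lam (j:ι) = D := Finset.prod_coe_sort s lam
    have hball' : ∀ q ∈ F.image Φ, Real.sqrt (∑ j : ↥s, (lam (j:ι) * q j)^2)
        ≤ κ * (Real.sqrt n / 4) := by
      intro q hq
      obtain ⟨x, hxF, rfl⟩ := Finset.mem_image.1 hq
      exact hball x (hF hxF)
    have hsep' : ∀ q ∈ F.image Φ, ∀ q' ∈ F.image Φ, q ≠ q' →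
        2 * (Real.sqrt n / 4) < dist q q' := by
      intro q hq q' hq' hne
      obtain ⟨x, hxF, rfl⟩ := Finset.mem_image.1 hq
      obtain ⟨y, hyF, rfl⟩ := Finset.mem_image.1 hq'
      have hxy : x ≠ y := fun h => hne (by rw [h])
      exact hsepΦ x (hF hxF) y (hF hyF) hxy
    have hpack := packing_aux (fun j : ↥s => lam (j:ι)) κ (Real.sqrt n / 4)
      (fun j => hpos j) hκ0 hκ (fun j => (hmem j).1 j.2) (by positivity)
      (F.image Φ) hball' hsep'
    rw [hcard] at hpack
    calc (F.card : ℝ) * D = (F.card : ℝ) * ∏ j : ↥s, lam (j:ι) := by rw [hprod]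
      _ ≤ 1 := hpack
  have hbound : ∀ F : Finset (ι → ℝ), ↑F ⊆ W → (F.card : ℝ) ≤ 1 / D := by
    intro F hF
    rw [le_div_iff₀ hDpos]
    exact key F hF
  have hfin : W.Finite := by
    by_contra hinf
    have hinf' : W.Infinite := hinf
    obtain ⟨F, hF, hFcard⟩ := hinf'.exists_subset_card_eq (Nat.ceil (1/D) + 1)
    have h1 := hbound F hF
    rw [hFcard] at h1
    have h2 := Nat.le_ceil (1/D)
    push_cast at h1
    linarith
  refine ⟨hfin, ?_⟩
  rw [Set.ncard_eq_toFinset_card W hfin]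
  exact hbound hfin.toFinset (by rw [Set.Finite.coe_toFinset])
end

section
/- Let Γ be a countable discrete group, d ≥ 1, and f ∈ M_d(ℤΓ) with f = f* such that for every nonempty finite subset F' ⊆ Γ the compression f_{F'} is positive definite. Let J ⊆ (ℤΓ)^{1×d} be the set of rows of f and set ε = 1/(2‖f‖₁). Then for every nonempty finite subset F ⊆ Γ one has N_ε(X_{J,F}, ϑ_{F,∞}) ≥ det(f_F). -/
open Matrix
open scoped ComplexOrder

/-- The supremum of cardinalities of subsets of `Z` that are pairwise `sep`-separated. -/
noncomputable def sepCount {P : Type*} (Z : Set P) (sep : P → P → Prop) : ℕ :=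
  sSup {n : ℕ | ∃ W : Finset P, ↑W ⊆ Z ∧ (∀ x ∈ W, ∀ y ∈ W, x ≠ y → sep x y) ∧ W.card = n}

/-- The compression `f_F` of `f = Σ_s f_s s ∈ M_d(ℤΓ)`: the complex matrix indexed by
`F × {1,…,d}` with entries `f_F((s,i),(t,j)) = (f_{s t⁻¹})_{i,j}`. -/
def intCompression {Γ : Type*} [Group Γ] {d : ℕ} (f : Γ → Matrix (Fin d) (Fin d) ℤ)
    (F : Finset Γ) :
    Matrix ({a // a ∈ F} × Fin d) ({a // a ∈ F} × Fin d) ℂ :=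
  Matrix.of fun p q => ((f (p.1.1 * q.1.1⁻¹) p.2 q.2 : ℤ) : ℂ)

/-- `X_{J,F}` for `J` the set of rows of `f`: the set of `x ∈ ((ℝ/ℤ)^d)^Γ` with
`(f' x)_t = 0` for every row `f'` of `f` and every `t ∈ F`. -/
def XrowsF {Γ : Type*} [Group Γ] {d : ℕ} (f : Γ → Matrix (Fin d) (Fin d) ℤ) (F : Finset Γ) :
    Set (Γ → Fin d → AddCircle (1 : ℝ)) :=
  {x | ∀ i : Fin d, ∀ t ∈ F, ∑ᶠ s : Γ, ∑ j : Fin d, f s i j • x (s⁻¹ * t) j = 0}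

/-- `ϑ_{F,∞}(x,y) > ε`. -/
def thetaInfSep {Γ : Type*} [Group Γ] {d : ℕ} (ε : ℝ) (F : Finset Γ)
    (x y : Γ → Fin d → AddCircle (1 : ℝ)) : Prop :=
  ∃ s ∈ F, ∃ j : Fin d, ε < dist (x s j) (y s j)

/-- The index of the sublattice `A ℤ^ι ≤ ℤ^ι` is `|det A|`, when `det A ≠ 0`. -/
lemma natAbs_det_eq_index {ι : Type*} [Fintype ι] [DecidableEq ι]
    (A : Matrix ι ι ℤ) (hA : A.det ≠ 0) :
    (LinearMap.range A.mulVecLin).toAddSubgroup.index = A.det.natAbs := by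
  classical
  have hinj : Function.Injective A.mulVecLin := by
    rw [← LinearMap.ker_eq_bot]
    refine LinearMap.ker_eq_bot'.mpr fun v hv => ?_
    exact Matrix.eq_zero_of_mulVec_eq_zero hA hv
  set N : Submodule ℤ (ι → ℤ) := LinearMap.range A.mulVecLin with hN
  let e : (ι → ℤ) ≃ₗ[ℤ] N := LinearEquiv.ofInjective A.mulVecLin hinj
  have hidx : N.toAddSubgroup.index ≠ 0 :=
    Int.submodule_toAddSubgroup_index_ne_zero_iff.mpr ⟨e.symm⟩
  obtain ⟨n, snf⟩ := N.smithNormalForm (Pi.basisFun ℤ ι)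
  have hn : n = Fintype.card ι := snf.toAddSubgroup_index_ne_zero_iff.mp hidx
  -- index = ∏ |a i|
  have hindex : N.toAddSubgroup.index = ∏ i : Fin n, (snf.a i).natAbs := by
    have h0 : Fintype.card ι - n = 0 := by omega
    rw [snf.toAddSubgroup_index_eq_pow_mul_prod, h0, pow_zero, one_mul]
    refine Finset.prod_congr rfl fun i _ => ?_
    rw [Ideal.span_singleton_toAddSubgroup_eq_zmultiples, Int.index_zmultiples]
  -- determinant side
  let eIdx : Fin n ≃ ι := (Fintype.equivFinOfCardEq hn.symm).symm
  let e2 : (ι → ℤ) ≃ₗ[ℤ] N := snf.bM.equiv (snf.bN.reindex eIdx) (Equiv.refl ι)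
  let g2 : (ι → ℤ) →ₗ[ℤ] (ι → ℤ) := N.subtype.comp (e2 : (ι → ℤ) →ₗ[ℤ] N)
  let u : (ι → ℤ) ≃ₗ[ℤ] (ι → ℤ) := e.trans e2.symm
  have hAg : A.mulVecLin = g2.comp (u : (ι → ℤ) →ₗ[ℤ] (ι → ℤ)) := by
    refine LinearMap.ext fun v => ?_
    show A.mulVecLin v = (e2 (e2.symm (e v)) : ι → ℤ)
    rw [LinearEquiv.apply_symm_apply]
    rfl
  have hdetu : (LinearMap.det (u : (ι → ℤ) →ₗ[ℤ] (ι → ℤ))).natAbs = 1 := by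
    rcases Int.isUnit_iff.mp u.isUnit_det' with h | h <;> rw [h] <;> rfl
  have hdetA : A.det.natAbs = (LinearMap.det g2).natAbs := by
    have : A.det = LinearMap.det A.mulVecLin := by
      rw [← Matrix.toLin'_apply', LinearMap.det_toLin']
    rw [this, hAg, LinearMap.det_comp, Int.natAbs_mul, hdetu, mul_one]
  -- compute det g2 via the matrix in basis snf.bM
  let φ : ι → ι := fun j => snf.f (eIdx.symm j)
  have hφinj : Function.Injective φ := fun a b hab => by
    simpa using snf.f.injective hab
  let τ : Equiv.Perm ι := Equiv.ofBijective φ (Finite.injective_iff_bijective.mp hφinj)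
  have hg2b : ∀ j : ι, g2 (snf.bM j) = snf.a (eIdx.symm j) • snf.bM (φ j) := by
    intro j
    show ((snf.bM.equiv (snf.bN.reindex eIdx) (Equiv.refl ι)) (snf.bM j) : ι → ℤ) = _
    rw [Module.Basis.equiv_apply]
    simp [snf.snf, φ]
  have hmat : LinearMap.toMatrix snf.bM snf.bM g2 =
      (τ⁻¹.permMatrix ℤ) * Matrix.diagonal (fun j => snf.a (eIdx.symm j)) := by
    ext i j
    rw [LinearMap.toMatrix_apply, hg2b, Matrix.mul_diagonal]
    have h1 : snf.bM.repr (snf.a (eIdx.symm j) • snf.bM (φ j)) i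
        = snf.a (eIdx.symm j) * (if φ j = i then 1 else 0) := by
      rw [LinearEquiv.map_smul]
      simp [Finsupp.single_apply]
    rw [h1]
    have hiff : τ⁻¹ i = j ↔ φ j = i := by
      constructor
      · rintro rfl
        exact Equiv.apply_symm_apply τ i
      · intro h
        rw [← h]
        exact Equiv.symm_apply_apply τ j
    simp only [Equiv.Perm.permMatrix, PEquiv.toMatrix_apply, Equiv.toPEquiv_apply,
      Option.mem_def, Option.some.injEq]
    by_cases h : φ j = i
    · simp [h, hiff.mpr h, mul_comm]
    · rw [if_neg (fun hc => h (hiff.mp hc))]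
      simp [h]
  have hdetg2 : (LinearMap.det g2).natAbs = ∏ i : Fin n, (snf.a i).natAbs := by
    rw [← LinearMap.det_toMatrix snf.bM, hmat, Matrix.det_mul, Matrix.det_permutation,
      Matrix.det_diagonal, Int.natAbs_mul]
    have hprd : (∏ i : ι, snf.a (eIdx.symm i)).natAbs
        = ∏ i : Fin n, (snf.a i).natAbs := by
      calc (∏ i : ι, snf.a (eIdx.symm i)).natAbs
          = ∏ i : ι, (snf.a (eIdx.symm i)).natAbs := map_prod Int.natAbsHom _ _
        _ = _ := Equiv.prod_comp eIdx.symm fun i => (snf.a i).natAbs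
    rcases Int.units_eq_one_or (Equiv.Perm.sign τ⁻¹) with h | h <;>
      rw [h] <;> simpa using hprd
  rw [hindex, hdetA, hdetg2]

set_option maxHeartbeats 1000000 in
/-- **Lemma 4.10 (lower bound for separation numbers of approximate solutions).**
Let `f ∈ M_d(ℤΓ)` be self-adjoint with all compressions positive definite, let `J` be the
set of rows of `f`, and set `ε = 1/(2‖f‖₁)`.  Then for every nonempty finite `F ⊆ Γ` one
has `N_ε(X_{J,F}, ϑ_{F,∞}) ≥ det (f_F)`. -/
theorem det_compression_le_sepCount
    {Γ : Type*} [Group Γ] [Countable Γ] [DecidableEq Γ]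
    (d : ℕ) (hd : 1 ≤ d)
    (f : Γ → Matrix (Fin d) (Fin d) ℤ) (hffin : (Function.support f).Finite)
    (hsa : ∀ s : Γ, f s⁻¹ = (f s)ᵀ)
    (hpos : ∀ F' : Finset Γ, F'.Nonempty → (intCompression f F').PosDef)
    (F : Finset Γ) (hF : F.Nonempty) :
    (intCompression f F).det.re ≤
      ((sepCount (XrowsF f F)
          (thetaInfSep (1 / (2 * ∑ᶠ s : Γ, ∑ i : Fin d, ∑ j : Fin d, (|f s i j| : ℝ))) F)
        : ℕ) : ℝ) := by
  classical
  set L : ℝ := ∑ᶠ s : Γ, ∑ i : Fin d, ∑ j : Fin d, (|f s i j| : ℝ) with hLdef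
  set ε : ℝ := 1 / (2 * L) with hεdef
  haveI : Nonempty {a // a ∈ F} := ⟨⟨hF.choose, hF.choose_spec⟩⟩
  haveI : Nonempty (Fin d) := ⟨⟨0, hd⟩⟩
  set A : Matrix ({a // a ∈ F} × Fin d) ({a // a ∈ F} × Fin d) ℤ :=
    Matrix.of (fun p q => f (p.1.1 * q.1.1⁻¹) p.2 q.2) with hAdef
  have hC : intCompression f F = A.map ((Int.castRingHom ℂ) : ℤ → ℂ) := rfl
  have hdetC : (intCompression f F).det = ((A.det : ℤ) : ℂ) := by
    rw [hC, show A.map ((Int.castRingHom ℂ) : ℤ → ℂ) = (Int.castRingHom ℂ).mapMatrix A from rfl,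
      ← RingHom.map_det]
    rfl
  have hpoz : 0 < A.det := by
    have h := (hpos F hF).det_pos
    rw [hdetC] at h
    have h2 : ((A.det : ℝ) : ℂ) = ((A.det : ℤ) : ℂ) := Complex.ofReal_intCast _
    rw [← h2, Complex.zero_lt_real] at h
    exact_mod_cast h
  have hre : (intCompression f F).det.re = (A.det : ℝ) := by
    rw [hdetC]
    simp
  rw [hre]
  -- the ℓ¹ norm L as a finite sum
  set T : Finset Γ := hffin.toFinset with hTdef
  set hnorm : Γ → ℝ := fun s => ∑ i : Fin d, ∑ j : Fin d, (|f s i j| : ℝ) with hhdef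
  have hnorm0 : ∀ s, 0 ≤ hnorm s := fun s => by positivity
  have hnormz : ∀ s, s ∉ T → hnorm s = 0 := by
    intro s hs
    have : f s = 0 := by simpa [hTdef, Function.mem_support] using hs
    simp [hhdef, this]
  have hLs : L = ∑ s ∈ T, hnorm s := by
    rw [hLdef]
    refine finsum_eq_sum_of_support_subset _ ?_
    intro s hs
    simp only [Function.mem_support] at hs
    by_contra hsT
    exact hs (hnormz s hsT)
  have hL0 : 0 < L := by
    have hAne : ∃ p q, A p q ≠ 0 := by
      by_contra h
      push_neg at h
      have : A = 0 := by ext p q; simp [h p q]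
      rw [this] at hpoz
      simp [Matrix.det_zero] at hpoz
    obtain ⟨p, q, hpq⟩ := hAne
    set s₀ : Γ := p.1.1 * q.1.1⁻¹ with hs₀
    have hf0 : f s₀ p.2 q.2 ≠ 0 := hpq
    have hmem : s₀ ∈ T := by
      simp only [hTdef, Set.Finite.mem_toFinset, Function.mem_support]
      intro h0
      exact hf0 (by rw [h0]; rfl)
    rw [hLs]
    have h1 : (0:ℝ) < hnorm s₀ := by
      have h2 : (0:ℝ) < |((f s₀ p.2 q.2 : ℤ) : ℝ)| := abs_pos.mpr (by exact_mod_cast hf0)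
      calc (0:ℝ) < |((f s₀ p.2 q.2 : ℤ) : ℝ)| := h2
        _ ≤ ∑ j : Fin d, (|f s₀ p.2 j| : ℝ) :=
          Finset.single_le_sum (f := fun j => (|f s₀ p.2 j| : ℝ))
            (fun j _ => by positivity) (Finset.mem_univ _)
        _ ≤ hnorm s₀ :=
          Finset.single_le_sum (f := fun i => ∑ j : Fin d, (|f s₀ i j| : ℝ))
            (fun i _ => by positivity) (Finset.mem_univ _)
    calc (0:ℝ) < hnorm s₀ := h1
      _ ≤ ∑ s ∈ T, hnorm s := Finset.single_le_sum (fun s _ => hnorm0 s) hmem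
  have hε0 : 0 < ε := by
    rw [hεdef]
    positivity
  -- the real matrix and the approximate solutions
  set Aℝ : Matrix ({a // a ∈ F} × Fin d) ({a // a ∈ F} × Fin d) ℝ :=
    A.map ((Int.castRingHom ℝ) : ℤ → ℝ) with hARdef
  have hdetAR : Aℝ.det = (A.det : ℝ) := by
    rw [hARdef, show A.map ((Int.castRingHom ℝ) : ℤ → ℝ) = (Int.castRingHom ℝ).mapMatrix A from rfl,
      ← RingHom.map_det]
    rfl
  have hdetARne : IsUnit Aℝ.det := by
    rw [hdetAR, isUnit_iff_ne_zero]
    exact_mod_cast hpoz.ne'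
  set z : (({a // a ∈ F} × Fin d) → ℤ) → (({a // a ∈ F} × Fin d) → ℝ) :=
    fun y => Aℝ⁻¹.mulVec (fun p => (y p : ℝ)) with hzdef
  have hz : ∀ y, Aℝ.mulVec (z y) = fun p => ((y p : ℤ) : ℝ) := by
    intro y
    rw [hzdef, Matrix.mulVec_mulVec, Matrix.mul_nonsing_inv _ hdetARne, Matrix.one_mulVec]
  set φ : (({a // a ∈ F} × Fin d) → ℤ) → (Γ → Fin d → AddCircle (1:ℝ)) :=
    fun y t j => if h : t ∈ F then ((z y (⟨t, h⟩, j) : ℝ) : AddCircle (1:ℝ)) else 0 with hφdef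
  have hK1 : ∀ y, φ y ∈ XrowsF f F := by
    intro y
    simp only [XrowsF, Set.mem_setOf_eq]
    intro i t ht
    set π : ℝ →+ AddCircle (1:ℝ) := QuotientAddGroup.mk' _ with hπdef
    have hcoe : ∀ x : ℝ, ((x : ℝ) : AddCircle (1:ℝ)) = π x := fun x => rfl
    set r : Γ → ℝ := fun s => ∑ j : Fin d,
        (f s i j : ℝ) * (if h : s⁻¹ * t ∈ F then z y (⟨s⁻¹ * t, h⟩, j) else 0) with hrdef
    have hterm : ∀ s : Γ, (∑ j : Fin d, f s i j • φ y (s⁻¹ * t) j) = π (r s) := by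
      intro s
      rw [hrdef, map_sum]
      refine Finset.sum_congr rfl fun j _ => ?_
      by_cases h : s⁻¹ * t ∈ F
      · rw [hφdef]
        simp only [dif_pos h]
        rw [← zsmul_eq_mul, map_zsmul, hcoe]
      · rw [hφdef]
        simp only [dif_neg h]
        simp
    have hsupp : (Function.support fun s => ∑ j : Fin d, f s i j • φ y (s⁻¹ * t) j) ⊆ ↑T := by
      intro s hs
      simp only [Function.mem_support] at hs
      simp only [hTdef, Set.Finite.coe_toFinset, Function.mem_support]
      intro h0
      exact hs (by simp [h0])
    rw [finsum_eq_sum_of_support_subset _ hsupp]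
    have hsum : ∑ s ∈ T, (∑ j : Fin d, f s i j • φ y (s⁻¹ * t) j) = π (∑ s ∈ T, r s) := by
      rw [map_sum]
      exact Finset.sum_congr rfl fun s _ => hterm s
    rw [hsum]
    set E : Finset Γ := T ∪ F.image (fun u => t * u⁻¹) with hEdef
    have hrz : ∀ s, s ∉ T → r s = 0 := by
      intro s hs
      have hf : f s = 0 := by simpa [hTdef, Function.mem_support] using hs
      simp [hrdef, hf]
    have h1 : ∑ s ∈ T, r s = ∑ s ∈ E, r s :=
      Finset.sum_subset Finset.subset_union_left fun s _ hs => hrz s hs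
    have h2 : ∑ s ∈ F.image (fun u => t * u⁻¹), r s = ∑ s ∈ E, r s := by
      refine Finset.sum_subset Finset.subset_union_right fun s _ hs => ?_
      have hcond : s⁻¹ * t ∉ F := by
        intro hc
        apply hs
        refine Finset.mem_image.mpr ⟨s⁻¹ * t, hc, ?_⟩
        group
      simp [hrdef, hcond]
    have h3 : ∑ s ∈ F.image (fun u => t * u⁻¹), r s = ∑ u ∈ F, r (t * u⁻¹) :=
      Finset.sum_image (fun a _ b _ hab => by simpa using hab)
    have h4 : ∀ u ∈ F, r (t * u⁻¹)
        = ∑ j : Fin d, (f (t * u⁻¹) i j : ℝ) * (if h : u ∈ F then z y (⟨u, h⟩, j) else 0) := by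
      intro u hu
      have hgrp : (t * u⁻¹)⁻¹ * t = u := by group
      rw [hrdef]
      simp only [hgrp]
    have h5 : ∑ u ∈ F, (∑ j : Fin d, (f (t * u⁻¹) i j : ℝ) *
          (if h : u ∈ F then z y (⟨u, h⟩, j) else 0))
        = ∑ p : {a // a ∈ F} × Fin d, Aℝ (⟨t, ht⟩, i) p * z y p := by
      rw [Fintype.sum_prod_type, Finset.univ_eq_attach,
        ← Finset.sum_attach F (fun u => ∑ j : Fin d, (f (t * u⁻¹) i j : ℝ) *
          (if h : u ∈ F then z y (⟨u, h⟩, j) else 0))]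
      refine Finset.sum_congr rfl fun u _ => ?_
      refine Finset.sum_congr rfl fun j _ => ?_
      rw [dif_pos u.2]
      congr 1
    have h6 : ∑ p : {a // a ∈ F} × Fin d, Aℝ (⟨t, ht⟩, i) p * z y p
        = ((y (⟨t, ht⟩, i) : ℤ) : ℝ) := by
      have hh := congrFun (hz y) (⟨t, ht⟩, i)
      rw [← hh]
      simp [Matrix.mulVec, dotProduct]
    rw [h1, ← h2, h3, Finset.sum_congr rfl h4, h5, h6, ← hcoe]
    exact (AddCircle.coe_eq_zero_iff _).mpr ⟨y (⟨t, ht⟩, i), by simp⟩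
  have hrow : ∀ (t : Γ) (ht : t ∈ F) (i : Fin d),
      ∑ q : {a // a ∈ F} × Fin d, |Aℝ (⟨t, ht⟩, i) q| ≤ L := by
    intro t ht i
    have e1 : ∑ q : {a // a ∈ F} × Fin d, |Aℝ (⟨t, ht⟩, i) q|
        = ∑ u ∈ F, ∑ j : Fin d, |((f (t * u⁻¹) i j : ℤ) : ℝ)| := by
      rw [Fintype.sum_prod_type, Finset.univ_eq_attach,
        ← Finset.sum_attach F (fun u => ∑ j : Fin d, |((f (t * u⁻¹) i j : ℤ) : ℝ)|)]
      rfl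
    rw [e1]
    have e2 : ∀ u ∈ F, ∑ j : Fin d, |((f (t * u⁻¹) i j : ℤ) : ℝ)| ≤ hnorm (t * u⁻¹) := by
      intro u _
      have e4 : hnorm (t * u⁻¹) = ∑ i' : Fin d, ∑ j : Fin d, |((f (t * u⁻¹) i' j : ℤ) : ℝ)| := by
        simp [hhdef, Int.cast_abs]
      rw [e4]
      exact Finset.single_le_sum
        (f := fun i' => ∑ j : Fin d, |((f (t * u⁻¹) i' j : ℤ) : ℝ)|)
        (fun i' _ => by positivity) (Finset.mem_univ i)
    calc ∑ u ∈ F, ∑ j : Fin d, |((f (t * u⁻¹) i j : ℤ) : ℝ)|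
        ≤ ∑ u ∈ F, hnorm (t * u⁻¹) := Finset.sum_le_sum e2
      _ = ∑ s ∈ F.image (fun u => t * u⁻¹), hnorm s :=
          (Finset.sum_image (fun a _ b _ hab => by simpa using hab)).symm
      _ ≤ ∑ s ∈ T ∪ F.image (fun u => t * u⁻¹), hnorm s :=
          Finset.sum_le_sum_of_subset_of_nonneg Finset.subset_union_right
            (fun s _ _ => hnorm0 s)
      _ = ∑ s ∈ T, hnorm s :=
          (Finset.sum_subset Finset.subset_union_left (fun s _ hs => hnormz s hs)).symm
      _ = L := hLs.symm
  have hK2 : ∀ y y', (∀ s ∈ F, ∀ j : Fin d, dist (φ y s j) (φ y' s j) ≤ ε) →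
      ∃ m, A.mulVec m = y - y' := by
    intro y y' hcl
    set m : ({a // a ∈ F} × Fin d) → ℤ := fun p => round (z y p - z y' p) with hmdef
    set w : ({a // a ∈ F} × Fin d) → ℝ := fun p => z y p - z y' p - (m p : ℝ) with hwdef
    have hw : ∀ p, |w p| ≤ ε := by
      rintro ⟨u, j⟩
      have hd1 : dist (φ y u.1 j) (φ y' u.1 j) ≤ ε := hcl u.1 u.2 j
      have heq : φ y u.1 j = ((z y (u, j) : ℝ) : AddCircle (1:ℝ)) := by
        rw [hφdef]
        exact dif_pos u.2
      have heq' : φ y' u.1 j = ((z y' (u, j) : ℝ) : AddCircle (1:ℝ)) := by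
        rw [hφdef]
        exact dif_pos u.2
      rw [heq, heq'] at hd1
      have hsub : ((z y (u, j) : ℝ) : AddCircle (1:ℝ)) - ((z y' (u, j) : ℝ) : AddCircle (1:ℝ))
          = (((z y (u, j) - z y' (u, j) : ℝ)) : AddCircle (1:ℝ)) := by
        exact (AddCircle.coe_sub (1:ℝ) _ _).symm
      rw [dist_eq_norm, hsub, AddCircle.norm_eq] at hd1
      simpa [hwdef, hmdef] using hd1
    set c : ({a // a ∈ F} × Fin d) → ℤ := fun p => y p - y' p - A.mulVec m p with hcdef
    have hAwc : ∀ p, Aℝ.mulVec w p = ((c p : ℤ) : ℝ) := by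
      intro p
      have hsplit : w = (fun q => z y q) - (fun q => z y' q) - (fun q => ((m q : ℤ) : ℝ)) := rfl
      have hcast : Aℝ.mulVec (fun q => ((m q : ℤ) : ℝ)) p = ((A.mulVec m p : ℤ) : ℝ) := by
        rw [hARdef]
        exact (RingHom.map_mulVec (Int.castRingHom ℝ) A m p).symm
      rw [hsplit, Matrix.mulVec_sub, Matrix.mulVec_sub]
      simp only [Pi.sub_apply]
      rw [hcast, congrFun (hz y) p, congrFun (hz y') p, hcdef]
      push_cast
      ring
    have hcb : ∀ p, c p = 0 := by
      rintro ⟨⟨t, ht⟩, i⟩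
      have hb : |((c (⟨⟨t, ht⟩, i⟩) : ℤ) : ℝ)| ≤ 1 / 2 := by
        rw [← hAwc]
        calc |Aℝ.mulVec w (⟨t, ht⟩, i)|
            ≤ ∑ q : {a // a ∈ F} × Fin d, |Aℝ (⟨t, ht⟩, i) q * w q| :=
              Finset.abs_sum_le_sum_abs _ _
          _ ≤ ∑ q : {a // a ∈ F} × Fin d, |Aℝ (⟨t, ht⟩, i) q| * ε :=
              Finset.sum_le_sum fun q _ => by
                rw [abs_mul]
                exact mul_le_mul_of_nonneg_left (hw q) (abs_nonneg _)
          _ = (∑ q : {a // a ∈ F} × Fin d, |Aℝ (⟨t, ht⟩, i) q|) * ε := by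
              rw [Finset.sum_mul]
          _ ≤ L * ε := mul_le_mul_of_nonneg_right (hrow t ht i) hε0.le
          _ = 1 / 2 := by
              rw [hεdef]
              field_simp
      have hlt : |c (⟨⟨t, ht⟩, i⟩)| < 1 := by
        by_contra hge
        push_neg at hge
        have h1 : (1 : ℝ) ≤ |((c (⟨⟨t, ht⟩, i⟩) : ℤ) : ℝ)| := by
          rw [← Int.cast_abs]
          exact_mod_cast hge
        linarith
      exact Int.abs_lt_one_iff.mp hlt
    refine ⟨m, ?_⟩
    funext p
    have h := hcb p
    simp only [hcdef] at h
    simp only [Pi.sub_apply]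
    omega
  -- the quotient lattice
  set H : AddSubgroup (({a // a ∈ F} × Fin d) → ℤ) :=
    (LinearMap.range A.mulVecLin).toAddSubgroup with hHdef
  have hidx : H.index = A.det.natAbs := natAbs_det_eq_index A hpoz.ne'
  haveI hfinQ : Finite ((({a // a ∈ F} × Fin d) → ℤ) ⧸ H) := by
    apply Nat.finite_of_card_ne_zero
    rw [← AddSubgroup.index_eq_card, hidx]
    simpa using hpoz.ne'
  haveI := Fintype.ofFinite ((({a // a ∈ F} × Fin d) → ℤ) ⧸ H)
  set ψ : ((({a // a ∈ F} × Fin d) → ℤ) ⧸ H) → (Γ → Fin d → AddCircle (1:ℝ)) :=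
    fun q => φ q.out with hψdef
  have hker : ∀ q q', (∀ s ∈ F, ∀ j : Fin d, dist (ψ q s j) (ψ q' s j) ≤ ε) → q = q' := by
    intro q q' hcl
    obtain ⟨m, hm⟩ := hK2 q.out q'.out hcl
    have hmem : q.out - q'.out ∈ H := by
      refine (Submodule.mem_toAddSubgroup _).mpr (LinearMap.mem_range.mpr ?_)
      exact ⟨m, by simpa [Matrix.mulVecLin_apply] using hm⟩
    have h1 : (QuotientAddGroup.mk q.out : _ ⧸ H) = q := QuotientAddGroup.out_eq' q
    have h1' : (QuotientAddGroup.mk q'.out : _ ⧸ H) = q' := QuotientAddGroup.out_eq' q'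
    rw [← h1, ← h1']
    exact (QuotientAddGroup.eq_iff_sub_mem).mpr hmem
  have hψsep : ∀ q q', q ≠ q' → thetaInfSep ε F (ψ q) (ψ q') := by
    intro q q' hne
    by_contra hns
    apply hne
    apply hker
    intro s hs j
    by_contra hlt
    push_neg at hlt
    exact hns ⟨s, hs, j, hlt⟩
  have hψinj : Function.Injective ψ := by
    intro q q' h
    apply hker
    intro s hs j
    rw [h]
    simpa using hε0.le
  set W : Finset (Γ → Fin d → AddCircle (1:ℝ)) := Finset.image ψ Finset.univ with hWdef
  have hWcard : W.card = A.det.natAbs := by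
    rw [hWdef, Finset.card_image_of_injective _ hψinj, Finset.card_univ,
      ← Nat.card_eq_fintype_card, ← AddSubgroup.index_eq_card, hidx]
  have hWZ : ↑W ⊆ XrowsF f F := by
    intro x hx
    simp only [hWdef, Finset.coe_image, Set.mem_image] at hx
    obtain ⟨q, _, rfl⟩ := hx
    exact hK1 _
  have hWsep : ∀ x ∈ W, ∀ y ∈ W, x ≠ y → thetaInfSep ε F x y := by
    intro x hx y hy hne
    simp only [hWdef, Finset.mem_image] at hx hy
    obtain ⟨q, _, rfl⟩ := hx
    obtain ⟨q', _, rfl⟩ := hy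
    exact hψsep q q' (fun h => hne (by rw [h]))
  set S : Set ℕ := {n : ℕ | ∃ W : Finset (Γ → Fin d → AddCircle (1:ℝ)),
      ↑W ⊆ XrowsF f F ∧ (∀ x ∈ W, ∀ y ∈ W, x ≠ y → thetaInfSep ε F x y) ∧ W.card = n}
    with hSdef
  have hmemS : A.det.natAbs ∈ S := ⟨W, hWZ, hWsep, hWcard⟩
  have hbdd : BddAbove S := by
    haveI : Fact ((0:ℝ) < 1) := ⟨one_pos⟩
    have hTB : TotallyBounded (Set.univ : Set (({a // a ∈ F} × Fin d) → AddCircle (1:ℝ))) :=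
      isCompact_univ.totallyBounded
    obtain ⟨t, htf, htc⟩ := Metric.totallyBounded_iff.mp hTB (ε/2) (by positivity)
    have hch : ∀ v : ({a // a ∈ F} × Fin d) → AddCircle (1:ℝ),
        ∃ yc, yc ∈ t ∧ v ∈ Metric.ball yc (ε/2) := by
      intro v
      have := htc (Set.mem_univ v)
      simpa using this
    choose cfun hc1 hc2 using hch
    refine ⟨htf.toFinset.card, ?_⟩
    rintro n ⟨V, hVZ, hVsep, rfl⟩
    set ρ : (Γ → Fin d → AddCircle (1:ℝ)) → (({a // a ∈ F} × Fin d) → AddCircle (1:ℝ)) :=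
      fun x p => x p.1.1 p.2 with hρdef
    have hρsep : ∀ x ∈ V, ∀ y ∈ V, x ≠ y → ε < dist (ρ x) (ρ y) := by
      intro x hx y hy hne
      obtain ⟨s, hs, j, hj⟩ := hVsep x hx y hy hne
      calc ε < dist (x s j) (y s j) := hj
        _ = dist (ρ x (⟨s, hs⟩, j)) (ρ y (⟨s, hs⟩, j)) := rfl
        _ ≤ dist (ρ x) (ρ y) := dist_le_pi_dist _ _ _
    have hρinj : Set.InjOn ρ ↑V := by
      intro x hx y hy hxy
      by_contra hne
      have h := hρsep x hx y hy hne
      rw [hxy] at h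
      simp at h
      linarith
    rw [← Finset.card_image_of_injOn hρinj]
    refine Finset.card_le_card_of_injOn cfun (fun v _ => htf.mem_toFinset.mpr (hc1 v)) ?_
    intro v hv v' hv' hcc
    obtain ⟨x, hx, rfl⟩ := Finset.mem_image.mp (by exact_mod_cast hv)
    obtain ⟨x', hx', rfl⟩ := Finset.mem_image.mp (by exact_mod_cast hv')
    by_contra hne
    have hxne : x ≠ x' := fun h => hne (by rw [h])
    have h1 := hρsep x hx x' hx' hxne
    have h2 : dist (ρ x) (cfun (ρ x)) < ε / 2 := Metric.mem_ball.mp (hc2 (ρ x))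
    have h3 : dist (ρ x') (cfun (ρ x')) < ε / 2 := Metric.mem_ball.mp (hc2 (ρ x'))
    have h4 : dist (ρ x) (ρ x') ≤ dist (ρ x) (cfun (ρ x)) + dist (cfun (ρ x')) (ρ x') := by
      rw [hcc]
      exact dist_triangle _ _ _
    rw [dist_comm (cfun (ρ x'))] at h4
    linarith
  have hfinal : A.det.natAbs ≤ sepCount (XrowsF f F) (thetaInfSep ε F) :=
    le_csSup hbdd hmemS
  have hcast : (A.det : ℝ) = ((A.det.natAbs : ℕ) : ℝ) := by
    rw [Nat.cast_natAbs, abs_of_pos]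
    exact_mod_cast hpoz
  rw [hcast]
  exact_mod_cast hfinal
end

section
/- Let Γ be a countable discrete group, d, d' ≥ 1, and f ∈ M_{d'×d}(ℤΓ). Let M_J ⊆ (ℤΓ)^{1×d'} be the left ℤΓ-submodule generated by the rows of f* together with all g ∈ (ℤΓ)^{1×d'} satisfying gf = 0. Then the sequence of left ℤΓ-modules 0 → (ℤΓ)^{1×d'}/M_J → (ℤΓ)^{1×d}/(ℤΓ)^{1×d}(f*f) → (ℤΓ)^{1×d}/(ℤΓ)^{1×d'}f → 0 is exact, where the first map is induced by right multiplication by f and the second map is the natural quotient map (note (ℤΓ)^{1×d}(f*f) ⊆ (ℤΓ)^{1×d'}f). -/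
/-- The canonical involution on the integral group ring `ℤΓ`:
`(Σ_s a_s s)* = Σ_s a_s s⁻¹`. -/
noncomputable def grpRingStar {Γ : Type*} [Group Γ] (a : MonoidAlgebra ℤ Γ) :
    MonoidAlgebra ℤ Γ :=
  MonoidAlgebra.ofCoeff (Finsupp.mapDomain (fun s => s⁻¹) a.coeff)

/-- The adjoint `f* ∈ M_{d×d'}(ℤΓ)` of a matrix `f ∈ M_{d'×d}(ℤΓ)`,
defined by `(f*)_s = (f_{s⁻¹})ᵀ`. -/
noncomputable def matStar {Γ : Type*} [Group Γ] {d' d : ℕ}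
    (f : Matrix (Fin d') (Fin d) (MonoidAlgebra ℤ Γ)) :
    Matrix (Fin d) (Fin d') (MonoidAlgebra ℤ Γ) :=
  Matrix.of fun i j => grpRingStar (f j i)

section aux
variable {R : Type*} [Ring R] {m n : ℕ}

lemma vecMul_eq_sum' (z : Fin m → R) (A : Matrix (Fin m) (Fin n) R) :
    Matrix.vecMul z A = ∑ i, z i • A i := by
  funext j
  simp [Matrix.vecMul, dotProduct, Finset.sum_apply]

lemma smul_vecMul' (c : R) (z : Fin m → R) (A : Matrix (Fin m) (Fin n) R) :
    Matrix.vecMul (c • z) A = c • Matrix.vecMul z A := by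
  funext j
  simp [Matrix.vecMul, dotProduct, Finset.mul_sum, mul_assoc]

lemma row_vecMul' {p : ℕ} (A : Matrix (Fin m) (Fin n) R) (B : Matrix (Fin n) (Fin p) R)
    (i : Fin m) : Matrix.vecMul (A i) B = (A * B) i := by
  funext j
  simp [Matrix.vecMul, dotProduct, Matrix.mul_apply]
end aux

/-- **Lemma 4.12 (an exact sequence of left `ℤΓ`-modules).**
For `f ∈ M_{d'×d}(ℤΓ)`, let `M_J ⊆ (ℤΓ)^{1×d'}` be the left submodule generated by the rows
of `f*` together with all `g` with `g f = 0`.  Then the sequence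
`0 → (ℤΓ)^{1×d'}/M_J → (ℤΓ)^{1×d}/(ℤΓ)^{1×d}(f*f) → (ℤΓ)^{1×d}/(ℤΓ)^{1×d'}f → 0`
is exact, where the first map is induced by right multiplication by `f` and the second map
is the natural quotient map.  Exactness is expressed elementwise:
(1) the first map is well defined, (2) it is injective, and (3) the image of the first map
coincides with the kernel of the second. -/
theorem exact_sequence_of_fstar_f {Γ : Type*} [Group Γ] [Countable Γ]
    (d' d : ℕ) (hd' : 1 ≤ d') (hd : 1 ≤ d)
    (f : Matrix (Fin d') (Fin d) (MonoidAlgebra ℤ Γ)) :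
    (∀ g ∈ Submodule.span (MonoidAlgebra ℤ Γ)
        ((Set.range fun i : Fin d => fun j : Fin d' => matStar f i j) ∪
          {g : Fin d' → MonoidAlgebra ℤ Γ | Matrix.vecMul g f = 0}),
      ∃ z : Fin d → MonoidAlgebra ℤ Γ,
        Matrix.vecMul g f = Matrix.vecMul z (matStar f * f)) ∧
    (∀ g : Fin d' → MonoidAlgebra ℤ Γ,
      (∃ z : Fin d → MonoidAlgebra ℤ Γ,
        Matrix.vecMul g f = Matrix.vecMul z (matStar f * f)) →
      g ∈ Submodule.span (MonoidAlgebra ℤ Γ)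
        ((Set.range fun i : Fin d => fun j : Fin d' => matStar f i j) ∪
          {g : Fin d' → MonoidAlgebra ℤ Γ | Matrix.vecMul g f = 0})) ∧
    (∀ y : Fin d → MonoidAlgebra ℤ Γ,
      (∃ w : Fin d' → MonoidAlgebra ℤ Γ, y = Matrix.vecMul w f) ↔
      (∃ (g : Fin d' → MonoidAlgebra ℤ Γ) (z : Fin d → MonoidAlgebra ℤ Γ),
        y - Matrix.vecMul g f = Matrix.vecMul z (matStar f * f))) := by
  refine ⟨?_, ?_, ?_⟩
  · intro g hg
    induction hg using Submodule.span_induction with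
    | mem x hx =>
      rcases hx with ⟨i, rfl⟩ | hx
      · refine ⟨Pi.single i 1, ?_⟩
        show Matrix.vecMul (matStar f i) f = _
        rw [row_vecMul', vecMul_eq_sum']
        simp [Pi.single_apply, Finset.sum_ite_eq']
        exact ((Fintype.sum_eq_single i (fun x hx => if_neg hx)).trans (if_pos rfl)).symm
      · exact ⟨0, by rw [hx]; simp [Matrix.zero_vecMul]⟩
    | zero => exact ⟨0, by simp [Matrix.zero_vecMul]⟩
    | add x y _ _ hx hy =>
      obtain ⟨zx, hzx⟩ := hx; obtain ⟨zy, hzy⟩ := hy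
      exact ⟨zx + zy, by rw [Matrix.add_vecMul, Matrix.add_vecMul, hzx, hzy]⟩
    | smul c x _ hx =>
      obtain ⟨z, hz⟩ := hx
      exact ⟨c • z, by rw [smul_vecMul', smul_vecMul', hz]⟩
  · rintro g ⟨z, hz⟩
    have h1 : Matrix.vecMul z (matStar f) ∈ Submodule.span (MonoidAlgebra ℤ Γ)
        ((Set.range fun i : Fin d => fun j : Fin d' => matStar f i j) ∪
          {g : Fin d' → MonoidAlgebra ℤ Γ | Matrix.vecMul g f = 0}) := by
      rw [vecMul_eq_sum']
      exact Submodule.sum_mem _ fun i _ => Submodule.smul_mem _ _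
        (Submodule.subset_span (Or.inl ⟨i, rfl⟩))
    have h2 : g - Matrix.vecMul z (matStar f) ∈ Submodule.span (MonoidAlgebra ℤ Γ)
        ((Set.range fun i : Fin d => fun j : Fin d' => matStar f i j) ∪
          {g : Fin d' → MonoidAlgebra ℤ Γ | Matrix.vecMul g f = 0}) := by
      refine Submodule.subset_span (Or.inr ?_)
      show Matrix.vecMul _ f = 0
      rw [Matrix.sub_vecMul, Matrix.vecMul_vecMul, hz, sub_self]
    have := Submodule.add_mem _ h2 h1
    simpa using this
  · intro y
    constructor
    · rintro ⟨w, rfl⟩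
      exact ⟨w, 0, by simp [Matrix.zero_vecMul]⟩
    · rintro ⟨g, z, hz⟩
      refine ⟨g + Matrix.vecMul z (matStar f), ?_⟩
      rw [Matrix.add_vecMul, Matrix.vecMul_vecMul, ← hz]
      abel
end

section
/- Let Γ be a countable discrete group, let d₋, d, d₊ ≥ 0, and let f ∈ M_{d×d₋}(ℤΓ) and h ∈ M_{d₊×d}(ℤΓ) be such that {y ∈ (ℤΓ)^{1×d} : yf = 0} = {zh : z ∈ (ℤΓ)^{1×d₊}} (exactness at degree d). Then right multiplication by the matrix h*h + ff* ∈ M_d(ℤΓ) on (ℤΓ)^{1×d} is injective: if y ∈ (ℤΓ)^{1×d} satisfies y(h*h + ff*) = 0, then y = 0. -/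
section Aux

variable {Γ : Type*} [Group Γ]

lemma grpRingStar_apply (a : MonoidAlgebra ℤ Γ) (x : Γ) :
    (grpRingStar a).coeff x = a.coeff x⁻¹ := by
  rw [grpRingStar, MonoidAlgebra.coeff_ofCoeff]
  conv_lhs => rw [show x = (x⁻¹)⁻¹ from (inv_inv x).symm]
  exact Finsupp.mapDomain_apply inv_injective a.coeff x⁻¹

lemma grpRingStar_zero : grpRingStar (0 : MonoidAlgebra ℤ Γ) = 0 :=
  congrArg MonoidAlgebra.ofCoeff Finsupp.mapDomain_zero

lemma grpRingStar_add (a b : MonoidAlgebra ℤ Γ) :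
    grpRingStar (a + b) = grpRingStar a + grpRingStar b :=
  congrArg MonoidAlgebra.ofCoeff Finsupp.mapDomain_add

lemma grpRingStar_sum {ι : Type*} (s : Finset ι) (F : ι → MonoidAlgebra ℤ Γ) :
    grpRingStar (∑ i ∈ s, F i) = ∑ i ∈ s, grpRingStar (F i) := by
  classical
  induction s using Finset.induction_on with
  | empty => simp [grpRingStar_zero]
  | insert _ _ hx ih => simp [Finset.sum_insert hx, grpRingStar_add, ih]

lemma grpRingStar_single (x : Γ) (r : ℤ) :
    grpRingStar (MonoidAlgebra.single x r) = MonoidAlgebra.single x⁻¹ r :=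
  congrArg MonoidAlgebra.ofCoeff Finsupp.mapDomain_single

lemma grpRingStar_grpRingStar (a : MonoidAlgebra ℤ Γ) :
    grpRingStar (grpRingStar a) = a := by
  ext x
  rw [grpRingStar_apply, grpRingStar_apply, inv_inv]

lemma grpRingStar_mul (a b : MonoidAlgebra ℤ Γ) :
    grpRingStar (a * b) = grpRingStar b * grpRingStar a := by
  induction a using MonoidAlgebra.induction_linear with
  | zero => simp [grpRingStar_zero]
  | add p q hp hq =>
      rw [add_mul, grpRingStar_add, hp, hq, grpRingStar_add, mul_add]
  | single x r =>
      induction b using MonoidAlgebra.induction_linear with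
      | zero => simp [grpRingStar_zero]
      | add p q hp hq =>
          rw [mul_add, grpRingStar_add, hp, hq, grpRingStar_add, add_mul]
      | single y s =>
          rw [MonoidAlgebra.single_mul_single, grpRingStar_single,
            grpRingStar_single, grpRingStar_single,
            MonoidAlgebra.single_mul_single, mul_inv_rev, mul_comm s r]

lemma matStar_matStar {d' d : ℕ} (f : Matrix (Fin d') (Fin d) (MonoidAlgebra ℤ Γ)) :
    matStar (matStar f) = f := by
  ext i j
  simp [matStar, grpRingStar_grpRingStar]

/-- Key pairing identity: `⟨u g, y*⟩ = ⟨u, (y g*)*⟩`. -/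
lemma dot_vecMul_star {n m : ℕ} (g : Matrix (Fin n) (Fin m) (MonoidAlgebra ℤ Γ))
    (u : Fin n → MonoidAlgebra ℤ Γ) (y : Fin m → MonoidAlgebra ℤ Γ) :
    dotProduct (Matrix.vecMul u g) (fun i => grpRingStar (y i)) =
      dotProduct u (fun k => grpRingStar (Matrix.vecMul y (matStar g) k)) := by
  simp only [dotProduct, Matrix.vecMul, matStar, Matrix.of_apply,
    grpRingStar_sum, grpRingStar_mul, grpRingStar_grpRingStar,
    Finset.sum_mul, Finset.mul_sum]
  rw [Finset.sum_comm]
  simp only [mul_assoc]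

set_option linter.unusedSectionVars false in
lemma finsuppSum_apply {ι : Type*} (s : Finset ι) (F : ι → MonoidAlgebra ℤ Γ) (x : Γ) :
    (∑ i ∈ s, F i).coeff x = ∑ i ∈ s, (F i).coeff x := by
  rw [MonoidAlgebra.coeff_sum, Finsupp.finset_sum_apply]

lemma grpRing_add_apply (a b : MonoidAlgebra ℤ Γ) (x : Γ) :
    (a + b).coeff x = a.coeff x + b.coeff x :=
  Finsupp.add_apply a.coeff b.coeff x

/-- Positivity: the coefficient at `1` of `a a*` is the sum of the squares of
the coefficients of `a`. -/
lemma self_pair_eq (a : MonoidAlgebra ℤ Γ) :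
    (a * grpRingStar a).coeff (1 : Γ) = ∑ s ∈ a.coeff.support, (a.coeff s) ^ 2 := by
  rw [MonoidAlgebra.coeff_mul_apply_left]
  rw [Finsupp.sum]
  refine Finset.sum_congr rfl fun s _ => ?_
  rw [grpRingStar_apply, mul_one, inv_inv, sq]

lemma self_pair_nonneg (a : MonoidAlgebra ℤ Γ) :
    0 ≤ (a * grpRingStar a).coeff (1 : Γ) := by
  rw [self_pair_eq]
  exact Finset.sum_nonneg fun s _ => sq_nonneg _

lemma eq_zero_of_self_pair_eq_zero {a : MonoidAlgebra ℤ Γ}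
    (h : (a * grpRingStar a).coeff (1 : Γ) = 0) : a = 0 := by
  rw [self_pair_eq] at h
  have := (Finset.sum_eq_zero_iff_of_nonneg (fun s _ => sq_nonneg (a.coeff s))).mp h
  ext s
  by_cases hs : s ∈ a.coeff.support
  · have := this s hs
    have : a.coeff s = 0 := by nlinarith [this]
    simp [this]
  · simpa using Finsupp.notMem_support_iff.mp hs

end Aux

/-- **Injectivity of the combinatorial Laplacian (from Lemma 5.3).**
Let `Γ` be a countable discrete group, `f ∈ M_{d×d₋}(ℤΓ)` and `h ∈ M_{d₊×d}(ℤΓ)` with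
`{y : y f = 0} = {z h : z}` (exactness at degree `d`).  Then right multiplication by
`h*h + f f*` on `(ℤΓ)^{1×d}` is injective. -/
theorem laplacian_injective {Γ : Type*} [Group Γ] [Countable Γ]
    (dminus d dplus : ℕ)
    (f : Matrix (Fin d) (Fin dminus) (MonoidAlgebra ℤ Γ))
    (h : Matrix (Fin dplus) (Fin d) (MonoidAlgebra ℤ Γ))
    (hexact : ∀ y : Fin d → MonoidAlgebra ℤ Γ,
      Matrix.vecMul y f = 0 ↔ ∃ z : Fin dplus → MonoidAlgebra ℤ Γ, y = Matrix.vecMul z h) :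
    ∀ y : Fin d → MonoidAlgebra ℤ Γ,
      Matrix.vecMul y (matStar h * h + f * matStar f) = 0 → y = 0 := by
  intro y hy
  set u : Fin dplus → MonoidAlgebra ℤ Γ := Matrix.vecMul y (matStar h) with hu
  set w : Fin dminus → MonoidAlgebra ℤ Γ := Matrix.vecMul y f with hw
  -- the key algebraic identity
  have key : dotProduct (Matrix.vecMul y (matStar h * h + f * matStar f))
      (fun i => grpRingStar (y i)) =
      dotProduct u (fun k => grpRingStar (u k)) +
      dotProduct w (fun k => grpRingStar (w k)) := by
    rw [Matrix.vecMul_add, add_dotProduct]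
    congr 1
    · rw [← Matrix.vecMul_vecMul, ← hu, dot_vecMul_star]
    · rw [← Matrix.vecMul_vecMul, ← hw]
      rw [dot_vecMul_star (matStar f) w y, matStar_matStar]
  rw [hy] at key
  simp only [zero_dotProduct] at key
  -- take coefficient at 1
  have key1 : (0 : ℤ) = ∑ k, (u k * grpRingStar (u k)).coeff (1 : Γ) +
      ∑ k, (w k * grpRingStar (w k)).coeff (1 : Γ) := by
    have := congrArg (fun a : MonoidAlgebra ℤ Γ => a.coeff (1 : Γ)) key
    simpa [dotProduct, grpRing_add_apply, finsuppSum_apply] using this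
  have hu0 : ∀ k, (u k * grpRingStar (u k)).coeff (1 : Γ) = 0 := by
    intro k
    have h1 : 0 ≤ ∑ k, (u k * grpRingStar (u k)).coeff (1 : Γ) :=
      Finset.sum_nonneg fun k _ => self_pair_nonneg _
    have h2 : 0 ≤ ∑ k, (w k * grpRingStar (w k)).coeff (1 : Γ) :=
      Finset.sum_nonneg fun k _ => self_pair_nonneg _
    have hsum : ∑ k, (u k * grpRingStar (u k)).coeff (1 : Γ) = 0 := by omega
    exact (Finset.sum_eq_zero_iff_of_nonneg
      (fun k _ => self_pair_nonneg (u k))).mp hsum k (Finset.mem_univ k)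
  have hw0 : ∀ k, (w k * grpRingStar (w k)).coeff (1 : Γ) = 0 := by
    intro k
    have h1 : 0 ≤ ∑ k, (u k * grpRingStar (u k)).coeff (1 : Γ) :=
      Finset.sum_nonneg fun k _ => self_pair_nonneg _
    have h2 : 0 ≤ ∑ k, (w k * grpRingStar (w k)).coeff (1 : Γ) :=
      Finset.sum_nonneg fun k _ => self_pair_nonneg _
    have hsum : ∑ k, (w k * grpRingStar (w k)).coeff (1 : Γ) = 0 := by omega
    exact (Finset.sum_eq_zero_iff_of_nonneg
      (fun k _ => self_pair_nonneg (w k))).mp hsum k (Finset.mem_univ k)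
  have huzero : u = 0 := funext fun k => eq_zero_of_self_pair_eq_zero (hu0 k)
  have hwzero : Matrix.vecMul y f = 0 := funext fun k => eq_zero_of_self_pair_eq_zero (hw0 k)
  obtain ⟨z, hz⟩ := (hexact y).mp hwzero
  -- now ⟨y, y⟩ = ⟨z h, y⟩ = ⟨z, (y h*)*⟩ = ⟨z, u*⟩ = 0
  have final : dotProduct y (fun i => grpRingStar (y i)) = 0 := by
    rw [hz, dot_vecMul_star, ← hz, ← hu, huzero]
    simp [dotProduct, grpRingStar_zero]
  have final1 : ∑ i, (y i * grpRingStar (y i)).coeff (1 : Γ) = 0 := by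
    have := congrArg (fun a : MonoidAlgebra ℤ Γ => a.coeff (1 : Γ)) final
    simpa [dotProduct, grpRing_add_apply, finsuppSum_apply] using this
  have : ∀ i, (y i * grpRingStar (y i)).coeff (1 : Γ) = 0 :=
    fun i => (Finset.sum_eq_zero_iff_of_nonneg
      (fun i _ => self_pair_nonneg (y i))).mp final1 i (Finset.mem_univ i)
  exact funext fun i => eq_zero_of_self_pair_eq_zero (this i)
end
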